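/- arXiv:1903.10785 — 13 statements merged into one kernel-verified Lean document; each statement's English description precedes it below -/
import Mathlib

section
/- Let f : (0,∞) → (0,∞) be continuous with f(1) = 1. If f is geometrically convex, i.e. f(√(x·y)) ≤ √(f(x)·f(y)) for all x, y > 0, then f is power monotone increasing: f(t)^r ≤ f(t^r) for all t > 0 and all real r ≥ 1. -/
/-- A positive continuous function on `(0,∞)` with `f 1 = 1` which is geometrically
convex is power monotone increasing. -/
theorem gcv_implies_pmi (f : ℝ → ℝ)
    (hpos : ∀ t : ℝ, 0 < t → 0 < f t)
    (hcont : ContinuousOn f (Set.Ioi (0 : ℝ)))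
    (hone : f 1 = 1)
    (hgcv : ∀ x y : ℝ, 0 < x → 0 < y →
      f (Real.sqrt (x * y)) ≤ Real.sqrt (f x * f y)) :
    ∀ t : ℝ, 0 < t → ∀ r : ℝ, 1 ≤ r → f t ^ r ≤ f (t ^ r) := by
  set g : ℝ → ℝ := fun u => Real.log (f (Real.exp u)) with hgdef
  have hfe : Continuous fun u => f (Real.exp u) :=
    hcont.comp_continuous Real.continuous_exp fun u => Set.mem_Ioi.mpr (Real.exp_pos u)
  have hgcont : Continuous g :=
    hfe.log fun u => ne_of_gt (hpos _ (Real.exp_pos u))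
  have hg0 : g 0 = 0 := by simp [hgdef, Real.exp_zero, hone]
  -- midpoint convexity of g
  have hmid : ∀ u v : ℝ, g ((u + v) / 2) ≤ (g u + g v) / 2 := by
    intro u v
    have hx := Real.exp_pos u
    have hy := Real.exp_pos v
    have hsq : Real.sqrt (Real.exp u * Real.exp v) = Real.exp ((u + v) / 2) := by
      have h2 : Real.exp u * Real.exp v = (Real.exp ((u + v) / 2)) ^ 2 := by
        rw [sq, ← Real.exp_add, ← Real.exp_add]; ring_nf
      rw [h2, Real.sqrt_sq (Real.exp_pos _).le]
    have h := hgcv (Real.exp u) (Real.exp v) hx hy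
    rw [hsq] at h
    have hfx := hpos _ hx
    have hfy := hpos _ hy
    have hlog := Real.log_le_log (hpos _ (Real.exp_pos ((u + v) / 2))) h
    rw [Real.log_sqrt (by positivity), Real.log_mul (ne_of_gt hfx) (ne_of_gt hfy)] at hlog
    simpa [hgdef] using hlog
  -- dyadic inequality
  have hdyadic : ∀ v : ℝ, ∀ n k : ℕ, k ≤ 2 ^ n →
      g (((k : ℝ) / 2 ^ n) * v) ≤ ((k : ℝ) / 2 ^ n) * g v := by
    intro v n
    induction n with
    | zero =>
      intro k hk
      interval_cases k
      · simpa using le_of_eq hg0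
      · simp
    | succ n ih =>
      intro k hk
      set i : ℕ := k / 2 with hi
      set j : ℕ := k - k / 2 with hj
      have hij : i + j = k := Nat.add_sub_cancel' (Nat.div_le_self k 2)
      have hile : i ≤ 2 ^ n := by
        have : k / 2 ≤ 2 ^ (n + 1) / 2 := Nat.div_le_div_right hk
        simpa [pow_succ, Nat.mul_div_cancel] using this
      have hjle : j ≤ 2 ^ n := by
        have h1 : k - k / 2 ≤ (k + 1) / 2 := by omega
        have h2 : (k + 1) / 2 ≤ (2 ^ (n + 1) + 1) / 2 := Nat.div_le_div_right (by omega)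
        have h3 : (2 ^ (n + 1) + 1) / 2 = 2 ^ n := by
          rw [pow_succ]; omega
        omega
      have key : ((k : ℝ) / 2 ^ (n + 1)) * v =
          (((i : ℝ) / 2 ^ n) * v + ((j : ℝ) / 2 ^ n) * v) / 2 := by
        have : (i : ℝ) + (j : ℝ) = (k : ℝ) := by exact_mod_cast congrArg Nat.cast hij
        rw [← this, pow_succ]
        field_simp
      rw [key]
      calc g ((((i : ℝ) / 2 ^ n) * v + ((j : ℝ) / 2 ^ n) * v) / 2)
          ≤ (g (((i : ℝ) / 2 ^ n) * v) + g (((j : ℝ) / 2 ^ n) * v)) / 2 := hmid _ _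
        _ ≤ (((i : ℝ) / 2 ^ n) * g v + ((j : ℝ) / 2 ^ n) * g v) / 2 := by
            have := ih i hile
            have := ih j hjle
            linarith
        _ = ((k : ℝ) / 2 ^ (n + 1)) * g v := by
            have : (i : ℝ) + (j : ℝ) = (k : ℝ) := by exact_mod_cast congrArg Nat.cast hij
            rw [← this, pow_succ]
            field_simp
  -- scaling inequality for all s ∈ [0,1]
  have hscale : ∀ v : ℝ, ∀ s : ℝ, 0 ≤ s → s ≤ 1 → g (s * v) ≤ s * g v := by
    intro v s hs0 hs1
    set a : ℕ → ℝ := fun n => (⌊s * 2 ^ n⌋₊ : ℝ) / 2 ^ n with ha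
    have hklen : ∀ n : ℕ, ⌊s * 2 ^ n⌋₊ ≤ 2 ^ n := by
      intro n
      have : s * 2 ^ n ≤ (2 ^ n : ℝ) := by nlinarith [pow_pos (by norm_num : (0:ℝ) < 2) n]
      calc ⌊s * 2 ^ n⌋₊ ≤ ⌊(2 ^ n : ℝ)⌋₊ := Nat.floor_le_floor this
        _ = 2 ^ n := by rw [show ((2:ℝ) ^ n) = ((2 ^ n : ℕ) : ℝ) by push_cast; ring, Nat.floor_natCast]
    have hub : ∀ n, a n ≤ s := by
      intro n
      rw [ha]
      have h2 : (0:ℝ) < 2 ^ n := by positivity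
      rw [div_le_iff₀ h2]
      exact Nat.floor_le (by positivity)
    have hlb : ∀ n, s - 1 / 2 ^ n ≤ a n := by
      intro n
      have h2 : (0:ℝ) < 2 ^ n := by positivity
      have := Nat.lt_floor_add_one (s * 2 ^ n)
      rw [ha]
      rw [sub_le_iff_le_add, ← add_div, le_div_iff₀ h2]
      nlinarith
    have hatend : Filter.Tendsto a Filter.atTop (nhds s) := by
      have hlow : Filter.Tendsto (fun n : ℕ => s - 1 / 2 ^ n) Filter.atTop (nhds s) := by
        have : Filter.Tendsto (fun n : ℕ => (1:ℝ) / 2 ^ n) Filter.atTop (nhds 0) := by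
          simpa [one_div, inv_pow] using
            tendsto_pow_atTop_nhds_zero_of_lt_one (by norm_num : (0:ℝ) ≤ 2⁻¹) (by norm_num)
        simpa using (tendsto_const_nhds.sub this)
      exact tendsto_of_tendsto_of_tendsto_of_le_of_le hlow tendsto_const_nhds hlb hub
    have hineq : ∀ n, g (a n * v) ≤ a n * g v := fun n => hdyadic v n _ (hklen n)
    have h1 : Filter.Tendsto (fun n => g (a n * v)) Filter.atTop (nhds (g (s * v))) :=
      (hgcont.tendsto (s * v)).comp (hatend.mul_const v)
    have h2 : Filter.Tendsto (fun n => a n * g v) Filter.atTop (nhds (s * g v)) :=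
      hatend.mul_const (g v)
    exact le_of_tendsto_of_tendsto' h1 h2 hineq
  -- conclude
  intro t ht r hr
  have hr0 : 0 < r := lt_of_lt_of_le one_pos hr
  set u : ℝ := Real.log t with hu
  have hexpu : Real.exp u = t := Real.exp_log ht
  have hkey : g ((1 / r) * (r * u)) ≤ (1 / r) * g (r * u) :=
    hscale (r * u) (1 / r) (by positivity) (by rw [div_le_one hr0]; linarith)
  have hgu : (1 / r) * (r * u) = u := by field_simp
  rw [hgu] at hkey
  have hmul : r * g u ≤ g (r * u) := by
    have h := mul_le_mul_of_nonneg_left hkey hr0.le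
    rwa [show r * (1 / r * g (r * u)) = g (r * u) by field_simp] at h
  have hft : f t = Real.exp (g u) := by
    rw [hgdef]
    simp only [hexpu]
    rw [Real.exp_log (hpos t ht)]
  have htr : t ^ r = Real.exp (r * u) := by
    rw [Real.rpow_def_of_pos ht, mul_comm]
  have hftr : f (t ^ r) = Real.exp (g (r * u)) := by
    rw [hgdef]
    simp only [← htr]
    rw [Real.exp_log (hpos _ (Real.rpow_pos_of_pos ht r))]
  rw [hft, hftr, ← Real.exp_mul]
  rw [mul_comm]
  exact Real.exp_le_exp.mpr hmul
end

section
/- Let f : (0,∞) → (0,∞) be continuous with f(1) = 1. If f is geometrically concave, i.e. f(√(x·y)) ≥ √(f(x)·f(y)) for all x, y > 0, then f is power monotone decreasing: f(t)^r ≥ f(t^r) for all t > 0 and all real r ≥ 1. -/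
private lemma sqrt_exp_mul_exp (x y : ℝ) :
    Real.sqrt (Real.exp x * Real.exp y) = Real.exp ((x + y) / 2) := by
  rw [← Real.exp_add,
    show Real.exp (x + y) = Real.exp ((x + y) / 2) * Real.exp ((x + y) / 2) by
      rw [← Real.exp_add]; ring_nf,
    Real.sqrt_mul_self (Real.exp_pos _).le]

/-- A positive continuous function on `(0,∞)` with `f 1 = 1` which is geometrically
concave is power monotone decreasing. -/
theorem gcc_implies_pmd (f : ℝ → ℝ)
    (hpos : ∀ t : ℝ, 0 < t → 0 < f t)
    (hcont : ContinuousOn f (Set.Ioi (0 : ℝ)))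
    (hone : f 1 = 1)
    (hgcc : ∀ x y : ℝ, 0 < x → 0 < y →
      Real.sqrt (f x * f y) ≤ f (Real.sqrt (x * y))) :
    ∀ t : ℝ, 0 < t → ∀ r : ℝ, 1 ≤ r → f (t ^ r) ≤ f t ^ r := by
  -- the logarithmic transform
  set g : ℝ → ℝ := fun u => Real.log (f (Real.exp u)) with hg
  have hfe : ∀ u : ℝ, 0 < f (Real.exp u) := fun u => hpos _ (Real.exp_pos u)
  -- g is continuous
  have hfec : Continuous fun u => f (Real.exp u) :=
    hcont.comp_continuous Real.continuous_exp fun x => Real.exp_pos x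
  have hgc : Continuous g := hfec.log fun u => (hfe u).ne'
  have hg0 : g 0 = 0 := by simp [hg, Real.exp_zero, hone]
  -- midpoint concavity of g
  have hmid : ∀ a b : ℝ, (g a + g b) / 2 ≤ g ((a + b) / 2) := by
    intro a b
    have h2 := hgcc (Real.exp a) (Real.exp b) (Real.exp_pos a) (Real.exp_pos b)
    rw [sqrt_exp_mul_exp] at h2
    have h3 : Real.sqrt (f (Real.exp a) * f (Real.exp b)) =
        Real.exp ((g a + g b) / 2) := by
      conv_lhs => rw [← Real.exp_log (hfe a), ← Real.exp_log (hfe b)]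
      rw [sqrt_exp_mul_exp]
    rw [h3] at h2
    calc (g a + g b) / 2 = Real.log (Real.exp ((g a + g b) / 2)) := (Real.log_exp _).symm
      _ ≤ Real.log (f (Real.exp ((a + b) / 2))) :=
          Real.log_le_log (Real.exp_pos _) h2
      _ = g ((a + b) / 2) := rfl
  -- key lemma: s * g v ≤ g (s * v) for s ∈ [0,1]
  have key : ∀ v : ℝ, ∀ s : ℝ, 0 ≤ s → s ≤ 1 → s * g v ≤ g (s * v) := by
    intro v
    have dyad : ∀ n : ℕ, ∀ k : ℕ, k ≤ 2 ^ n →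
        ((k : ℝ) / 2 ^ n) * g v ≤ g (((k : ℝ) / 2 ^ n) * v) := by
      intro n
      induction n with
      | zero =>
        intro k hk
        interval_cases k
        · simpa using hg0.ge
        · norm_num
      | succ n ih =>
        intro k hk
        set a : ℕ := min k (2 ^ n) with ha
        set b : ℕ := k - a with hb
        have hab : a + b = k := by omega
        have ha' : a ≤ 2 ^ n := by omega
        have hb' : b ≤ 2 ^ n := by
          have h2 : (2:ℕ) ^ (n+1) = 2 ^ n + 2 ^ n := by ring
          omega
        have habR : (a : ℝ) + b = k := by exact_mod_cast congrArg (Nat.cast (R := ℝ)) hab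
        have hxy : (((a : ℝ) / 2 ^ n) * v + ((b : ℝ) / 2 ^ n) * v) / 2
            = ((k : ℝ) / 2 ^ (n + 1)) * v := by
          have h2n : (2:ℝ) ^ (n+1) = 2 ^ n * 2 := by ring
          rw [← habR, h2n]
          have h2p : (0:ℝ) < 2 ^ n := by positivity
          field_simp
        calc ((k : ℝ) / 2 ^ (n + 1)) * g v
            = (((a : ℝ) / 2 ^ n) * g v + ((b : ℝ) / 2 ^ n) * g v) / 2 := by
              have h2n : (2:ℝ) ^ (n+1) = 2 ^ n * 2 := by ring
              rw [← habR, h2n]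
              have h2p : (0:ℝ) < 2 ^ n := by positivity
              field_simp
          _ ≤ (g (((a : ℝ) / 2 ^ n) * v) + g (((b : ℝ) / 2 ^ n) * v)) / 2 := by
              have h1 := ih a ha'
              have h2 := ih b hb'
              linarith
          _ ≤ g ((((a : ℝ) / 2 ^ n) * v + ((b : ℝ) / 2 ^ n) * v) / 2) := hmid _ _
          _ = g (((k : ℝ) / 2 ^ (n + 1)) * v) := by rw [hxy]
    -- limit argument
    intro s hs0 hs1
    set φ : ℝ → ℝ := fun x => g (x * v) - x * g v with hφ
    have hφc : Continuous φ := by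
      apply Continuous.sub
      · exact hgc.comp (continuous_id.mul continuous_const)
      · exact continuous_id.mul continuous_const
    set u : ℕ → ℝ := fun n => (⌊s * 2 ^ n⌋.toNat : ℝ) / 2 ^ n with hu
    have h0 : ∀ n : ℕ, (0:ℤ) ≤ ⌊s * 2 ^ n⌋ := fun n =>
      Int.floor_nonneg.mpr (by positivity)
    have h3 : ∀ n : ℕ, ((⌊s * 2 ^ n⌋.toNat : ℕ) : ℝ) = ((⌊s * 2 ^ n⌋ : ℤ) : ℝ) := by
      intro n
      exact_mod_cast congrArg (fun z : ℤ => (z : ℝ)) (Int.toNat_of_nonneg (h0 n))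
    have hun : ∀ n, 0 ≤ φ (u n) := by
      intro n
      have h1 : ((⌊s * 2 ^ n⌋ : ℤ) : ℝ) ≤ (2:ℝ) ^ n := by
        refine le_trans (Int.floor_le _) ?_
        nlinarith [pow_pos (by norm_num : (0:ℝ) < 2) n]
      have h1' : ⌊s * 2 ^ n⌋ ≤ (2:ℤ) ^ n := by exact_mod_cast h1
      have hkn : ⌊s * 2 ^ n⌋.toNat ≤ 2 ^ n :=
        Int.toNat_le.mpr (by exact_mod_cast h1')
      have := dyad n _ hkn
      simpa [hφ, hu] using sub_nonneg.mpr this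
    have hull : ∀ n, s - (1/2) ^ n ≤ u n := by
      intro n
      have h2 : (0:ℝ) < 2 ^ n := by positivity
      have h1 : s * 2 ^ n - 1 < ((⌊s * 2 ^ n⌋ : ℤ) : ℝ) := Int.sub_one_lt_floor _
      have hpow : (1/2 : ℝ) ^ n * 2 ^ n = 1 := by
        rw [← mul_pow]; norm_num
      rw [hu]
      simp only
      rw [h3 n, le_div_iff₀ h2]
      calc (s - (1/2) ^ n) * 2 ^ n = s * 2 ^ n - 1 := by rw [sub_mul, hpow]
        _ ≤ ((⌊s * 2 ^ n⌋ : ℤ) : ℝ) := h1.le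
    have huu : ∀ n, u n ≤ s := by
      intro n
      have h2 : (0:ℝ) < 2 ^ n := by positivity
      have h1 : ((⌊s * 2 ^ n⌋ : ℤ) : ℝ) ≤ s * 2 ^ n := Int.floor_le _
      rw [hu]
      simp only
      rw [h3 n, div_le_iff₀ h2]
      exact h1
    have hlim : Filter.Tendsto u Filter.atTop (nhds s) := by
      have hl : Filter.Tendsto (fun n : ℕ => s - (1/2:ℝ) ^ n) Filter.atTop (nhds s) := by
        have := tendsto_pow_atTop_nhds_zero_of_lt_one (by norm_num : (0:ℝ) ≤ 1/2)
          (by norm_num : (1/2:ℝ) < 1)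
        simpa using (tendsto_const_nhds.sub this)
      exact tendsto_of_tendsto_of_tendsto_of_le_of_le hl tendsto_const_nhds hull huu
    have : 0 ≤ φ s :=
      ge_of_tendsto' ((hφc.tendsto s).comp hlim) (fun n => hun n)
    simpa [hφ] using sub_nonneg.mp this
  -- conclusion
  intro t ht r hr
  have hr0 : 0 < r := lt_of_lt_of_le one_pos hr
  have hsr : (0:ℝ) ≤ 1 / r := by positivity
  have hsr1 : 1 / r ≤ 1 := by
    rw [div_le_one hr0]; exact hr
  have hk := key (r * Real.log t) (1 / r) hsr hsr1
  have hfr : (1 / r) * (r * Real.log t) = Real.log t := by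
    field_simp
  rw [hfr] at hk
  have hg1 : g (Real.log t) = Real.log (f t) := by
    simp [hg, Real.exp_log ht]
  have hg2 : g (r * Real.log t) = Real.log (f (t ^ r)) := by
    rw [hg]
    simp only
    rw [Real.rpow_def_of_pos ht]
    ring_nf
  rw [hg1, hg2] at hk
  have hk2 : Real.log (f (t ^ r)) ≤ r * Real.log (f t) := by
    have := mul_le_mul_of_nonneg_left hk (le_of_lt hr0)
    calc Real.log (f (t ^ r)) = r * ((1/r) * Real.log (f (t ^ r))) := by
          field_simp
      _ ≤ r * Real.log (f t) := this
  have hft : 0 < f t := hpos t ht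
  have hftr : 0 < f (t ^ r) := hpos _ (Real.rpow_pos_of_pos ht r)
  have : Real.log (f (t ^ r)) ≤ Real.log (f t ^ r) := by
    rw [Real.log_rpow hft]; exact hk2
  exact (Real.log_le_log_iff hftr (Real.rpow_pos_of_pos hft r)).mp this
end

section
/- The functions t ↦ 2t/(t+1) and t ↦ t² are geometrically concave on (0,∞), but their sum t ↦ 2t/(t+1) + t² is not geometrically concave: there exist x, y > 0 such that, writing s(t) = 2t/(t+1) + t², one has s(√(x·y)) < √(s(x)·s(y)). -/
/-- The functions `2t/(t+1)` and `t²` are geometrically concave on `(0,∞)`, but their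
sum is not geometrically concave. -/
theorem sum_of_geomConcave_not_geomConcave :
    (∀ x y : ℝ, 0 < x → 0 < y →
      Real.sqrt ((2 * x / (x + 1)) * (2 * y / (y + 1))) ≤
        2 * Real.sqrt (x * y) / (Real.sqrt (x * y) + 1)) ∧
    (∀ x y : ℝ, 0 < x → 0 < y →
      Real.sqrt (x ^ 2 * y ^ 2) ≤ Real.sqrt (x * y) ^ 2) ∧
    (∃ x y : ℝ, 0 < x ∧ 0 < y ∧
      (2 * Real.sqrt (x * y) / (Real.sqrt (x * y) + 1) + Real.sqrt (x * y) ^ 2) <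
        Real.sqrt ((2 * x / (x + 1) + x ^ 2) * (2 * y / (y + 1) + y ^ 2))) := by
  refine ⟨?_, ?_, ?_⟩
  · intro x y hx hy
    have hs : Real.sqrt (x * y) ^ 2 = x * y := Real.sq_sqrt (by positivity)
    have hsnn : 0 ≤ Real.sqrt (x * y) := Real.sqrt_nonneg _
    have hxy : 2 * Real.sqrt (x * y) ≤ x + y := by
      nlinarith [sq_nonneg (Real.sqrt x - Real.sqrt y), Real.sq_sqrt hx.le,
        Real.sq_sqrt hy.le, Real.sqrt_mul hx.le y]
    have h1 : (0:ℝ) < x + 1 := by linarith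
    have h2 : (0:ℝ) < y + 1 := by linarith
    rw [show (2 * x / (x + 1)) * (2 * y / (y + 1)) = 4 * (x * y) / ((x + 1) * (y + 1)) by
      field_simp; ring]
    rw [show 2 * Real.sqrt (x * y) / (Real.sqrt (x * y) + 1) =
        Real.sqrt ((2 * Real.sqrt (x * y) / (Real.sqrt (x * y) + 1)) ^ 2) by
      rw [Real.sqrt_sq (by positivity)]]
    apply Real.sqrt_le_sqrt
    rw [div_pow, div_le_div_iff₀ (by positivity) (by positivity)]
    nlinarith [mul_pos hx hy, hxy, hs, hsnn]
  · intro x y hx hy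
    rw [← mul_pow, Real.sqrt_sq (by positivity), Real.sq_sqrt (by positivity)]
  · refine ⟨1/4, 4, by norm_num, by norm_num, ?_⟩
    have h1 : Real.sqrt ((1:ℝ)/4 * 4) = 1 := by norm_num
    rw [h1, show (2 * 1 / (1 + 1) + (1:ℝ) ^ 2) = 2 by norm_num]
    rw [show (2 * (1/4) / (1/4 + 1) + (1/4:ℝ) ^ 2) * (2 * 4 / (4 + 1) + 4 ^ 2)
        = 407/50 by norm_num]
    rw [show (2:ℝ) = Real.sqrt 4 by
      rw [show (4:ℝ) = 2^2 by norm_num, Real.sqrt_sq (by norm_num)]]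
    exact Real.sqrt_lt_sqrt (by norm_num) (by norm_num)
end

section
/- Let Γ = {(a,b) ∈ ℝ² : 0 < a−b ≤ 1, −1 ≤ a ≤ 2, −2 ≤ b ≤ 1} ∪ (([0,1]×[−1,0]) \ {(0,0)}) ∪ {(a,a) : a ≠ 0}, and for (a,b) ∈ Γ define u_{a,b} : (0,∞) → (0,∞) by u_{a,b}(t) = g_a(t)/g_b(t) for t ≠ 1 and u_{a,b}(1) = 1, where g_c(t) = (t^c − 1)/c for c ≠ 0 and g_0(t) = log t. Then u_{a,b} is geometrically convex if and only if |a| ≥ |b|. -/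
open Real MeasureTheory intervalIntegral Set Metric

noncomputable def Ff (x : ℝ) : ℝ := ∫ t in (0:ℝ)..1, Real.exp (t * x)
noncomputable def Ff1 (x : ℝ) : ℝ := ∫ t in (0:ℝ)..1, t * Real.exp (t * x)
noncomputable def Ff2 (x : ℝ) : ℝ := ∫ t in (0:ℝ)..1, t^2 * Real.exp (t * x)

lemma Ff_zero : Ff 0 = 1 := by simp [Ff]
lemma Ff1_zero : Ff1 0 = 1/2 := by simp [Ff1, integral_id]
lemma Ff2_zero : Ff2 0 = 1/3 := by
  simp only [Ff2, mul_zero, Real.exp_zero, mul_one]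
  rw [integral_pow]; norm_num

lemma Ff_eq {x : ℝ} (hx : x ≠ 0) : Ff x = (Real.exp x - 1) / x := by
  have := intervalIntegral.integral_comp_mul_right (fun t => Real.exp t) (a := (0:ℝ)) (b := 1) hx
  simp only [Ff]
  rw [show (fun t => Real.exp (t * x)) = fun t => (fun s => Real.exp s) (t * x) from rfl]
  rw [this]
  simp [integral_exp, smul_eq_mul]
  field_simp

lemma hasDerivAt_Ff (x : ℝ) : HasDerivAt Ff (Ff1 x) x := by
  have h := intervalIntegral.hasDerivAt_integral_of_dominated_loc_of_deriv_le
    (F := fun x t => Real.exp (t * x)) (F' := fun x t => t * Real.exp (t * x))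
    (x₀ := x) (a := (0:ℝ)) (b := 1) (μ := volume)
    (bound := fun _ => Real.exp (|x| + 1)) (s := Metric.ball x 1) (Metric.ball_mem_nhds x one_pos)
    ?_ ?_ ?_ ?_ ?_ ?_
  · exact h.2
  · filter_upwards with y
    exact (Continuous.aestronglyMeasurable (by continuity)).restrict
  · apply Continuous.intervalIntegrable; continuity
  · exact (Continuous.aestronglyMeasurable (by continuity)).restrict
  · filter_upwards with t ht y hy
    have ht' : t ∈ Set.Ioc (0:ℝ) 1 := by
      simpa [Set.uIoc_of_le (by norm_num : (0:ℝ) ≤ 1)] using ht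
    have h1 : |t * Real.exp (t * y)| ≤ Real.exp (t * y) := by
      rw [abs_mul, abs_of_nonneg ht'.1.le, Real.abs_exp]
      nlinarith [Real.exp_pos (t*y), ht'.1.le, ht'.2]
    refine h1.trans (Real.exp_le_exp.2 ?_)
    have hy' : |y| ≤ |x| + 1 := by
      have := mem_ball_iff_norm.1 hy
      have : |y - x| < 1 := by simpa using this
      calc |y| = |x + (y - x)| := by ring_nf
        _ ≤ |x| + |y - x| := abs_add_le _ _
        _ ≤ |x| + 1 := by linarith
    calc t * y ≤ |t * y| := le_abs_self _
      _ = |t| * |y| := abs_mul _ _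
      _ ≤ 1 * (|x| + 1) := by
          apply mul_le_mul _ hy' (abs_nonneg _) zero_le_one
          rw [abs_of_nonneg ht'.1.le]; exact ht'.2
      _ = |x| + 1 := one_mul _
  · apply Continuous.intervalIntegrable; continuity
  · filter_upwards with t ht y hy
    exact ((Real.hasDerivAt_exp (t*y)).comp y ((hasDerivAt_id' y).const_mul t)).congr_deriv (by ring)

lemma hasDerivAt_Ff1 (x : ℝ) : HasDerivAt Ff1 (Ff2 x) x := by
  have h := intervalIntegral.hasDerivAt_integral_of_dominated_loc_of_deriv_le
    (F := fun x t => t * Real.exp (t * x)) (F' := fun x t => t^2 * Real.exp (t * x))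
    (x₀ := x) (a := (0:ℝ)) (b := 1) (μ := volume)
    (bound := fun _ => Real.exp (|x| + 1)) (s := Metric.ball x 1) (Metric.ball_mem_nhds x one_pos)
    ?_ ?_ ?_ ?_ ?_ ?_
  · exact h.2
  · filter_upwards with y
    exact (Continuous.aestronglyMeasurable (by continuity)).restrict
  · apply Continuous.intervalIntegrable; continuity
  · exact (Continuous.aestronglyMeasurable (by continuity)).restrict
  · filter_upwards with t ht y hy
    have ht' : t ∈ Set.Ioc (0:ℝ) 1 := by
      simpa [Set.uIoc_of_le (by norm_num : (0:ℝ) ≤ 1)] using ht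
    have h1 : |t^2 * Real.exp (t * y)| ≤ Real.exp (t * y) := by
      rw [abs_mul, abs_of_nonneg (sq_nonneg t), Real.abs_exp]
      have h2 : t^2 ≤ 1 := by nlinarith [ht'.1.le, ht'.2]
      nlinarith [Real.exp_pos (t*y), mul_le_mul_of_nonneg_right h2 (Real.exp_pos (t*y)).le]
    refine h1.trans (Real.exp_le_exp.2 ?_)
    have hy' : |y| ≤ |x| + 1 := by
      have : |y - x| < 1 := by simpa using mem_ball_iff_norm.1 hy
      calc |y| = |x + (y - x)| := by ring_nf
        _ ≤ |x| + |y - x| := abs_add_le _ _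
        _ ≤ |x| + 1 := by linarith
    calc t * y ≤ |t * y| := le_abs_self _
      _ = |t| * |y| := abs_mul _ _
      _ ≤ 1 * (|x| + 1) := by
          apply mul_le_mul _ hy' (abs_nonneg _) zero_le_one
          rw [abs_of_nonneg ht'.1.le]; exact ht'.2
      _ = |x| + 1 := one_mul _
  · apply Continuous.intervalIntegrable; continuity
  · filter_upwards with t ht y hy
    have := ((Real.hasDerivAt_exp (t*y)).comp y ((hasDerivAt_id y).const_mul t)).const_mul t
    simpa [mul_comm, mul_assoc, pow_two] using this

lemma m_pos {x : ℝ} (hx : 0 < x) : 0 < x * Real.cosh x - Real.sinh x := by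
  have hmono : StrictMonoOn (fun y => y * Real.cosh y - Real.sinh y) (Ici (0:ℝ)) := by
    apply strictMonoOn_of_deriv_pos (convex_Ici 0)
    · fun_prop
    · intro y hy
      rw [interior_Ici, mem_Ioi] at hy
      have h : HasDerivAt (fun y => y * Real.cosh y - Real.sinh y) (y * Real.sinh y) y := by
        have := ((hasDerivAt_id y).mul (Real.hasDerivAt_cosh y)).sub (Real.hasDerivAt_sinh y)
        refine this.congr_deriv ?_
        simp
      rw [h.deriv]
      have := Real.sinh_pos_iff.2 hy
      positivity
  have := hmono (self_mem_Ici) (le_of_lt hx : (0:ℝ) ≤ x) hx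
  simpa using this

lemma k_pos {x : ℝ} (hx : 0 < x) : 0 < x * Real.sinh x - 2 * Real.cosh x + 2 := by
  have hmono : StrictMonoOn (fun y => y * Real.sinh y - 2 * Real.cosh y + 2) (Ici (0:ℝ)) := by
    apply strictMonoOn_of_deriv_pos (convex_Ici 0)
    · fun_prop
    · intro y hy
      rw [interior_Ici, mem_Ioi] at hy
      have h : HasDerivAt (fun y => y * Real.sinh y - 2 * Real.cosh y + 2)
          (y * Real.cosh y - Real.sinh y) y := by
        have := (((hasDerivAt_id y).mul (Real.hasDerivAt_sinh y)).sub
          ((Real.hasDerivAt_cosh y).const_mul 2)).add_const 2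
        refine this.congr_deriv ?_
        simp
        all_goals ring
      rw [h.deriv]
      exact m_pos hy
  have := hmono (self_mem_Ici) (le_of_lt hx : (0:ℝ) ≤ x) hx
  simpa using this

lemma p_pos {x : ℝ} (hx : 0 < x) : 0 < 2 * Real.cosh x - 2 - x^2 := by
  have hmono : StrictMonoOn (fun y => 2 * Real.cosh y - 2 - y^2) (Ici (0:ℝ)) := by
    apply strictMonoOn_of_deriv_pos (convex_Ici 0)
    · fun_prop
    · intro y hy
      rw [interior_Ici, mem_Ioi] at hy
      have h : HasDerivAt (fun y => 2 * Real.cosh y - 2 - y^2)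
          (2 * Real.sinh y - 2 * y) y := by
        have := (((Real.hasDerivAt_cosh y).const_mul 2).sub_const 2).sub (hasDerivAt_pow 2 y)
        refine this.congr_deriv ?_
        simp
        all_goals ring
      rw [h.deriv]
      have := Real.self_lt_sinh_iff.2 hy
      linarith
  have := hmono (self_mem_Ici) (le_of_lt hx : (0:ℝ) ≤ x) hx
  simpa using this

lemma p_pos' {x : ℝ} (hx : x ≠ 0) : 0 < 2 * Real.cosh x - 2 - x^2 := by
  rcases hx.lt_or_gt with h | h
  · have := p_pos (neg_pos.2 h)
    simpa [Real.cosh_neg] using this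
  · exact p_pos h

lemma p_nonneg (x : ℝ) : 0 ≤ 2 * Real.cosh x - 2 - x^2 := by
  rcases eq_or_ne x 0 with h | h
  · simp [h]
  · exact (p_pos' h).le

lemma Q_strictMono : StrictMonoOn (fun x => (2 * Real.cosh x - 2) / x^2) (Ioi (0:ℝ)) := by
  apply strictMonoOn_of_deriv_pos (convex_Ioi 0)
  · apply ContinuousOn.div (by fun_prop) (by fun_prop)
    intro y hy
    exact pow_ne_zero 2 (ne_of_gt hy)
  · intro y hy
    rw [interior_Ioi, mem_Ioi] at hy
    have hy2 : (y:ℝ)^2 ≠ 0 := pow_ne_zero 2 hy.ne'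
    have h : HasDerivAt (fun x => (2 * Real.cosh x - 2) / x^2)
        ((2*y*(y * Real.sinh y - 2 * Real.cosh y + 2)) / (y^2)^2) y := by
      have := (((Real.hasDerivAt_cosh y).const_mul 2).sub_const 2).div (hasDerivAt_pow 2 y) hy2
      refine this.congr_deriv ?_
      field_simp
      ring
    rw [h.deriv]
    have hk := k_pos hy
    positivity

lemma Q_gt_one {x : ℝ} (hx : x ≠ 0) : 1 < (2 * Real.cosh x - 2) / x^2 := by
  rw [lt_div_iff₀ (by positivity)]
  have := p_pos' hx
  linarith

lemma cosh_sub_one_pos {x : ℝ} (hx : x ≠ 0) : 0 < 2 * Real.cosh x - 2 := by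
  have := (Real.one_lt_cosh).2 hx
  linarith


lemma Ff_pos (x : ℝ) : 0 < Ff x := by
  rcases eq_or_ne x 0 with h | h
  · rw [h, Ff_zero]; norm_num
  · rw [Ff_eq h]
    rcases h.lt_or_gt with hx | hx
    · apply div_pos_of_neg_of_neg _ hx
      have := Real.exp_lt_one_iff.2 hx
      linarith
    · apply div_pos _ hx
      have := Real.one_lt_exp_iff.2 hx
      linarith

lemma Ff1_eq {x : ℝ} (hx : x ≠ 0) :
    Ff1 x = (x * Real.exp x - Real.exp x + 1) / x^2 := by
  have hev : Ff =ᶠ[nhds x] (fun y => (Real.exp y - 1) / y) := by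
    filter_upwards [eventually_ne_nhds hx] with y hy using Ff_eq hy
  have hg : HasDerivAt (fun y => (Real.exp y - 1) / y)
      ((x * Real.exp x - Real.exp x + 1) / x^2) x := by
    have := ((Real.hasDerivAt_exp x).sub_const 1).div (hasDerivAt_id' x) hx
    refine this.congr_deriv ?_
    field_simp
    ring
  exact (hasDerivAt_Ff x).unique (hg.congr_of_eventuallyEq hev)

lemma Ff2_eq {x : ℝ} (hx : x ≠ 0) :
    Ff2 x = ((x^2 - 2*x + 2) * Real.exp x - 2) / x^3 := by
  have hev : Ff1 =ᶠ[nhds x] (fun y => (y * Real.exp y - Real.exp y + 1) / y^2) := by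
    filter_upwards [eventually_ne_nhds hx] with y hy using Ff1_eq hy
  have hg : HasDerivAt (fun y => (y * Real.exp y - Real.exp y + 1) / y^2)
      (((x^2 - 2*x + 2) * Real.exp x - 2) / x^3) x := by
    have h1 : HasDerivAt (fun y : ℝ => y * Real.exp y - Real.exp y + 1)
        (x * Real.exp x) x := by
      have := (((hasDerivAt_id x).mul (Real.hasDerivAt_exp x)).sub
        (Real.hasDerivAt_exp x)).add_const 1
      refine this.congr_deriv ?_
      simp
      all_goals ring
    have := h1.div (hasDerivAt_pow 2 x) (pow_ne_zero 2 hx)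
    refine this.congr_deriv ?_
    field_simp
    ring
  exact (hasDerivAt_Ff1 x).unique (hg.congr_of_eventuallyEq hev)

noncomputable def Dq (x : ℝ) : ℝ := Ff2 x * Ff x - Ff1 x ^ 2

lemma Dq_zero : Dq 0 = 1/12 := by
  rw [Dq, Ff_zero, Ff1_zero, Ff2_zero]; norm_num

lemma Dq_eq {x : ℝ} (hx : x ≠ 0) :
    Dq x = Real.exp x * (2 * Real.cosh x - 2 - x^2) / x^4 := by
  rw [Dq, Ff_eq hx, Ff1_eq hx, Ff2_eq hx, Real.cosh_eq, Real.exp_neg]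
  have := Real.exp_ne_zero x
  field_simp
  ring

lemma Dq_nonneg (x : ℝ) : 0 ≤ Dq x := by
  rcases eq_or_ne x 0 with h | h
  · rw [h, Dq_zero]; norm_num
  · rw [Dq_eq h]
    apply div_nonneg _ (by positivity)
    exact mul_nonneg (Real.exp_pos x).le (p_nonneg x)

lemma psi_eq {x : ℝ} (hx : x ≠ 0) :
    x^2 * (Dq x / Ff x ^ 2) = (2 * Real.cosh x - 2 - x^2) / (2 * Real.cosh x - 2) := by
  have hc := cosh_sub_one_pos hx
  have hne : Real.exp x - 1 ≠ 0 := by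
    intro h
    exact hx ((Real.exp_eq_one_iff _).1 (by linarith))
  have he : (Real.exp x - 1)^2 = Real.exp x * (2 * Real.cosh x - 2) := by
    rw [Real.cosh_eq, Real.exp_neg]
    have := Real.exp_ne_zero x
    field_simp
    ring
  rw [Dq_eq hx, Ff_eq hx, div_pow, he]
  have := Real.exp_ne_zero x
  field_simp

lemma psi_mono {x y : ℝ} (hy : y ≠ 0) (hxy : |y| ≤ |x|) :
    y^2 * (Dq y / Ff y ^ 2) ≤ x^2 * (Dq x / Ff x ^ 2) := by
  have hx : x ≠ 0 := by
    intro h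
    rw [h, abs_zero] at hxy
    exact hy (abs_eq_zero.1 (le_antisymm hxy (abs_nonneg y)))
  rw [psi_eq hx, psi_eq hy]
  have hcx := cosh_sub_one_pos hx
  have hcy := cosh_sub_one_pos hy
  have hQ : (2 * Real.cosh y - 2) / y^2 ≤ (2 * Real.cosh x - 2) / x^2 := by
    have e1 : (2 * Real.cosh y - 2) / y^2 = (2 * Real.cosh |y| - 2) / |y|^2 := by
      rw [Real.cosh_abs, sq_abs]
    have e2 : (2 * Real.cosh x - 2) / x^2 = (2 * Real.cosh |x| - 2) / |x|^2 := by
      rw [Real.cosh_abs, sq_abs]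
    rw [e1, e2]
    rcases eq_or_lt_of_le hxy with h | h
    · rw [h]
    · exact (Q_strictMono (abs_pos.2 hy) (abs_pos.2 hx) h).le
  have hy2 : (0:ℝ) < y^2 := by positivity
  have hx2 : (0:ℝ) < x^2 := by positivity
  have hQ' := (div_le_div_iff₀ hy2 hx2).1 hQ
  rw [div_le_div_iff₀ hcy hcx]
  nlinarith [hQ']

lemma FF_neg {x : ℝ} (hx : x ≠ 0) :
    Ff x * Ff (-x) = (2 * Real.cosh x - 2) / x^2 := by
  rw [Ff_eq hx, Ff_eq (neg_ne_zero.2 hx), Real.cosh_eq, Real.exp_neg]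
  have := Real.exp_ne_zero x
  field_simp
  ring

lemma G_convex {a b : ℝ} (hab : |b| ≤ |a|) :
    ConvexOn ℝ Set.univ (fun s => Real.log (Ff (a*s)) - Real.log (Ff (b*s))) := by
  have cF : Continuous Ff := by
    rw [continuous_iff_continuousAt]
    exact fun x => (hasDerivAt_Ff x).continuousAt
  apply convexOn_of_hasDerivWithinAt2_nonneg convex_univ
    (f' := fun s => Ff1 (a*s) * a / Ff (a*s) - Ff1 (b*s) * b / Ff (b*s))
    (f'' := fun s => a^2 * (Dq (a*s) / Ff (a*s)^2) - b^2 * (Dq (b*s) / Ff (b*s)^2))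
  · apply Continuous.continuousOn
    apply Continuous.sub
    · exact ((cF.comp (continuous_const.mul continuous_id)).log
        (fun s => (Ff_pos (a*s)).ne'))
    · exact ((cF.comp (continuous_const.mul continuous_id)).log
        (fun s => (Ff_pos (b*s)).ne'))
  · intro s _
    have h0a : HasDerivAt (fun x : ℝ => a*x) a s := by
      simpa using (hasDerivAt_id s).const_mul a
    have h0b : HasDerivAt (fun x : ℝ => b*x) b s := by
      simpa using (hasDerivAt_id s).const_mul b
    have h1a : HasDerivAt (fun s => Ff (a*s)) (Ff1 (a*s) * a) s :=
      (hasDerivAt_Ff (a*s)).comp s h0a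
    have h1b : HasDerivAt (fun s => Ff (b*s)) (Ff1 (b*s) * b) s :=
      (hasDerivAt_Ff (b*s)).comp s h0b
    exact ((h1a.log (Ff_pos (a*s)).ne').sub (h1b.log (Ff_pos (b*s)).ne')).hasDerivWithinAt
  · intro s _
    have h0a : HasDerivAt (fun x : ℝ => a*x) a s := by
      simpa using (hasDerivAt_id s).const_mul a
    have h0b : HasDerivAt (fun x : ℝ => b*x) b s := by
      simpa using (hasDerivAt_id s).const_mul b
    have h1a : HasDerivAt (fun s => Ff (a*s)) (Ff1 (a*s) * a) s :=
      (hasDerivAt_Ff (a*s)).comp s h0a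
    have h1b : HasDerivAt (fun s => Ff (b*s)) (Ff1 (b*s) * b) s :=
      (hasDerivAt_Ff (b*s)).comp s h0b
    have h2a : HasDerivAt (fun s => Ff1 (a*s) * a / Ff (a*s))
        ((Ff2 (a*s) * a * a * Ff (a*s) - Ff1 (a*s) * a * (Ff1 (a*s) * a)) / Ff (a*s)^2) s :=
      (((hasDerivAt_Ff1 (a*s)).comp s h0a).mul_const a).div h1a (Ff_pos (a*s)).ne'
    have h2b : HasDerivAt (fun s => Ff1 (b*s) * b / Ff (b*s))
        ((Ff2 (b*s) * b * b * Ff (b*s) - Ff1 (b*s) * b * (Ff1 (b*s) * b)) / Ff (b*s)^2) s :=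
      (((hasDerivAt_Ff1 (b*s)).comp s h0b).mul_const b).div h1b (Ff_pos (b*s)).ne'
    have heq : a^2 * (Dq (a*s) / Ff (a*s)^2) - b^2 * (Dq (b*s) / Ff (b*s)^2) =
        (Ff2 (a*s) * a * a * Ff (a*s) - Ff1 (a*s) * a * (Ff1 (a*s) * a)) / Ff (a*s)^2 -
        (Ff2 (b*s) * b * b * Ff (b*s) - Ff1 (b*s) * b * (Ff1 (b*s) * b)) / Ff (b*s)^2 := by
      simp only [Dq]
      ring
    rw [heq]
    exact (h2a.sub h2b).hasDerivWithinAt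
  · intro s _
    rcases eq_or_ne s 0 with hs | hs
    · subst hs
      simp only [mul_zero, Dq_zero, Ff_zero, one_pow, div_one]
      have hsq : b^2 ≤ a^2 := by
        rw [← sq_abs a, ← sq_abs b]
        exact pow_le_pow_left₀ (abs_nonneg b) hab 2
      nlinarith
    · rcases eq_or_ne b 0 with hb | hb
      · rw [hb]
        norm_num
        exact mul_nonneg (sq_nonneg a) (div_nonneg (Dq_nonneg _) (sq_nonneg _))
      · have hbs : b * s ≠ 0 := mul_ne_zero hb hs
        have habs : |b*s| ≤ |a*s| := by
          rw [abs_mul, abs_mul]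
          exact mul_le_mul_of_nonneg_right hab (abs_nonneg s)
        have h := psi_mono hbs habs
        rw [mul_pow, mul_pow] at h
        have hs2 : (0:ℝ) < s^2 := by positivity
        have h2 : s^2 * (b^2 * (Dq (b*s) / Ff (b*s)^2)) ≤
            s^2 * (a^2 * (Dq (a*s) / Ff (a*s)^2)) := by linarith [h]
        have h3 := (mul_le_mul_iff_right₀ hs2).1 h2
        linarith

/-- The parameter region `Γ`. -/
def GammaRegion : Set (ℝ × ℝ) :=
  {p | (0 < p.1 - p.2 ∧ p.1 - p.2 ≤ 1 ∧ -1 ≤ p.1 ∧ p.1 ≤ 2 ∧ -2 ≤ p.2 ∧ p.2 ≤ 1)} ∪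
  ((Set.Icc (0 : ℝ) 1 ×ˢ Set.Icc (-1 : ℝ) 0) \ {(0, 0)}) ∪
  {p | p.1 = p.2 ∧ p.1 ≠ 0}

/-- `g_c(t) = (t^c - 1)/c` for `c ≠ 0`, and `g_0(t) = log t`. -/
noncomputable def gAux (c t : ℝ) : ℝ :=
  if c = 0 then Real.log t else (t ^ c - 1) / c

/-- The function `u_{a,b}(t) = g_a(t)/g_b(t)`, extended by `u_{a,b}(1) = 1`. -/
noncomputable def uab (a b t : ℝ) : ℝ :=
  if t = 1 then 1 else gAux a t / gAux b t

lemma uab_eq (a b : ℝ) {t : ℝ} (ht : 0 < t) :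
    uab a b t = Real.exp (Real.log (Ff (a * Real.log t)) - Real.log (Ff (b * Real.log t))) := by
  rcases eq_or_ne t 1 with h | h
  · simp [uab, h, Ff_zero]
  · have hs : Real.log t ≠ 0 := by
      intro hlog
      rcases Real.log_eq_zero.1 hlog with h1 | h1 | h1
      · exact absurd h1 ht.ne'
      · exact h h1
      · rw [h1] at ht; linarith
    have key : ∀ c : ℝ, gAux c t = Real.log t * Ff (c * Real.log t) := by
      intro c
      rcases eq_or_ne c 0 with hc | hc
      · simp [gAux, hc, Ff_zero]
      · rw [gAux, if_neg hc, Ff_eq (mul_ne_zero hc hs), Real.rpow_def_of_pos ht,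
          mul_comm (Real.log t) c]
        field_simp
    rw [uab, if_neg h, key a, key b, Real.exp_sub, Real.exp_log (Ff_pos _),
      Real.exp_log (Ff_pos _), mul_div_mul_left _ _ hs]

/-- For `(a,b) ∈ Γ`, the function `u_{a,b}` is geometrically convex iff `|a| ≥ |b|`. -/
theorem uab_geomConvex_iff (a b : ℝ) (hΓ : (a, b) ∈ GammaRegion) :
    (∀ x y : ℝ, 0 < x → 0 < y →
      uab a b (Real.sqrt (x * y)) ≤ Real.sqrt (uab a b x * uab a b y)) ↔
    |b| ≤ |a| := by
  constructor
  · intro h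
    by_contra hab
    push_neg at hab
    have hb : b ≠ 0 := by
      intro hb0
      rw [hb0, abs_zero] at hab
      exact absurd (abs_nonneg a) (not_le.2 hab)
    have h1 := h (Real.exp 1) (Real.exp (-1)) (Real.exp_pos 1) (Real.exp_pos (-1))
    rw [← Real.exp_add] at h1
    norm_num at h1
    rw [show uab a b 1 = 1 from if_pos rfl] at h1
    rw [uab_eq a b (Real.exp_pos 1), uab_eq a b (Real.exp_pos (-1)),
      Real.log_exp, Real.log_exp, ← Real.exp_add] at h1
    have h2 : (0:ℝ) ≤ (Real.log (Ff (a * 1)) - Real.log (Ff (b * 1))) +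
        (Real.log (Ff (a * -1)) - Real.log (Ff (b * -1))) := by
      by_contra hneg
      push_neg at hneg
      have := Real.exp_lt_one_iff.2 hneg
      have hsq := Real.sqrt_lt_sqrt (Real.exp_pos _).le this
      rw [Real.sqrt_one] at hsq
      linarith
    simp only [mul_one, mul_neg_one] at h2
    have h3 : Real.log (Ff b * Ff (-b)) ≤ Real.log (Ff a * Ff (-a)) := by
      rw [Real.log_mul (Ff_pos b).ne' (Ff_pos (-b)).ne',
        Real.log_mul (Ff_pos a).ne' (Ff_pos (-a)).ne']
      linarith
    have h4 : Ff b * Ff (-b) ≤ Ff a * Ff (-a) :=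
      (Real.log_le_log_iff (mul_pos (Ff_pos b) (Ff_pos (-b)))
        (mul_pos (Ff_pos a) (Ff_pos (-a)))).1 h3
    rw [FF_neg hb] at h4
    rcases eq_or_ne a 0 with ha | ha
    · rw [ha] at h4
      simp only [neg_zero, Ff_zero, mul_one] at h4
      exact absurd h4 (not_le.2 (Q_gt_one hb))
    · rw [FF_neg ha] at h4
      have e1 : (2 * Real.cosh a - 2) / a^2 = (2 * Real.cosh |a| - 2) / |a|^2 := by
        rw [Real.cosh_abs, sq_abs]
      have e2 : (2 * Real.cosh b - 2) / b^2 = (2 * Real.cosh |b| - 2) / |b|^2 := by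
        rw [Real.cosh_abs, sq_abs]
      rw [e1, e2] at h4
      exact absurd h4 (not_le.2 (Q_strictMono (abs_pos.2 ha) (abs_pos.2 hb) hab))
  · intro hab x y hx hy
    have hG := G_convex (a := a) (b := b) hab
    set s := Real.log x with hsdef
    set r := Real.log y with hrdef
    have key := hG.2 (Set.mem_univ s) (Set.mem_univ r)
      (by norm_num : (0:ℝ) ≤ 1/2) (by norm_num : (0:ℝ) ≤ 1/2) (by norm_num)
    simp only [smul_eq_mul] at key
    have hmid : Real.log (Real.sqrt (x*y)) = (1:ℝ)/2 * s + 1/2 * r := by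
      rw [Real.log_sqrt (mul_pos hx hy).le, Real.log_mul hx.ne' hy.ne']
      ring
    rw [uab_eq a b (Real.sqrt_pos.2 (mul_pos hx hy)), uab_eq a b hx, uab_eq a b hy, hmid]
    rw [← Real.exp_add, ← Real.exp_half]
    apply Real.exp_le_exp.2
    have : (Real.log (Ff (a * s)) - Real.log (Ff (b * s)) +
        (Real.log (Ff (a * r)) - Real.log (Ff (b * r)))) / 2 =
        1/2 * (Real.log (Ff (a*s)) - Real.log (Ff (b*s))) +
        1/2 * (Real.log (Ff (a*r)) - Real.log (Ff (b*r))) := by ring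
    rw [this]
    exact key
end

section
/- Let Γ = {(a,b) ∈ ℝ² : 0 < a−b ≤ 1, −1 ≤ a ≤ 2, −2 ≤ b ≤ 1} ∪ (([0,1]×[−1,0]) \ {(0,0)}) ∪ {(a,a) : a ≠ 0}, and for (a,b) ∈ Γ define u_{a,b} : (0,∞) → (0,∞) by u_{a,b}(t) = g_a(t)/g_b(t) for t ≠ 1 and u_{a,b}(1) = 1, where g_c(t) = (t^c − 1)/c for c ≠ 0 and g_0(t) = log t. Then u_{a,b} is geometrically concave if and only if |a| ≤ |b|. -/
open Real Set

noncomputable def Qf (c s : ℝ) : ℝ := if c = 0 then s else 2 * Real.sinh (c * s / 2) / c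

@[simp] lemma Qf_zero (s : ℝ) : Qf 0 s = s := if_pos rfl

lemma Qf_abs (c s : ℝ) : Qf |c| s = Qf c s := by
  rcases eq_or_ne c 0 with rfl | hc
  · simp [Qf]
  · rcases lt_or_gt_of_ne hc with h | h
    · rw [abs_of_neg h]
      simp only [Qf, if_neg hc, if_neg (neg_ne_zero.2 hc)]
      rw [show -c * s / 2 = -(c * s / 2) by ring, Real.sinh_neg]
      field_simp
    · rw [abs_of_pos h]

lemma Qf_neg (c s : ℝ) : Qf c (-s) = -Qf c s := by
  rcases eq_or_ne c 0 with rfl | hc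
  · simp [Qf]
  · simp only [Qf, if_neg hc]
    rw [show c * -s / 2 = -(c * s / 2) by ring, Real.sinh_neg]
    field_simp

lemma Qf_pos {c s : ℝ} (hs : 0 < s) : 0 < Qf c s := by
  rw [← Qf_abs]
  rcases eq_or_ne c 0 with h | h
  · simpa [Qf, h] using hs
  · have hc : 0 < |c| := abs_pos.2 h
    simp only [Qf, if_neg hc.ne']
    have : 0 < Real.sinh (|c| * s / 2) := Real.sinh_pos_iff.2 (by positivity)
    positivity

lemma sinh_lt_self_mul_cosh {x : ℝ} (hx : 0 < x) : Real.sinh x < x * Real.cosh x := by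
  have key : StrictMonoOn (fun x : ℝ => x * Real.cosh x - Real.sinh x) (Set.Ici 0) := by
    apply strictMonoOn_of_deriv_pos (convex_Ici 0)
    · fun_prop
    · intro y hy
      rw [interior_Ici] at hy
      have h1 : HasDerivAt (fun x : ℝ => x * Real.cosh x - Real.sinh x)
          (1 * Real.cosh y + y * Real.sinh y - Real.cosh y) y :=
        ((hasDerivAt_id y).mul (Real.hasDerivAt_cosh y)).sub (Real.hasDerivAt_sinh y)
      rw [h1.deriv]
      have h2 := Real.sinh_pos_iff.2 hy
      have := mul_pos hy h2
      nlinarith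
  have := key (Set.self_mem_Ici) (le_of_lt hx : (0:ℝ) ≤ x) hx
  simpa using this

lemma sinh_div_strictMonoOn : StrictMonoOn (fun x : ℝ => Real.sinh x / x) (Set.Ioi 0) := by
  apply strictMonoOn_of_deriv_pos (convex_Ioi 0)
  · intro y hy
    exact (Real.continuous_sinh.continuousAt.div continuousAt_id (ne_of_gt hy)).continuousWithinAt
  · intro y hy
    rw [interior_Ioi] at hy
    have h1 : HasDerivAt (fun x : ℝ => Real.sinh x / x)
        ((Real.cosh y * y - Real.sinh y * 1) / y ^ 2) y :=
      (Real.hasDerivAt_sinh y).div (hasDerivAt_id y) (ne_of_gt hy)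
    rw [h1.deriv]
    have h2 := sinh_lt_self_mul_cosh hy
    have : (0:ℝ) < y^2 := pow_pos hy 2
    rw [div_pos_iff]
    left
    constructor <;> nlinarith

lemma Qf_eq_of_ne {c : ℝ} (hc : c ≠ 0) (s : ℝ) : Qf c s = s * (Real.sinh (c * s / 2) / (c * s / 2)) := by
  rcases eq_or_ne s 0 with rfl | hs
  · simp [Qf, hc]
  · simp only [Qf, if_neg hc]
    field_simp

lemma Qf_lt_Qf {a b : ℝ} (h : |a| < |b|) {s : ℝ} (hs : 0 < s) : Qf a s < Qf b s := by
  rw [← Qf_abs a, ← Qf_abs b]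
  have hb : 0 < |b| := lt_of_le_of_lt (abs_nonneg a) h
  rcases eq_or_lt_of_le (abs_nonneg a) with ha | ha
  · rw [← ha, Qf_zero]
    simp only [Qf, if_neg hb.ne']
    have hx : 0 < |b| * s / 2 := by positivity
    have := Real.self_lt_sinh_iff.2 hx
    rw [lt_div_iff₀ hb]
    nlinarith
  · rw [Qf_eq_of_ne (ne_of_gt ha), Qf_eq_of_ne (ne_of_gt hb)]
    have hmono := sinh_div_strictMonoOn (show |a| * s / 2 ∈ Set.Ioi 0 by simp; positivity)
      (show |b| * s / 2 ∈ Set.Ioi 0 by simp; positivity) (by nlinarith)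
    exact mul_lt_mul_of_pos_left hmono hs

lemma Qf_le_Qf {a b : ℝ} (h : |a| ≤ |b|) {s : ℝ} (hs : 0 < s) : Qf a s ≤ Qf b s := by
  rcases eq_or_lt_of_le h with heq | hlt
  · rw [← Qf_abs a, ← Qf_abs b, heq]
  · exact (Qf_lt_Qf hlt hs).le

lemma le_Qf {c s : ℝ} (hs : 0 < s) : s ≤ Qf c s := by
  have := Qf_le_Qf (a := 0) (b := c) (by simp) hs
  simpa [Qf] using this

lemma Qf_le {c s : ℝ} (hs : 0 < s) : Qf c s ≤ s * Real.cosh (c * s / 2) := by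
  rcases eq_or_ne c 0 with rfl | hc
  · rw [Qf_zero]
    nlinarith [Real.one_le_cosh (0 * s / 2), hs]
  · rw [← Qf_abs, ← Real.cosh_abs (c * s / 2), show |c * s / 2| = |c| * s / 2 by
      rw [abs_div, abs_mul, abs_of_pos hs]; norm_num]
    have hc' : 0 < |c| := abs_pos.2 hc
    rw [Qf_eq_of_ne hc'.ne']
    have hx : 0 < |c| * s / 2 := by positivity
    have h2 := sinh_lt_self_mul_cosh hx
    have : Real.sinh (|c| * s / 2) / (|c| * s / 2) ≤ Real.cosh (|c| * s / 2) := by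
      rw [div_le_iff₀ hx]; nlinarith
    nlinarith [Qf_pos (c := |c|) hs, this, hs]
noncomputable def Vf (c s : ℝ) : ℝ := Real.cosh (c * s / 2) / Qf c s

lemma hasDerivAt_Qf (c s : ℝ) : HasDerivAt (fun t => Qf c t) (Real.cosh (c * s / 2)) s := by
  rcases eq_or_ne c 0 with rfl | hc
  · simpa using (hasDerivAt_id' s)
  · have hlin : HasDerivAt (fun t : ℝ => c * t / 2) (c / 2) s := by
      simpa using ((hasDerivAt_id s).const_mul c).div_const 2
    have h1 : HasDerivAt (fun t : ℝ => Real.sinh (c * t / 2)) (Real.cosh (c * s / 2) * (c / 2)) s :=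
      hlin.sinh
    have h2 := (h1.const_mul 2).div_const c
    have heq : (fun t => Qf c t) = fun t => 2 * Real.sinh (c * t / 2) / c := by
      funext t; simp [Qf, hc]
    rw [heq]
    refine h2.congr_deriv ?_
    field_simp

lemma hasDerivAt_logQf (c : ℝ) {s : ℝ} (hs : 0 < s) :
    HasDerivAt (fun t => Real.log (Qf c t)) (Vf c s) s :=
  (hasDerivAt_Qf c s).log (Qf_pos hs).ne'

lemma hasDerivAt_Vf (c : ℝ) {s : ℝ} (hs : 0 < s) :
    HasDerivAt (fun t => Vf c t) (-((Qf c s) ^ 2)⁻¹) s := by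
  have hlin : HasDerivAt (fun t : ℝ => c * t / 2) (c / 2) s := by
    simpa using ((hasDerivAt_id s).const_mul c).div_const 2
  have h1 : HasDerivAt (fun t : ℝ => Real.cosh (c * t / 2)) (Real.sinh (c * s / 2) * (c / 2)) s :=
    hlin.cosh
  have h2 := h1.div (hasDerivAt_Qf c s) (Qf_pos hs).ne'
  refine h2.congr_deriv (Eq.symm ?_)
  have hQ2 : (Qf c s)^2 ≠ 0 := pow_ne_zero 2 (Qf_pos hs).ne'
  rw [eq_div_iff hQ2, neg_mul, inv_mul_cancel₀ hQ2]
  rcases eq_or_ne c 0 with rfl | hc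
  · norm_num [Qf]
  · have hq : Qf c s = 2 * Real.sinh (c * s / 2) / c := by simp [Qf, hc]
    have h3 : Real.sinh (c*s/2) * (c/2) * (2*Real.sinh (c*s/2)/c) = Real.sinh (c*s/2)^2 := by
      field_simp
    rw [hq, h3, show Real.cosh (c*s/2)*Real.cosh (c*s/2) = Real.cosh (c*s/2)^2 from (sq _).symm]
    have hcsq := Real.cosh_sq (c * s / 2)
    linarith
@[simp] lemma Qf_zero_right (c : ℝ) : Qf c 0 = 0 := by
  rcases eq_or_ne c 0 with rfl | hc
  · simp [Qf]
  · simp [Qf, hc]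

lemma W_zero (a b : ℝ) : Real.log (Qf a 0) - Real.log (Qf b 0) = 0 := by simp

lemma W_nonpos {a b : ℝ} (h : |a| ≤ |b|) {s : ℝ} (hs : 0 ≤ s) :
    Real.log (Qf a s) - Real.log (Qf b s) ≤ 0 := by
  rcases eq_or_lt_of_le hs with rfl | hs'
  · simp
  · have := Real.log_le_log (Qf_pos hs') (Qf_le_Qf h hs')
    linarith

lemma tendsto_logcosh (c : ℝ) :
    Filter.Tendsto (fun s : ℝ => Real.log (Real.cosh (c * s / 2))) (nhdsWithin 0 (Set.Ioi 0)) (nhds 0) := by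
  have hca : ContinuousAt (fun s : ℝ => Real.log (Real.cosh (c * s / 2))) 0 := by
    apply ContinuousAt.log
    · exact (Real.continuous_cosh.comp ((continuous_const.mul continuous_id).div_const 2)).continuousAt
    · exact (Real.cosh_pos _).ne'
  have h0 : Real.log (Real.cosh (c * 0 / 2)) = 0 := by norm_num
  have := hca.tendsto
  rw [h0] at this
  exact this.mono_left nhdsWithin_le_nhds

lemma W_concaveOn {a b : ℝ} (h : |a| ≤ |b|) :
    ConcaveOn ℝ (Set.Ici 0) (fun s => Real.log (Qf a s) - Real.log (Qf b s)) := by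
  apply concaveOn_of_hasDerivWithinAt2_nonpos (f' := fun s => Vf a s - Vf b s)
    (f'' := fun s => -((Qf a s)^2)⁻¹ - (-((Qf b s)^2)⁻¹)) (convex_Ici 0)
  · -- continuity
    intro x hx
    rcases eq_or_lt_of_le (show (0:ℝ) ≤ x from hx) with rfl | hx'
    · -- continuity at 0 via squeeze
      rw [ContinuousWithinAt, W_zero,
        show (Set.Ici (0:ℝ)) = insert 0 (Set.Ioi 0) by rw [Set.Ioi_insert], nhdsWithin_insert]
      refine Filter.Tendsto.sup ?_ ?_
      · have := tendsto_pure_nhds (fun s => Real.log (Qf a s) - Real.log (Qf b s)) 0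
        rwa [W_zero] at this
      · have hlow := (tendsto_logcosh b).neg
        rw [neg_zero] at hlow
        apply tendsto_of_tendsto_of_tendsto_of_le_of_le' hlow (tendsto_logcosh a)
        · filter_upwards [eventually_mem_nhdsWithin] with s hs
          have hs : (0:ℝ) < s := hs
          have h1 : Real.log s ≤ Real.log (Qf a s) := Real.log_le_log hs (le_Qf hs)
          have h2 : Real.log (Qf b s) ≤ Real.log s + Real.log (Real.cosh (b * s / 2)) := by
            rw [← Real.log_mul hs.ne' (Real.cosh_pos _).ne']
            exact Real.log_le_log (Qf_pos hs) (Qf_le hs)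
          linarith
        · filter_upwards [eventually_mem_nhdsWithin] with s hs
          have hs : (0:ℝ) < s := hs
          have h1 : Real.log s ≤ Real.log (Qf b s) := Real.log_le_log hs (le_Qf hs)
          have h2 : Real.log (Qf a s) ≤ Real.log s + Real.log (Real.cosh (a * s / 2)) := by
            rw [← Real.log_mul hs.ne' (Real.cosh_pos _).ne']
            exact Real.log_le_log (Qf_pos hs) (Qf_le hs)
          linarith
    · exact (((hasDerivAt_logQf a hx').sub (hasDerivAt_logQf b hx')).continuousAt).continuousWithinAt
  · intro x hx
    rw [interior_Ici] at hx
    exact ((hasDerivAt_logQf a hx).sub (hasDerivAt_logQf b hx)).hasDerivWithinAt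
  · intro x hx
    rw [interior_Ici] at hx
    exact ((hasDerivAt_Vf a hx).sub (hasDerivAt_Vf b hx)).hasDerivWithinAt
  · intro x hx
    rw [interior_Ici] at hx
    have h1 : (0:ℝ) < Qf a x ^ 2 := pow_pos (Qf_pos hx) 2
    have h2 : Qf a x ^ 2 ≤ Qf b x ^ 2 := by
      have := Qf_le_Qf h hx
      nlinarith [Qf_pos (c := a) hx]
    have := inv_anti₀ h1 h2
    linarith


lemma midpoint_of_concave {W : ℝ → ℝ} (conc : ConcaveOn ℝ (Set.Ici 0) W)
    (heven : ∀ s : ℝ, W |s| = W s) (hW0 : W 0 = 0)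
    (hWnp : ∀ s : ℝ, 0 ≤ s → W s ≤ 0) (p q : ℝ) :
    W p + W q ≤ 2 * W ((p + q) / 2) := by
  have hP : (0:ℝ) ≤ |p| := abs_nonneg _
  have hQ : (0:ℝ) ≤ |q| := abs_nonneg _
  have hM : (0:ℝ) ≤ |(p + q) / 2| := abs_nonneg _
  have hMN : |(p + q) / 2| ≤ (|p| + |q|) / 2 := by
    rw [abs_div]
    have := abs_add_le p q
    rw [show |(2:ℝ)| = 2 by norm_num]
    linarith
  have step1 : W |p| + W |q| ≤ 2 * W ((|p| + |q|) / 2) := by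
    have h2 := conc.2 (Set.mem_Ici.2 hP) (Set.mem_Ici.2 hQ)
      (by norm_num : (0:ℝ) ≤ 1/2) (by norm_num : (0:ℝ) ≤ 1/2) (by norm_num)
    simp only [smul_eq_mul] at h2
    rw [show (1:ℝ)/2 * |p| + 1/2 * |q| = (|p| + |q|) / 2 by ring] at h2
    linarith
  have step2 : W ((|p| + |q|) / 2) ≤ W |(p + q) / 2| := by
    set N : ℝ := (|p| + |q|) / 2 with hN
    rcases eq_or_lt_of_le (by positivity : (0:ℝ) ≤ N) with hN0 | hN0
    · have hM0 : |(p + q) / 2| = 0 := le_antisymm (hN0 ▸ hMN) hM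
      rw [hM0, ← hN0]
    · have hθ0 : 0 ≤ |(p + q) / 2| / N := div_nonneg hM hN0.le
      have hθ1 : |(p + q) / 2| / N ≤ 1 := (div_le_one hN0).2 hMN
      have h2 := conc.2 (Set.self_mem_Ici) (Set.mem_Ici.2 hN0.le)
        (by linarith : (0:ℝ) ≤ 1 - |(p + q) / 2| / N) hθ0 (by ring)
      simp only [smul_eq_mul] at h2
      rw [show (1 - |(p + q) / 2| / N) * 0 + |(p + q) / 2| / N * N = |(p + q) / 2| by
        field_simp; ring, hW0] at h2
      have hWN : W N ≤ 0 := hWnp N (by positivity)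
      nlinarith [h2, hθ1, hWN]
  calc W p + W q = W |p| + W |q| := by rw [heven p, heven q]
  _ ≤ 2 * W ((|p| + |q|) / 2) := step1
  _ ≤ 2 * W |(p + q) / 2| := by linarith
  _ = 2 * W ((p + q) / 2) := by rw [heven]


lemma gAux_exp (c s : ℝ) : gAux c (Real.exp s) = Real.exp (c * s / 2) * Qf c s := by
  rcases eq_or_ne c 0 with rfl | hc
  · simp [gAux, Qf]
  · simp only [gAux, if_neg hc, Qf, if_neg hc]
    rw [Real.rpow_def_of_pos (Real.exp_pos s), Real.log_exp, Real.sinh_eq,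
      show s * c = c * s by ring]
    have key : Real.exp (c * s / 2) * (Real.exp (c * s / 2) - Real.exp (-(c * s / 2)))
        = Real.exp (c * s) - 1 := by
      rw [mul_sub, ← Real.exp_add, ← Real.exp_add]
      norm_num
    field_simp
    ring_nf
    ring_nf at key
    linarith [key]

lemma uab_exp (a b s : ℝ) :
    uab a b (Real.exp s) = Real.exp ((a - b) * s / 2) * (if s = 0 then 1 else Qf a s / Qf b s) := by
  rcases eq_or_ne s 0 with rfl | hs
  · simp [uab]
  · rw [if_neg hs, uab, if_neg (by rwa [Real.exp_eq_one_iff] : ¬ Real.exp s = 1),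
      gAux_exp, gAux_exp, mul_div_mul_comm, ← Real.exp_sub]
    ring_nf

lemma Rf_eq (a b s : ℝ) :
    (if s = 0 then 1 else Qf a s / Qf b s)
      = Real.exp (Real.log (Qf a s) - Real.log (Qf b s)) := by
  rcases eq_or_ne s 0 with rfl | hs
  · simp
  · rw [if_neg hs]
    rcases lt_or_gt_of_ne hs with hneg | hpos
    · have ha : Qf a s = -Qf a (-s) := by rw [Qf_neg, neg_neg]
      have hb : Qf b s = -Qf b (-s) := by rw [Qf_neg, neg_neg]
      have hns : 0 < -s := by linarith
      rw [ha, hb, neg_div_neg_eq, Real.log_neg_eq_log, Real.log_neg_eq_log,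
        Real.exp_sub, Real.exp_log (Qf_pos hns), Real.exp_log (Qf_pos hns)]
    · rw [Real.exp_sub, Real.exp_log (Qf_pos hpos), Real.exp_log (Qf_pos hpos)]

lemma W_abs (a b s : ℝ) :
    Real.log (Qf a |s|) - Real.log (Qf b |s|) = Real.log (Qf a s) - Real.log (Qf b s) := by
  rcases le_or_gt 0 s with hs | hs
  · rw [abs_of_nonneg hs]
  · rw [abs_of_neg hs, Qf_neg, Qf_neg, Real.log_neg_eq_log, Real.log_neg_eq_log]

lemma W_midpoint {a b : ℝ} (h : |a| ≤ |b|) (p q : ℝ) :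
    (Real.log (Qf a p) - Real.log (Qf b p)) + (Real.log (Qf a q) - Real.log (Qf b q))
      ≤ 2 * (Real.log (Qf a ((p + q) / 2)) - Real.log (Qf b ((p + q) / 2))) := by
  exact midpoint_of_concave (W_concaveOn h) (fun s => W_abs a b s) (by simp)
    (fun s hs => W_nonpos h hs) p q

/-- For `(a,b) ∈ Γ`, the function `u_{a,b}` is geometrically concave iff `|a| ≤ |b|`. -/
theorem uab_geomConcave_iff (a b : ℝ) (hΓ : (a, b) ∈ GammaRegion) :
    (∀ x y : ℝ, 0 < x → 0 < y →
      Real.sqrt (uab a b x * uab a b y) ≤ uab a b (Real.sqrt (x * y))) ↔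
    |a| ≤ |b| := by
  constructor
  · intro hyp
    by_contra hab
    push_neg at hab
    have h2 := hyp (Real.exp 2) (Real.exp (-2)) (Real.exp_pos _) (Real.exp_pos _)
    rw [show Real.sqrt (Real.exp 2 * Real.exp (-2)) = 1 by
      rw [← Real.exp_add, show (2:ℝ) + -2 = 0 by norm_num, Real.exp_zero, Real.sqrt_one],
      show uab a b 1 = 1 from if_pos rfl] at h2
    have e1 := uab_exp a b 2
    have e2 := uab_exp a b (-2)
    rw [if_neg (two_ne_zero)] at e1
    rw [if_neg (by norm_num : (-2:ℝ) ≠ 0), Qf_neg, Qf_neg, neg_div_neg_eq] at e2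
    have hprod : uab a b (Real.exp 2) * uab a b (Real.exp (-2)) = (Qf a 2 / Qf b 2) ^ 2 := by
      rw [e1, e2,
        show Real.exp ((a-b)*2/2) * (Qf a 2 / Qf b 2) * (Real.exp ((a-b)*(-2)/2) * (Qf a 2 / Qf b 2))
          = (Real.exp ((a-b)*2/2) * Real.exp ((a-b)*(-2)/2)) * (Qf a 2 / Qf b 2)^2 by ring,
        ← Real.exp_add, show (a-b)*2/2 + (a-b)*(-2)/2 = (0:ℝ) by ring, Real.exp_zero, one_mul]
    have hrpos : 0 < Qf b 2 := Qf_pos two_pos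
    have hrgt : 1 < Qf a 2 / Qf b 2 := (one_lt_div hrpos).2 (Qf_lt_Qf hab two_pos)
    rw [hprod, Real.sqrt_sq (by linarith : (0:ℝ) ≤ Qf a 2 / Qf b 2)] at h2
    linarith
  · intro h x y hx hy
    set p := Real.log x with hp
    set q := Real.log y with hq
    have hxe : x = Real.exp p := (Real.exp_log hx).symm
    have hye : y = Real.exp q := (Real.exp_log hy).symm
    rw [hxe, hye]
    have hsq : Real.sqrt (Real.exp p * Real.exp q) = Real.exp ((p + q) / 2) := by
      have h1 : Real.exp (p + q) = Real.exp ((p + q) / 2) ^ 2 := by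
        rw [sq, ← Real.exp_add]; congr 1; ring
      rw [← Real.exp_add, h1, Real.sqrt_sq (Real.exp_pos _).le]
    rw [hsq, uab_exp a b p, uab_exp a b q, uab_exp a b ((p + q) / 2),
      Rf_eq, Rf_eq, Rf_eq, ← Real.exp_add, ← Real.exp_add, ← Real.exp_add, ← Real.exp_add]
    have key := W_midpoint h p q
    have hT : Real.exp ((a - b) * p / 2 + (Real.log (Qf a p) - Real.log (Qf b p)) +
        ((a - b) * q / 2 + (Real.log (Qf a q) - Real.log (Qf b q))))
        = Real.exp (((a - b) * p / 2 + (Real.log (Qf a p) - Real.log (Qf b p)) +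
        ((a - b) * q / 2 + (Real.log (Qf a q) - Real.log (Qf b q)))) / 2) ^ 2 := by
      rw [sq, ← Real.exp_add]; congr 1; ring
    rw [hT, Real.sqrt_sq (Real.exp_pos _).le, Real.exp_le_exp]
    linarith
end

section
/- For α ∈ [−2,2] define the Stolarsky function s_α : (0,∞) → (0,∞) by s_α(t) = ((t^α − 1)/(α·(t − 1)))^{1/(α−1)} for α ∉ {0,1} and t ≠ 1, s_0(t) = (t − 1)/log t for t ≠ 1, s_1(t) = e^{−1}·t^{t/(t−1)} for t ≠ 1, and s_α(1) = 1. Then s_α is geometrically convex if and only if α ∈ [−1,2], and s_α is geometrically concave if and only if α ∈ [−2,−1]. -/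
open Real Set

noncomputable def rr (y : ℝ) : ℝ := Real.log (Real.sinh y / y)
noncomputable def r1 (y : ℝ) : ℝ := Real.cosh y / Real.sinh y - 1/y
noncomputable def r2 (y : ℝ) : ℝ := 1/y^2 - 1/(Real.sinh y)^2
noncomputable def r3 (y : ℝ) : ℝ := -2/y^3 + 2*Real.cosh y/(Real.sinh y)^3

lemma sinh_ne_zero' {y : ℝ} (hy : y ≠ 0) : Real.sinh y ≠ 0 := by
  simpa [Real.sinh_eq_zero] using hy

lemma continuousAt_of_punctured {f : ℝ → ℝ} {a : ℝ}
    (h : Filter.Tendsto f (nhdsWithin a {a}ᶜ) (nhds (f a))) : ContinuousAt f a := by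
  have := h.sup (tendsto_pure_nhds f a)
  rwa [nhdsNE_sup_pure] at this



lemma sinh_div_self_pos {y : ℝ} (hy : y ≠ 0) : 0 < Real.sinh y / y := by
  rcases hy.lt_or_gt with h | h
  · exact div_pos_of_neg_of_neg (by simpa [Real.sinh_neg_iff]) h
  · exact div_pos (by simpa [Real.sinh_pos_iff]) h

lemma rr_even (y : ℝ) : rr (-y) = rr y := by simp [rr, Real.sinh_neg, neg_div_neg_eq]

lemma r1_odd (y : ℝ) : r1 (-y) = - r1 y := by
  simp [r1, Real.sinh_neg, Real.cosh_neg, div_neg, neg_div]; ring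

lemma r2_even (y : ℝ) : r2 (-y) = r2 y := by
  simp [r2, Real.sinh_neg]

lemma rr_zero : rr 0 = 0 := by simp [rr]
lemma r1_zero : r1 0 = 0 := by simp [r1]

lemma rr_nonneg {y : ℝ} (hy : 0 ≤ y) : 0 ≤ rr y := by
  rcases eq_or_lt_of_le hy with rfl | h
  · simp [rr]
  · exact Real.log_nonneg ((le_div_iff₀ h).2 (by simpa using (Real.self_lt_sinh_iff.2 h).le))

-- key inequality: superadditivity of sinh
lemma sinh_mul_le {b c : ℝ} (hb : 1 ≤ b) (hc : 0 ≤ c) : b * Real.sinh c ≤ Real.sinh (b*c) := by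
  have hmono : MonotoneOn (fun c => Real.sinh (b*c) - b * Real.sinh c) (Ici 0) := by
    apply monotoneOn_of_hasDerivWithinAt_nonneg (convex_Ici 0)
      (by fun_prop)
      (f' := fun c => b * Real.cosh (b*c) - b * Real.cosh c)
    · intro x hx
      exact (((Real.hasDerivAt_sinh _).comp x ((hasDerivAt_id x).const_mul b)).sub
        (((Real.hasDerivAt_sinh x)).const_mul b)).hasDerivWithinAt.congr_deriv
        (by simp only [id_eq]; ring)
    · intro x hx
      rw [interior_Ici] at hx
      have hx' : (0:ℝ) < x := hx
      have : Real.cosh x ≤ Real.cosh (b*x) := by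
        rw [Real.cosh_le_cosh]
        rw [abs_of_pos hx', abs_of_pos (by nlinarith : (0:ℝ) < b*x)]
        nlinarith
      nlinarith [this]
  have := hmono (self_mem_Ici) hc hc
  simpa using this

lemma sinh_mul_lt {b c : ℝ} (hb : 1 < b) (hc : 0 < c) : b * Real.sinh c < Real.sinh (b*c) := by
  have hmono : StrictMonoOn (fun c => Real.sinh (b*c) - b * Real.sinh c) (Ici 0) := by
    apply strictMonoOn_of_hasDerivWithinAt_pos (convex_Ici 0) (by fun_prop)
      (f' := fun c => b * Real.cosh (b*c) - b * Real.cosh c)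
    · intro x hx
      exact (((Real.hasDerivAt_sinh _).comp x ((hasDerivAt_id x).const_mul b)).sub
        (((Real.hasDerivAt_sinh x)).const_mul b)).hasDerivWithinAt.congr_deriv
        (by simp only [id_eq]; ring)
    · intro x hx
      rw [interior_Ici] at hx
      have hx' : (0:ℝ) < x := hx
      have : Real.cosh x < Real.cosh (b*x) := by
        rw [Real.cosh_lt_cosh, abs_of_pos hx', abs_of_pos (by nlinarith : (0:ℝ) < b*x)]
        nlinarith
      nlinarith [this]
  have := hmono (self_mem_Ici) (le_of_lt hc : (0:ℝ) ≤ c) hc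
  simp only [mul_zero, Real.sinh_zero, sub_zero, sub_self] at this
  linarith [this]

lemma mul_sinh_le {b c : ℝ} (hb0 : 0 ≤ b) (hb : b ≤ 1) (hc : 0 ≤ c) :
    Real.sinh (b*c) ≤ b * Real.sinh c := by
  rcases eq_or_lt_of_le hb0 with rfl | hb0
  · simp
  · have := sinh_mul_le (b := b⁻¹) (c := b*c)
      ((one_le_inv₀ hb0).2 hb) (by positivity)
    rw [inv_mul_cancel_left₀ hb0.ne'] at this
    calc Real.sinh (b*c) = b * (b⁻¹ * Real.sinh (b*c)) := by field_simp
    _ ≤ b * Real.sinh c := mul_le_mul_of_nonneg_left this hb0.le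

lemma mul_sinh_lt {b c : ℝ} (hb0 : 0 < b) (hb : b < 1) (hc : 0 < c) :
    Real.sinh (b*c) < b * Real.sinh c := by
  have := sinh_mul_lt (b := b⁻¹) (c := b*c) ((one_lt_inv₀ hb0).2 hb) (by positivity)
  rw [inv_mul_cancel_left₀ hb0.ne'] at this
  calc Real.sinh (b*c) = b * (b⁻¹ * Real.sinh (b*c)) := by field_simp
  _ < b * Real.sinh c := (mul_lt_mul_iff_right₀ hb0).2 this

lemma sinh_le_mul_cosh {y : ℝ} (hy : 0 ≤ y) : Real.sinh y ≤ y * Real.cosh y := by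
  have hmono : MonotoneOn (fun y => y * Real.cosh y - Real.sinh y) (Ici 0) := by
    apply monotoneOn_of_hasDerivWithinAt_nonneg (convex_Ici 0) (by fun_prop)
      (f' := fun y => y * Real.sinh y)
    · intro x hx
      exact (((hasDerivAt_id x).mul (Real.hasDerivAt_cosh x)).sub
        (Real.hasDerivAt_sinh x)).hasDerivWithinAt.congr_deriv (by simp only [id_eq]; ring)
    · intro x hx
      rw [interior_Ici] at hx
      have hx' : (0:ℝ) < x := hx
      have := Real.sinh_pos_iff.2 hx'
      nlinarith
  have := hmono self_mem_Ici hy hy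
  simpa using this

lemma sinh_lt_mul_cosh {y : ℝ} (hy : 0 < y) : Real.sinh y < y * Real.cosh y := by
  have hmono : StrictMonoOn (fun y => y * Real.cosh y - Real.sinh y) (Ici 0) := by
    apply strictMonoOn_of_hasDerivWithinAt_pos (convex_Ici 0) (by fun_prop)
      (f' := fun y => y * Real.sinh y)
    · intro x hx
      exact (((hasDerivAt_id x).mul (Real.hasDerivAt_cosh x)).sub
        (Real.hasDerivAt_sinh x)).hasDerivWithinAt.congr_deriv (by simp only [id_eq]; ring)
    · intro x hx
      rw [interior_Ici] at hx
      have hx' : (0:ℝ) < x := hx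
      have := Real.sinh_pos_iff.2 hx'
      nlinarith
  have := hmono self_mem_Ici hy.le hy
  simp only [mul_zero, zero_mul, Real.sinh_zero, sub_zero, sub_self] at this
  linarith

lemma hasDerivAt_rr {y : ℝ} (hy : y ≠ 0) : HasDerivAt rr (r1 y) y := by
  have hs := sinh_ne_zero' hy
  have h1 : HasDerivAt (fun y => Real.sinh y / y)
      ((Real.cosh y * y - Real.sinh y * 1) / y^2) y :=
    (Real.hasDerivAt_sinh y).div (hasDerivAt_id y) hy
  have h2 := h1.log (ne_of_gt (sinh_div_self_pos hy))
  convert h2 using 1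
  · rfl
  rw [r1]
  field_simp

lemma hasDerivAt_r1 {y : ℝ} (hy : y ≠ 0) : HasDerivAt r1 (r2 y) y := by
  have hs := sinh_ne_zero' hy
  have h1 : HasDerivAt (fun y => Real.cosh y / Real.sinh y - 1/y)
      ((Real.sinh y * Real.sinh y - Real.cosh y * Real.cosh y) / (Real.sinh y)^2
        - (0 * y - 1 * 1)/y^2) y :=
    ((Real.hasDerivAt_cosh y).div (Real.hasDerivAt_sinh y) hs).sub
      ((hasDerivAt_const y 1).div (hasDerivAt_id y) hy)
  convert h1 using 1
  · rfl
  rw [r2]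
  have hc : Real.sinh y * Real.sinh y - Real.cosh y * Real.cosh y = -1 := by
    nlinarith [Real.cosh_sq_sub_sinh_sq y]
  rw [hc]
  field_simp
  ring

lemma hasDerivAt_r2 {y : ℝ} (hy : y ≠ 0) : HasDerivAt r2 (r3 y) y := by
  have hs := sinh_ne_zero' hy
  have h1 : HasDerivAt (fun y => 1/y^2 - 1/(Real.sinh y)^2)
      ((0 * y^2 - 1 * (2*y))/(y^2)^2 -
       (0 * (Real.sinh y)^2 - 1 * (2 * Real.sinh y * Real.cosh y))/((Real.sinh y)^2)^2) y := by
    apply HasDerivAt.sub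
    · exact (hasDerivAt_const y 1).div ((hasDerivAt_pow 2 y).congr_deriv (by ring)) (by positivity)
    · exact (hasDerivAt_const y 1).div
        (((Real.hasDerivAt_sinh y).pow 2).congr_deriv (by ring)) (by positivity)
  convert h1 using 1
  · rfl
  rw [r3]
  field_simp
  ring

lemma continuous_rr : Continuous rr := by
  rw [continuous_iff_continuousAt]
  intro y
  rcases eq_or_ne y 0 with rfl | hy
  · have hslope : Filter.Tendsto (fun y : ℝ => Real.sinh y / y) (nhdsWithin 0 {0}ᶜ) (nhds 1) := by
      have := hasDerivAt_iff_tendsto_slope.1 (Real.hasDerivAt_sinh 0)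
      rw [Real.cosh_zero] at this
      apply this.congr
      intro x
      simp only [slope, Real.sinh_zero, sub_zero, vsub_eq_sub]
      exact (div_eq_inv_mul _ _).symm
    have hlog : Filter.Tendsto rr (nhdsWithin 0 {0}ᶜ) (nhds 0) := by
      have := (Real.continuousAt_log (one_ne_zero)).tendsto.comp hslope
      rw [Real.log_one] at this; exact this
    have hrr0 : rr 0 = 0 := by simp [rr]
    have hpure : Filter.Tendsto rr (pure 0) (nhds 0) := by
      simpa [hrr0] using tendsto_pure_nhds rr 0
    have hsum := hlog.sup hpure
    rw [nhdsNE_sup_pure] at hsum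
    simpa [ContinuousAt, hrr0] using hsum
  · exact ((Real.continuous_sinh.continuousAt).div continuousAt_id hy).log
      (ne_of_gt (sinh_div_self_pos hy))



-- scaling lemmas for rr
lemma rr_scale_le {b c : ℝ} (hb : 1 ≤ b) (hc : 0 < c) : rr c ≤ rr (b*c) := by
  have hbc : 0 < b*c := by nlinarith
  apply Real.log_le_log (sinh_div_self_pos hc.ne')
  rw [div_le_div_iff₀ hc hbc]
  have := sinh_mul_le hb hc.le
  have hs := Real.sinh_pos_iff.2 hc
  nlinarith

lemma rr_scale_lt {b c : ℝ} (hb : 1 < b) (hc : 0 < c) : rr c < rr (b*c) := by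
  have hbc : 0 < b*c := by nlinarith
  apply Real.log_lt_log (sinh_div_self_pos hc.ne')
  rw [div_lt_div_iff₀ hc hbc]
  have := sinh_mul_lt hb hc
  have hs := Real.sinh_pos_iff.2 hc
  nlinarith

lemma rr_scale_ge {b c : ℝ} (hb0 : 0 ≤ b) (hb : b ≤ 1) (hc : 0 < c) : rr (b*c) ≤ rr c := by
  rcases eq_or_lt_of_le hb0 with rfl | hb0
  · simpa [rr] using rr_nonneg hc.le
  · have hbc : 0 < b*c := by positivity
    apply Real.log_le_log (sinh_div_self_pos hbc.ne')
    rw [div_le_div_iff₀ hbc hc]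
    have := mul_sinh_le hb0.le hb hc.le
    have hs := Real.sinh_pos_iff.2 hc
    nlinarith

lemma rr_scale_gt {b c : ℝ} (hb0 : 0 < b) (hb : b < 1) (hc : 0 < c) : rr (b*c) < rr c := by
  have hbc : 0 < b*c := by positivity
  apply Real.log_lt_log (sinh_div_self_pos hbc.ne')
  rw [div_lt_div_iff₀ hbc hc]
  have := mul_sinh_lt hb0 hb hc
  have hs := Real.sinh_pos_iff.2 hc
  nlinarith

lemma rr_pos {c : ℝ} (hc : 0 < c) : 0 < rr c := by
  apply Real.log_pos
  rw [lt_div_iff₀ hc]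
  simpa using Real.self_lt_sinh_iff.2 hc

lemma rr_abs (α c : ℝ) : rr (α*c) = rr (|α| * c) := by
  rcases le_or_gt 0 α with h | h
  · rw [abs_of_nonneg h]
  · rw [abs_of_neg h, ← rr_even (α*c)]; ring_nf

lemma r1_nonneg {y : ℝ} (hy : 0 ≤ y) : 0 ≤ r1 y := by
  rcases eq_or_lt_of_le hy with rfl | hy
  · simp [r1]
  · have hs := Real.sinh_pos_iff.2 hy
    rw [r1, sub_nonneg, div_le_div_iff₀ hy hs]
    simpa [mul_comm] using sinh_le_mul_cosh hy.le

lemma r1_pos {y : ℝ} (hy : 0 < y) : 0 < r1 y := by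
  have hs := Real.sinh_pos_iff.2 hy
  rw [r1, sub_pos, div_lt_div_iff₀ hy hs]
  simpa [mul_comm] using sinh_lt_mul_cosh hy

lemma r2_nonneg {c : ℝ} (hc : 0 < c) : 0 ≤ r2 c := by
  have hs := Real.sinh_pos_iff.2 hc
  have h := Real.self_lt_sinh_iff.2 hc
  rw [r2, sub_nonneg, div_le_div_iff₀ (by positivity) (by positivity)]
  nlinarith

lemma r2_scale_le {b c : ℝ} (hb : 1 ≤ b) (hc : 0 < c) : r2 c ≤ b^2 * r2 (b*c) := by
  have hs := Real.sinh_pos_iff.2 hc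
  have hbc : 0 < b*c := by nlinarith
  have hsb := Real.sinh_pos_iff.2 hbc
  have key := sinh_mul_le hb hc.le
  have hb0 : (0:ℝ) < b := by linarith
  rw [r2, r2]
  have e1 : b^2 * (1/(b*c)^2 - 1/(Real.sinh (b*c))^2) = 1/c^2 - b^2/(Real.sinh (b*c))^2 := by
    field_simp
  rw [e1]
  have : b^2/(Real.sinh (b*c))^2 ≤ 1/(Real.sinh c)^2 := by
    rw [div_le_div_iff₀ (by positivity) (by positivity)]
    nlinarith [mul_le_mul key key (by positivity : (0:ℝ) ≤ b * Real.sinh c) hsb.le]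
  linarith

lemma r2_scale_ge {b c : ℝ} (hb0 : 0 < b) (hb : b ≤ 1) (hc : 0 < c) : b^2 * r2 (b*c) ≤ r2 c := by
  have hs := Real.sinh_pos_iff.2 hc
  have hbc : 0 < b*c := by positivity
  have hsb := Real.sinh_pos_iff.2 hbc
  have key := mul_sinh_le hb0.le hb hc.le
  rw [r2, r2]
  have e1 : b^2 * (1/(b*c)^2 - 1/(Real.sinh (b*c))^2) = 1/c^2 - b^2/(Real.sinh (b*c))^2 := by
    field_simp
  rw [e1]
  have : 1/(Real.sinh c)^2 ≤ b^2/(Real.sinh (b*c))^2 := by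
    rw [div_le_div_iff₀ (by positivity) (by positivity)]
    nlinarith [mul_le_mul key key hsb.le (by positivity : (0:ℝ) ≤ b * Real.sinh c)]
  linarith



noncomputable def hh (α u : ℝ) : ℝ :=
  if α = 1 then u/2 * r1 (u/2) else (rr (α*(u/2)) - rr (u/2))/(α-1)

noncomputable def hd1 (α u : ℝ) : ℝ :=
  if α = 1 then (1/2) * r1 (u/2) + (u/4) * r2 (u/2)
  else ((α/2) * r1 (α*(u/2)) - (1/2) * r1 (u/2))/(α-1)

noncomputable def hd2 (α u : ℝ) : ℝ :=
  if α = 1 then (1/2) * r2 (u/2) + (u/8) * r3 (u/2)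
  else ((α/2)^2 * r2 (α*(u/2)) - (1/4) * r2 (u/2))/(α-1)

lemma hh_even (α u : ℝ) : hh α (-u) = hh α u := by
  unfold hh
  split
  · rw [show (-u)/2 = -(u/2) by ring, r1_odd]; ring
  · rw [show α * (-u/2) = -(α*(u/2)) by ring, show (-u)/2 = -(u/2) by ring, rr_even, rr_even]

lemma hh_zero (α : ℝ) : hh α 0 = 0 := by
  unfold hh; split <;> simp [rr_zero]

lemma hh_nonneg {α : ℝ} (hα : α ∈ Icc (-1:ℝ) 2) {u : ℝ} (hu : 0 ≤ u) : 0 ≤ hh α u := by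
  rcases eq_or_lt_of_le hu with rfl | hu
  · rw [hh_zero]
  have hc : 0 < u/2 := by linarith
  unfold hh
  split
  · have := r1_nonneg hc.le; positivity
  · rename_i hα1
    rcases lt_or_gt_of_ne hα1 with h1 | h1
    · apply div_nonneg_of_nonpos _ (by linarith)
      rw [rr_abs, sub_nonpos]
      exact rr_scale_ge (abs_nonneg α) (abs_le.2 ⟨hα.1, le_of_lt h1⟩) hc
    · apply div_nonneg _ (by linarith)
      rw [sub_nonneg]
      exact rr_scale_le (le_of_lt h1) hc

lemma hh_nonpos {α : ℝ} (hα : α ∈ Icc (-2:ℝ) (-1)) {u : ℝ} (hu : 0 ≤ u) : hh α u ≤ 0 := by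
  rcases eq_or_lt_of_le hu with rfl | hu
  · rw [hh_zero]
  have hc : 0 < u/2 := by linarith
  have hα1 : α ≠ 1 := by intro h; rw [h] at hα; exact absurd hα.2 (by norm_num)
  unfold hh
  rw [if_neg hα1]
  apply div_nonpos_of_nonneg_of_nonpos _ (by have := hα.2; linarith)
  rw [rr_abs, sub_nonneg]
  exact rr_scale_le (by rw [le_abs]; right; linarith [hα.2]) hc

lemma hh_neg {α : ℝ} (h : α < -1) {u : ℝ} (hu : 0 < u) : hh α u < 0 := by
  have hc : 0 < u/2 := by linarith
  have hα1 : α ≠ 1 := by linarith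
  unfold hh
  rw [if_neg hα1]
  apply div_neg_of_pos_of_neg _ (by linarith)
  rw [rr_abs, sub_pos]
  exact rr_scale_lt (by rw [lt_abs]; right; linarith) hc

lemma hh_pos {α : ℝ} (h1 : -1 < α) {u : ℝ} (hu : 0 < u) : 0 < hh α u := by
  have hc : 0 < u/2 := by linarith
  unfold hh
  split
  · have := r1_pos hc; positivity
  · rename_i hα1
    rcases lt_or_gt_of_ne hα1 with hlt | hgt
    · apply div_pos_of_neg_of_neg _ (by linarith)
      rw [rr_abs, sub_neg]
      rcases eq_or_ne α 0 with rfl | hα0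
      · simpa [rr_zero] using rr_pos hc
      · exact rr_scale_gt (abs_pos.2 hα0) (abs_lt.2 ⟨h1, hlt⟩) hc
    · apply div_pos _ (by linarith)
      rw [sub_pos]
      exact rr_scale_lt hgt hc

lemma hasDerivAt_hh {α u : ℝ} (hu : u ≠ 0) : HasDerivAt (hh α) (hd1 α u) u := by
  have hu2 : u/2 ≠ 0 := by intro h; exact hu (by linarith)
  have hhalf : HasDerivAt (fun u : ℝ => u/2) (1/2) u := (hasDerivAt_id u).div_const 2
  rcases eq_or_ne α 1 with rfl | hα1
  · have : hh 1 = fun u => u/2 * r1 (u/2) := by funext u; simp [hh]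
    rw [this, hd1, if_pos rfl]
    have := hhalf.mul ((hasDerivAt_r1 hu2).comp u hhalf)
    refine this.congr_deriv ?_
    simp only [Function.comp_apply]
    ring
  · have : hh α = fun u => (rr (α*(u/2)) - rr (u/2))/(α-1) := by
      funext u; simp [hh, hα1]
    rw [this, hd1, if_neg hα1]
    rcases eq_or_ne α 0 with rfl | hα0
    · have hconst : (fun u : ℝ => (rr (0*(u/2)) - rr (u/2))/(0-1)) = fun u => rr (u/2) := by
        funext u; simp [rr_zero]
      rw [hconst]
      have := (hasDerivAt_rr hu2).comp u hhalf
      refine this.congr_deriv ?_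
      try simp only [Function.comp_apply]
      simp only [r1_zero, zero_mul, mul_zero]
      norm_num
      try ring
    · have hau : α*(u/2) ≠ 0 := by
        intro h; rcases mul_eq_zero.1 h with h | h; exact hα0 h; exact hu2 h
      have hmul : HasDerivAt (fun u : ℝ => α*(u/2)) (α/2) u := by
        have := hhalf.const_mul α
        refine this.congr_deriv ?_; ring
      have := (((hasDerivAt_rr hau).comp u hmul).sub
        ((hasDerivAt_rr hu2).comp u hhalf)).div_const (α-1)
      refine this.congr_deriv ?_
      try simp only [Function.comp_apply]
      ring

lemma continuous_hh (α : ℝ) : Continuous (hh α) := by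
  rw [continuous_iff_continuousAt]
  intro u
  rcases eq_or_ne u 0 with rfl | hu
  · apply continuousAt_of_punctured
    rw [hh_zero]
    rcases eq_or_ne α 1 with rfl | hα1
    · have hhalf : Filter.Tendsto (fun u : ℝ => u/2) (nhdsWithin 0 {0}ᶜ) (nhdsWithin 0 {0}ᶜ) := by
        rw [tendsto_nhdsWithin_iff]
        constructor
        · have h2 : Filter.Tendsto (fun u : ℝ => u/2) (nhds 0) (nhds 0) := by
            simpa using (Continuous.tendsto (by fun_prop : Continuous (fun u : ℝ => u/2)) 0)
          exact h2.mono_left nhdsWithin_le_nhds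
        · filter_upwards [eventually_mem_nhdsWithin] with x hx
          simp only [mem_compl_iff, mem_singleton_iff] at hx ⊢
          intro h; exact hx (by linarith)
      have hslope : Filter.Tendsto (fun y : ℝ => Real.sinh y / y) (nhdsWithin 0 {0}ᶜ) (nhds 1) := by
        have := hasDerivAt_iff_tendsto_slope.1 (Real.hasDerivAt_sinh 0)
        rw [Real.cosh_zero] at this
        apply this.congr
        intro x
        simp only [slope, Real.sinh_zero, sub_zero, vsub_eq_sub]
        exact (div_eq_inv_mul _ _).symm
      have hcosh : Filter.Tendsto (fun u : ℝ => Real.cosh (u/2)) (nhdsWithin 0 {0}ᶜ) (nhds 1) := by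
        have h2 : Filter.Tendsto (fun u : ℝ => Real.cosh (u/2)) (nhds 0) (nhds 1) := by
          have := Continuous.tendsto (by fun_prop : Continuous (fun u : ℝ => Real.cosh (u/2))) 0
          simpa using this
        exact h2.mono_left nhdsWithin_le_nhds
      have htend : Filter.Tendsto (fun u : ℝ => Real.cosh (u/2) / (Real.sinh (u/2) / (u/2)) - 1)
          (nhdsWithin 0 {0}ᶜ) (nhds 0) := by
        have := (hcosh.div (hslope.comp hhalf) one_ne_zero).sub_const 1
        simpa using this
      refine Filter.Tendsto.congr' ?_ htend
      filter_upwards [eventually_mem_nhdsWithin] with x hx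
      simp only [mem_compl_iff, mem_singleton_iff] at hx
      have hx2 : x/2 ≠ 0 := by intro h; exact hx (by linarith)
      have hs := sinh_ne_zero' hx2
      simp only [hh, ↓reduceIte, r1]
      field_simp
    · have hcont : Continuous (fun u : ℝ => (rr (α*(u/2)) - rr (u/2))/(α-1)) := by
        apply Continuous.div_const
        exact ((continuous_rr.comp (by fun_prop)).sub (continuous_rr.comp (by fun_prop)))
      have h2 := (hcont.tendsto 0).mono_left (nhdsWithin_le_nhds (s := {(0:ℝ)}ᶜ))
      simp only [mul_zero, zero_div, rr_zero, sub_zero, sub_self] at h2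
      refine Filter.Tendsto.congr' ?_ (by simpa using h2)
      filter_upwards [] with x
      simp [hh, hα1]
  · exact (hasDerivAt_hh hu).continuousAt

lemma hasDerivAt_hd1 {α u : ℝ} (hu : u ≠ 0) : HasDerivAt (hd1 α) (hd2 α u) u := by
  have hu2 : u/2 ≠ 0 := by intro h; exact hu (by linarith)
  have hhalf : HasDerivAt (fun u : ℝ => u/2) (1/2) u := (hasDerivAt_id u).div_const 2
  rcases eq_or_ne α 1 with rfl | hα1
  · have : hd1 1 = fun u => (1/2) * r1 (u/2) + (u/4) * r2 (u/2) := by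
      funext u; simp [hd1]
    rw [this, hd2, if_pos rfl]
    have h1 := ((hasDerivAt_r1 hu2).comp u hhalf).const_mul (1/2:ℝ)
    have h2 := (((hasDerivAt_id u).div_const 4).mul ((hasDerivAt_r2 hu2).comp u hhalf))
    have := h1.add h2
    refine this.congr_deriv ?_
    simp only [Function.comp_apply, id_eq]
    ring
  · have : hd1 α = fun u => ((α/2) * r1 (α*(u/2)) - (1/2) * r1 (u/2))/(α-1) := by
      funext u; simp [hd1, hα1]
    rw [this, hd2, if_neg hα1]
    rcases eq_or_ne α 0 with rfl | hα0
    · have hconst : (fun u : ℝ => ((0/2) * r1 (0*(u/2)) - (1/2) * r1 (u/2))/(0-1))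
          = fun u => (1/2) * r1 (u/2) := by
        funext u; simp
      rw [hconst]
      have := ((hasDerivAt_r1 hu2).comp u hhalf).const_mul (1/2:ℝ)
      refine this.congr_deriv ?_
      try simp only [Function.comp_apply]
      simp only [abs_zero, zero_mul, mul_zero]
      norm_num
      try ring
    · have hau : α*(u/2) ≠ 0 := by
        intro h; rcases mul_eq_zero.1 h with h | h; exact hα0 h; exact hu2 h
      have hmul : HasDerivAt (fun u : ℝ => α*(u/2)) (α/2) u := by
        have := hhalf.const_mul α
        refine this.congr_deriv ?_; ring
      have := ((((hasDerivAt_r1 hau).comp u hmul).const_mul (α/2:ℝ)).sub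
        (((hasDerivAt_r1 hu2).comp u hhalf).const_mul (1/2:ℝ))).div_const (α-1)
      refine this.congr_deriv ?_
      try simp only [Function.comp_apply]
      ring

lemma hd2_nonneg {α : ℝ} (hα : α ∈ Icc (-1:ℝ) 2) {u : ℝ} (hu : 0 < u) : 0 ≤ hd2 α u := by
  have hc : 0 < u/2 := by linarith
  have hs := Real.sinh_pos_iff.2 hc
  unfold hd2
  split
  · -- α = 1 case: (1/2) r2 + (u/8) r3 = (y cosh y - sinh y)/(2 sinh y ^3) with y = u/2
    have key : (1/2) * r2 (u/2) + (u/8) * r3 (u/2)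
        = ((u/2) * Real.cosh (u/2) - Real.sinh (u/2)) / (2 * (Real.sinh (u/2))^3) := by
      rw [r2, r3]
      field_simp
      ring
    rw [key]
    apply div_nonneg _ (by positivity)
    have := sinh_le_mul_cosh hc.le
    linarith
  · rename_i hα1
    rcases lt_or_gt_of_ne hα1 with hlt | hgt
    · apply div_nonneg_of_nonpos _ (by linarith)
      rw [sub_nonpos]
      have he : (α/2)^2 * r2 (α*(u/2)) = (1/4) * (|α|^2 * r2 (|α| * (u/2))) := by
        rcases le_or_gt 0 α with h | h
        · rw [abs_of_nonneg h]; ring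
        · rw [abs_of_neg h, show -α*(u/2) = -(α*(u/2)) by ring, r2_even]; ring
      rw [he]
      rcases eq_or_ne α 0 with rfl | hα0
      · have h := r2_nonneg hc
        simp only [abs_zero]
        norm_num
        linarith
      · have := r2_scale_ge (abs_pos.2 hα0) (abs_le.2 ⟨hα.1, hlt.le⟩) hc
        linarith
    · apply div_nonneg _ (by linarith)
      rw [sub_nonneg]
      have := r2_scale_le hgt.le hc
      calc (1/4) * r2 (u/2) ≤ (1/4) * (α^2 * r2 (α*(u/2))) := by linarith
      _ = (α/2)^2 * r2 (α*(u/2)) := by ring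

lemma hd2_nonpos {α : ℝ} (hα : α ∈ Icc (-2:ℝ) (-1)) {u : ℝ} (hu : 0 < u) : hd2 α u ≤ 0 := by
  have hc : 0 < u/2 := by linarith
  have hα1 : α ≠ 1 := by intro h; rw [h] at hα; exact absurd hα.2 (by norm_num)
  unfold hd2
  rw [if_neg hα1]
  apply div_nonpos_of_nonneg_of_nonpos _ (by have := hα.2; linarith)
  rw [sub_nonneg]
  have he : (α/2)^2 * r2 (α*(u/2)) = (1/4) * (|α|^2 * r2 (|α| * (u/2))) := by
    rcases le_or_gt 0 α with h | h
    · rw [abs_of_nonneg h]; ring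
    · rw [abs_of_neg h, show -α*(u/2) = -(α*(u/2)) by ring, r2_even]; ring
  rw [he]
  have := r2_scale_le (b := |α|) (by rw [le_abs]; right; linarith [hα.2]) hc
  linarith

lemma hh_convexOn {α : ℝ} (hα : α ∈ Icc (-1:ℝ) 2) : ConvexOn ℝ (Ici 0) (hh α) := by
  apply convexOn_of_hasDerivWithinAt2_nonneg (convex_Ici 0)
    (continuous_hh α).continuousOn (f' := hd1 α) (f'' := hd2 α)
  · intro x hx
    rw [interior_Ici] at hx
    exact (hasDerivAt_hh (ne_of_gt hx)).hasDerivWithinAt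
  · intro x hx
    rw [interior_Ici] at hx
    exact (hasDerivAt_hd1 (ne_of_gt hx)).hasDerivWithinAt
  · intro x hx
    rw [interior_Ici] at hx
    exact hd2_nonneg hα hx

lemma hh_concaveOn {α : ℝ} (hα : α ∈ Icc (-2:ℝ) (-1)) : ConcaveOn ℝ (Ici 0) (hh α) := by
  apply concaveOn_of_hasDerivWithinAt2_nonpos (convex_Ici 0)
    (continuous_hh α).continuousOn (f' := hd1 α) (f'' := hd2 α)
  · intro x hx
    rw [interior_Ici] at hx
    exact (hasDerivAt_hh (ne_of_gt hx)).hasDerivWithinAt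
  · intro x hx
    rw [interior_Ici] at hx
    exact (hasDerivAt_hd1 (ne_of_gt hx)).hasDerivWithinAt
  · intro x hx
    rw [interior_Ici] at hx
    exact hd2_nonpos hα hx



/-- The Stolarsky function `s_α(t) = S_α(1,t)` with its continuous extensions. -/
noncomputable def stolarsky (α t : ℝ) : ℝ :=
  if t = 1 then 1
  else if α = 0 then (t - 1) / Real.log t
  else if α = 1 then Real.exp (-1) * t ^ (t / (t - 1))
  else ((t ^ α - 1) / (α * (t - 1))) ^ (1 / (α - 1))

/- midpoint convexity transfer -/
lemma midpoint_le {H : ℝ → ℝ} (heven : ∀ u, H (-u) = H u) (hcvx : ConvexOn ℝ (Ici 0) H)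
    (h0 : H 0 = 0) (hnn : ∀ u : ℝ, 0 ≤ u → 0 ≤ H u) (u v : ℝ) :
    H ((u+v)/2) ≤ (H u + H v)/2 := by
  have habs : ∀ x : ℝ, H x = H |x| := by
    intro x
    rcases abs_cases x with ⟨h,_⟩ | ⟨h,_⟩
    · rw [h]
    · rw [h, heven]
  have hmono : ∀ a b : ℝ, 0 ≤ a → a ≤ b → H a ≤ H b := by
    intro a b ha hab
    rcases eq_or_lt_of_le (le_trans ha hab) with hb | hb
    · have ha0 : a = 0 := le_antisymm (hb ▸ hab) ha
      rw [ha0, ← hb]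
    · have hw1 : (0:ℝ) ≤ 1 - a/b := by
        rw [sub_nonneg, div_le_one hb]; exact hab
      have hw2 : (0:ℝ) ≤ a/b := div_nonneg ha hb.le
      have hcomb := hcvx.2 (self_mem_Ici (a := (0:ℝ))) (mem_Ici.2 hb.le) hw1 hw2 (by ring)
      have heq : (1 - a/b) • (0:ℝ) + (a/b) • b = a := by
        simp only [smul_eq_mul, mul_zero, zero_add]
        field_simp
      rw [heq] at hcomb
      simp only [smul_eq_mul, h0, mul_zero, zero_add] at hcomb
      calc H a ≤ a/b * H b := hcomb
        _ ≤ 1 * H b := by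
            apply mul_le_mul_of_nonneg_right _ (hnn b hb.le)
            rw [div_le_one hb]; exact hab
        _ = H b := one_mul _
  have key : H ((u+v)/2) ≤ H ((|u|+|v|)/2) := by
    rw [habs ((u+v)/2)]
    apply hmono _ _ (abs_nonneg _)
    rw [abs_div, abs_two]
    apply div_le_div_of_nonneg_right ?_ (by norm_num)
    · exact abs_add_le u v
  have key2 : H ((|u|+|v|)/2) ≤ (H |u| + H |v|)/2 := by
    have := hcvx.2 (mem_Ici.2 (abs_nonneg u)) (mem_Ici.2 (abs_nonneg v))
      (by norm_num : (0:ℝ) ≤ 1/2) (by norm_num : (0:ℝ) ≤ 1/2) (by norm_num)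
    simp only [smul_eq_mul] at this
    calc H ((|u|+|v|)/2) = H (1/2 * |u| + 1/2 * |v|) := by ring_nf
      _ ≤ 1/2 * H |u| + 1/2 * H |v| := this
      _ = (H |u| + H |v|)/2 := by ring
  calc H ((u+v)/2) ≤ (H |u| + H |v|)/2 := le_trans key key2
    _ = (H u + H v)/2 := by rw [← habs, ← habs]

lemma midpoint_ge {H : ℝ → ℝ} (heven : ∀ u, H (-u) = H u) (hccv : ConcaveOn ℝ (Ici 0) H)
    (h0 : H 0 = 0) (hnp : ∀ u : ℝ, 0 ≤ u → H u ≤ 0) (u v : ℝ) :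
    (H u + H v)/2 ≤ H ((u+v)/2) := by
  have := midpoint_le (H := fun x => - H x) (fun u => by simp [heven u])
    hccv.neg (by simp [h0]) (fun u hu => by simp; exact hnp u hu) u v
  linarith

/- representation lemmas -/
lemma exp_sub_one' (u : ℝ) : Real.exp u - 1 = 2 * Real.exp (u/2) * Real.sinh (u/2) := by
  have h1 : Real.exp (u/2) * Real.exp (u/2) = Real.exp u := by
    rw [← Real.exp_add]; ring_nf
  have h2 : Real.exp (u/2) * Real.exp (-(u/2)) = 1 := by
    rw [← Real.exp_add]; simp
  rw [Real.sinh_eq]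
  linear_combination h2 - h1

lemma stolarsky_base_pos {α x : ℝ} (hx : 0 < x) (hx1 : x ≠ 1) (hα : α ≠ 0) :
    0 < (x^α - 1)/(α*(x-1)) := by
  rcases hx1.lt_or_gt with h | h
  · rcases hα.lt_or_gt with ha | ha
    · apply div_pos
      · rw [sub_pos]
        exact (Real.one_lt_rpow_iff_of_pos hx).2 (Or.inr ⟨h, ha⟩)
      · have : x - 1 < 0 := by linarith
        nlinarith
    · apply div_pos_of_neg_of_neg
      · rw [sub_neg]
        exact (Real.rpow_lt_one_iff_of_pos hx).2 (Or.inr ⟨h, ha⟩)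
      · have : x - 1 < 0 := by linarith
        nlinarith
  · rcases hα.lt_or_gt with ha | ha
    · apply div_pos_of_neg_of_neg
      · rw [sub_neg]
        exact (Real.rpow_lt_one_iff_of_pos hx).2 (Or.inl ⟨h, ha⟩)
      · have : 0 < x - 1 := by linarith
        nlinarith
    · apply div_pos
      · rw [sub_pos]
        exact (Real.one_lt_rpow_iff_of_pos hx).2 (Or.inl ⟨h, ha⟩)
      · have : 0 < x - 1 := by linarith
        nlinarith

lemma stolarsky_pos {α x : ℝ} (hx : 0 < x) : 0 < stolarsky α x := by
  unfold stolarsky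
  split
  · norm_num
  · rename_i hx1
    have hx1' : x ≠ 1 := hx1
    split
    · rcases hx1'.lt_or_gt with h | h
      · exact div_pos_of_neg_of_neg (by linarith) (Real.log_neg hx h)
      · exact div_pos (by linarith) (Real.log_pos h)
    · split
      · exact mul_pos (Real.exp_pos _) (Real.rpow_pos_of_pos hx _)
      · rename_i hα0 hα1
        exact Real.rpow_pos_of_pos (stolarsky_base_pos hx hx1 hα0) _

lemma log_stolarsky {α x : ℝ} (hx : 0 < x) :
    Real.log (stolarsky α x) = Real.log x / 2 + hh α (Real.log x) := by
  unfold stolarsky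
  rcases eq_or_ne x 1 with rfl | hx1
  · simp [hh_zero]
  have hu : Real.log x ≠ 0 := by
    intro h
    exact hx1 (by rw [← Real.exp_log hx, h, Real.exp_zero])
  set u := Real.log x with hudef
  have hx_exp : x = Real.exp u := (Real.exp_log hx).symm
  have hu2 : u/2 ≠ 0 := by intro h; exact hu (by linarith)
  have hs2 : Real.sinh (u/2) ≠ 0 := sinh_ne_zero' hu2
  have hx1' : x - 1 ≠ 0 := sub_ne_zero.2 hx1
  rw [if_neg hx1]
  by_cases hα0 : α = 0
  · subst hα0
    rw [if_pos rfl]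
    have hh0 : hh 0 u = rr (u/2) := by
      simp [hh, rr_zero]
    rw [hh0]
    have hxm : (x - 1)/u = Real.exp (u/2) * (Real.sinh (u/2)/(u/2)) := by
      rw [hx_exp, exp_sub_one' u]
      field_simp
    rw [hxm, Real.log_mul (Real.exp_ne_zero _) (ne_of_gt (sinh_div_self_pos hu2)),
      Real.log_exp, rr]
  by_cases hα1 : α = 1
  · subst hα1
    rw [if_neg one_ne_zero, if_pos rfl]
    have hh1 : hh 1 u = u/2 * r1 (u/2) := by simp [hh]
    rw [hh1, Real.log_mul (Real.exp_ne_zero _)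
      (ne_of_gt (Real.rpow_pos_of_pos hx _)), Real.log_exp, Real.log_rpow hx, ← hudef]
    simp only [r1]
    have he : Real.exp u = Real.exp (u/2) * Real.exp (u/2) := by
      rw [← Real.exp_add]; ring_nf
    have hc : Real.cosh (u/2) = Real.exp (u/2) - Real.sinh (u/2) := by
      linarith [Real.cosh_add_sinh (u/2)]
    rw [hx_exp, exp_sub_one' u, he]
    have hexp := Real.exp_ne_zero (u/2)
    field_simp
    rw [hc]
    ring
  · rw [if_neg hα0, if_neg hα1]
    have hα1' : α - 1 ≠ 0 := sub_ne_zero.2 hα1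
    have hau : α*(u/2) ≠ 0 := mul_ne_zero hα0 hu2
    have hsau : Real.sinh (α*(u/2)) ≠ 0 := sinh_ne_zero' hau
    have hbase : (x^α - 1)/(α*(x-1)) = Real.exp ((α-1)*(u/2)) *
        ((Real.sinh (α*(u/2))/(α*(u/2))) / (Real.sinh (u/2)/(u/2))) := by
      rw [Real.rpow_def_of_pos hx α, ← hudef]
      have h1 : Real.exp (u*α) - 1 = 2 * Real.exp (u*α/2) * Real.sinh (u*α/2) :=
        exp_sub_one' (u*α)
      have h2 : x - 1 = 2 * Real.exp (u/2) * Real.sinh (u/2) := by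
        rw [hx_exp]; exact exp_sub_one' u
      have hesub : Real.exp (u*α/2) = Real.exp ((α-1)*(u/2)) * Real.exp (u/2) := by
        rw [← Real.exp_add]; ring_nf
      have harg : u*α/2 = α*(u/2) := by ring
      rw [h1, h2, hesub, harg]
      have hexp := Real.exp_ne_zero (u/2)
      field_simp
    rw [Real.log_rpow (stolarsky_base_pos hx hx1 hα0), hbase,
      Real.log_mul (Real.exp_ne_zero _)
        (ne_of_gt (div_pos (sinh_div_self_pos hau) (sinh_div_self_pos hu2))),
      Real.log_exp,
      Real.log_div (ne_of_gt (sinh_div_self_pos hau)) (ne_of_gt (sinh_div_self_pos hu2))]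
    have hhα : hh α u = (rr (α*(u/2)) - rr (u/2))/(α-1) := by simp [hh, hα1]
    rw [hhα, rr, rr]
    field_simp

lemma stolarsky_transfer {α : ℝ} {x y : ℝ} (hx : 0 < x) (hy : 0 < y) :
    (stolarsky α (Real.sqrt (x * y)) ≤ Real.sqrt (stolarsky α x * stolarsky α y) ↔
      hh α ((Real.log x + Real.log y)/2) ≤ (hh α (Real.log x) + hh α (Real.log y))/2) := by
  have hxy : 0 < x * y := mul_pos hx hy
  have hsq : 0 < Real.sqrt (x*y) := Real.sqrt_pos.2 hxy
  have hsx := stolarsky_pos (α := α) hx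
  have hsy := stolarsky_pos (α := α) hy
  have hss : 0 < stolarsky α x * stolarsky α y := mul_pos hsx hsy
  have hsqs : 0 < Real.sqrt (stolarsky α x * stolarsky α y) := Real.sqrt_pos.2 hss
  rw [← Real.log_le_log_iff (stolarsky_pos hsq) hsqs]
  rw [Real.log_sqrt hss.le, Real.log_mul hsx.ne' hsy.ne']
  rw [log_stolarsky hsq, Real.log_sqrt hxy.le, Real.log_mul hx.ne' hy.ne']
  rw [log_stolarsky hx, log_stolarsky hy]
  constructor <;> intro h <;> linarith

/-- For `α ∈ [-2,2]`, the Stolarsky function is geometrically convex iff `α ∈ [-1,2]`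
and geometrically concave iff `α ∈ [-2,-1]`. -/
theorem stolarsky_geomConvex_iff (α : ℝ) (hα : α ∈ Set.Icc (-2 : ℝ) 2) :
    ((∀ x y : ℝ, 0 < x → 0 < y →
        stolarsky α (Real.sqrt (x * y)) ≤
          Real.sqrt (stolarsky α x * stolarsky α y)) ↔ α ∈ Set.Icc (-1 : ℝ) 2) ∧
    ((∀ x y : ℝ, 0 < x → 0 < y →
        Real.sqrt (stolarsky α x * stolarsky α y) ≤
          stolarsky α (Real.sqrt (x * y))) ↔ α ∈ Set.Icc (-2 : ℝ) (-1)) := by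
  have hlog2 : Real.log (Real.exp 2) = 2 := Real.log_exp 2
  have hlogm2 : Real.log (Real.exp (-2)) = -2 := Real.log_exp (-2)
  constructor
  · constructor
    · intro h
      by_contra hn
      have h1 : α < -1 := by
        simp only [mem_Icc, not_and_or, not_le] at hn
        rcases hn with h' | h'
        · linarith
        · exact absurd hα.2 (not_le.2 h')
      have := (stolarsky_transfer (Real.exp_pos 2) (Real.exp_pos (-2))).1
        (h _ _ (Real.exp_pos 2) (Real.exp_pos (-2)))
      rw [hlog2, hlogm2] at this
      have he := hh_even α 2
      norm_num [hh_zero] at this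
      have := hh_neg h1 (by norm_num : (0:ℝ) < 2)
      rw [show -(2:ℝ) = -2 from rfl] at he
      linarith
    · intro hm x y hx hy
      rw [stolarsky_transfer hx hy]
      exact midpoint_le (hh_even α) (hh_convexOn hm) (hh_zero α)
        (fun u hu => hh_nonneg hm hu) _ _
  · constructor
    · intro h
      refine ⟨hα.1, ?_⟩
      by_contra hn
      have h1 : -1 < α := not_le.1 hn
      have hrev : stolarsky α (Real.sqrt (Real.exp 2 * Real.exp (-2))) ≤
          Real.sqrt (stolarsky α (Real.exp 2) * stolarsky α (Real.exp (-2))) ∨ True := Or.inr trivial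
      have hle := h _ _ (Real.exp_pos 2) (Real.exp_pos (-2))
      -- from concavity hypothesis: sqrt(prod) ≤ s(1); transfer reversed
      have htr := stolarsky_transfer (α := α) (Real.exp_pos 2) (Real.exp_pos (-2))
      -- we need the reverse direction; redo by log manipulation
      have hxy : 0 < Real.exp 2 * Real.exp (-2) := mul_pos (Real.exp_pos _) (Real.exp_pos _)
      have hsq : 0 < Real.sqrt (Real.exp 2 * Real.exp (-2)) := Real.sqrt_pos.2 hxy
      have hsx := stolarsky_pos (α := α) (Real.exp_pos 2)
      have hsy := stolarsky_pos (α := α) (Real.exp_pos (-2))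
      have hss : 0 < stolarsky α (Real.exp 2) * stolarsky α (Real.exp (-2)) := mul_pos hsx hsy
      have hsqs := Real.sqrt_pos.2 hss
      have hlog := Real.log_le_log_iff hsqs (stolarsky_pos hsq) |>.2 hle
      rw [Real.log_sqrt hss.le, Real.log_mul hsx.ne' hsy.ne'] at hlog
      rw [log_stolarsky hsq, Real.log_sqrt hxy.le,
        Real.log_mul (Real.exp_pos 2).ne' (Real.exp_pos (-2)).ne'] at hlog
      rw [log_stolarsky (Real.exp_pos 2), log_stolarsky (Real.exp_pos (-2))] at hlog
      rw [hlog2, hlogm2] at hlog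
      have he := hh_even α 2
      rw [show -(2:ℝ) = -2 from rfl] at he
      norm_num [hh_zero] at hlog
      have := hh_pos h1 (by norm_num : (0:ℝ) < 2)
      linarith
    · intro hm x y hx hy
      have hxy : 0 < x * y := mul_pos hx hy
      have hsq : 0 < Real.sqrt (x*y) := Real.sqrt_pos.2 hxy
      have hsx := stolarsky_pos (α := α) hx
      have hsy := stolarsky_pos (α := α) hy
      have hss : 0 < stolarsky α x * stolarsky α y := mul_pos hsx hsy
      have hsqs := Real.sqrt_pos.2 hss
      rw [← Real.log_le_log_iff hsqs (stolarsky_pos hsq)]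
      rw [Real.log_sqrt hss.le, Real.log_mul hsx.ne' hsy.ne']
      rw [log_stolarsky hsq, Real.log_sqrt hxy.le, Real.log_mul hx.ne' hy.ne']
      rw [log_stolarsky hx, log_stolarsky hy]
      have := midpoint_ge (hh_even α) (hh_concaveOn hm) (hh_zero α)
        (fun u hu => hh_nonpos hm hu) (Real.log x) (Real.log y)
      linarith
end

section
/- Let α ≥ 1 and let f : (0,∞) → (0,∞) be continuous and monotone increasing, and define g : (0,∞) → (0,∞) by g(t) = t^α·f(t). Then g is a strictly increasing continuous bijection of (0,∞) onto (0,∞), and f is geometrically convex if and only if the inverse function g⁻¹ is geometrically concave. -/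
/-- For `α ≥ 1` and `f` positive continuous monotone increasing on `(0,∞)`, the
function `g t = t^α * f t` is a strictly increasing continuous bijection of `(0,∞)`
onto itself, and `f` is geometrically convex iff the inverse of `g` is geometrically
concave. -/
theorem geomConvex_iff_inverse_geomConcave (α : ℝ) (hα : 1 ≤ α) (f : ℝ → ℝ)
    (hfpos : ∀ t : ℝ, 0 < t → 0 < f t)
    (hfcont : ContinuousOn f (Set.Ioi (0 : ℝ)))
    (hfmono : MonotoneOn f (Set.Ioi (0 : ℝ))) :
    StrictMonoOn (fun t : ℝ => t ^ α * f t) (Set.Ioi (0 : ℝ)) ∧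
    ContinuousOn (fun t : ℝ => t ^ α * f t) (Set.Ioi (0 : ℝ)) ∧
    Set.BijOn (fun t : ℝ => t ^ α * f t) (Set.Ioi (0 : ℝ)) (Set.Ioi (0 : ℝ)) ∧
    (∀ ginv : ℝ → ℝ,
      (∀ s : ℝ, 0 < s → 0 < ginv s) →
      (∀ t : ℝ, 0 < t → ginv (t ^ α * f t) = t) →
      (∀ s : ℝ, 0 < s → (ginv s) ^ α * f (ginv s) = s) →
      ((∀ x y : ℝ, 0 < x → 0 < y →
          f (Real.sqrt (x * y)) ≤ Real.sqrt (f x * f y)) ↔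
        (∀ x y : ℝ, 0 < x → 0 < y →
          Real.sqrt (ginv x * ginv y) ≤ ginv (Real.sqrt (x * y))))) := by
  have hα0 : (0:ℝ) < α := lt_of_lt_of_le one_pos hα
  set g : ℝ → ℝ := fun t => t ^ α * f t with hg_def
  have hgpos : ∀ t : ℝ, 0 < t → 0 < g t := fun t ht =>
    mul_pos (Real.rpow_pos_of_pos ht α) (hfpos t ht)
  -- strict monotonicity
  have hsm : StrictMonoOn g (Set.Ioi (0:ℝ)) := by
    intro a ha b hb hab
    simp only [Set.mem_Ioi] at ha hb
    have h1 : a ^ α < b ^ α := Real.rpow_lt_rpow ha.le hab hα0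
    have h2 : f a ≤ f b := hfmono (Set.mem_Ioi.mpr ha) (Set.mem_Ioi.mpr hb) hab.le
    calc a ^ α * f a < b ^ α * f a := mul_lt_mul_of_pos_right h1 (hfpos a ha)
      _ ≤ b ^ α * f b := mul_le_mul_of_nonneg_left h2 (Real.rpow_pos_of_pos hb α).le
  -- continuity
  have hcont : ContinuousOn g (Set.Ioi (0:ℝ)) := by
    apply ContinuousOn.mul _ hfcont
    exact continuousOn_id.rpow_const
      (fun x hx => Or.inl (ne_of_gt (Set.mem_Ioi.mp hx)))
  -- surjectivity via IVT
  have hsurj : Set.SurjOn g (Set.Ioi (0:ℝ)) (Set.Ioi (0:ℝ)) := by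
    intro s hs
    have hs : (0:ℝ) < s := Set.mem_Ioi.mp hs
    have hc : (0:ℝ) < f 1 := hfpos 1 one_pos
    set c := f 1 with hc_def
    set a := min 1 (s / (2 * c)) with ha_def
    have ha0 : 0 < a := lt_min one_pos (div_pos hs (by positivity))
    have ha1 : a ≤ 1 := min_le_left _ _
    set b := max 1 (s / c) + 1 with hb_def
    have hb1 : (1:ℝ) ≤ b := le_add_of_le_of_nonneg (le_max_left _ _) one_pos.le
    have hab : a ≤ b := ha1.trans hb1
    -- g a < s
    have hga : g a < s := by
      have h1 : a ^ α ≤ a := by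
        have := Real.rpow_le_rpow_of_exponent_ge ha0 ha1 hα
        simpa using this
      have h2 : f a ≤ c := hfmono (Set.mem_Ioi.mpr ha0) (Set.mem_Ioi.mpr one_pos) ha1
      have h3 : g a ≤ a * c := by
        calc g a = a ^ α * f a := rfl
          _ ≤ a * c := mul_le_mul h1 h2 (hfpos a ha0).le ha0.le
      have h4 : a * c ≤ (s / (2 * c)) * c :=
        mul_le_mul_of_nonneg_right (min_le_right _ _) hc.le
      have h5 : (s / (2 * c)) * c = s / 2 := by
        field_simp
      have : g a ≤ s / 2 := by rw [← h5]; exact h3.trans h4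
      linarith
    -- s < g b
    have hgb : s < g b := by
      have hb0 : (0:ℝ) < b := lt_of_lt_of_le one_pos hb1
      have h1 : b ≤ b ^ α := by
        have := Real.rpow_le_rpow_of_exponent_le hb1 hα
        simpa using this
      have h2 : c ≤ f b := hfmono (Set.mem_Ioi.mpr one_pos) (Set.mem_Ioi.mpr hb0) hb1
      have h3 : b * c ≤ g b := mul_le_mul h1 h2 hc.le (Real.rpow_pos_of_pos hb0 α).le
      have h4 : s / c + 1 ≤ b := by
        have h := le_max_right (1:ℝ) (s / c)
        simp only [hb_def]
        linarith
      have h5 : (s / c + 1) * c ≤ b * c := mul_le_mul_of_nonneg_right h4 hc.le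
      have h6 : (s / c + 1) * c = s + c := by field_simp
      have : s + c ≤ g b := by rw [← h6]; exact h5.trans h3
      linarith
    have hsub : Set.Icc a b ⊆ Set.Ioi (0:ℝ) := fun x hx =>
      Set.mem_Ioi.mpr (lt_of_lt_of_le ha0 hx.1)
    have hiv := intermediate_value_Icc hab (hcont.mono hsub)
    have hmem : s ∈ Set.Icc (g a) (g b) := ⟨hga.le, hgb.le⟩
    obtain ⟨t, ht, hgt⟩ := hiv hmem
    exact ⟨t, hsub ht, hgt⟩
  have hbij : Set.BijOn g (Set.Ioi (0:ℝ)) (Set.Ioi (0:ℝ)) :=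
    ⟨fun t ht => Set.mem_Ioi.mpr (hgpos t (Set.mem_Ioi.mp ht)), hsm.injOn, hsurj⟩
  -- key identity
  have hkey : ∀ u v : ℝ, 0 < u → 0 < v →
      Real.sqrt (g u * g v) = Real.sqrt (u * v) ^ α * Real.sqrt (f u * f v) := by
    intro u v hu hv
    have h1 : g u * g v = (u * v) ^ α * (f u * f v) := by
      show u ^ α * f u * (v ^ α * f v) = (u * v) ^ α * (f u * f v)
      rw [Real.mul_rpow hu.le hv.le]; ring
    have h2 : Real.sqrt ((u * v) ^ α) = Real.sqrt (u * v) ^ α := by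
      rw [Real.sqrt_eq_rpow, Real.sqrt_eq_rpow,
        ← Real.rpow_mul (by positivity), ← Real.rpow_mul (by positivity), mul_comm α]
    rw [h1, Real.sqrt_mul (by positivity), h2]
  refine ⟨hsm, hcont, hbij, ?_⟩
  intro ginv hgi0 hgi1 hgi2
  -- core equivalence for u v > 0: g(√(uv)) ≤ √(g u * g v) ↔ f(√(uv)) ≤ √(f u * f v)
  have hcore : ∀ u v : ℝ, 0 < u → 0 < v →
      (g (Real.sqrt (u * v)) ≤ Real.sqrt (g u * g v) ↔
        f (Real.sqrt (u * v)) ≤ Real.sqrt (f u * f v)) := by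
    intro u v hu hv
    have hsq : 0 < Real.sqrt (u * v) := Real.sqrt_pos.mpr (mul_pos hu hv)
    rw [hkey u v hu hv]
    show Real.sqrt (u*v) ^ α * f (Real.sqrt (u*v)) ≤ Real.sqrt (u*v) ^ α * _ ↔ _
    exact mul_le_mul_iff_right₀ (Real.rpow_pos_of_pos hsq α)
  constructor
  · intro hf x y hx hy
    have hu := hgi0 x hx
    have hv := hgi0 y hy
    set u := ginv x with hu_def
    set v := ginv y with hv_def
    have hgu : g u = x := hgi2 x hx
    have hgv : g v = y := hgi2 y hy
    have hxy : 0 < Real.sqrt (x * y) := Real.sqrt_pos.mpr (mul_pos hx hy)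
    have hw := hgi0 _ hxy
    have hgw : g (ginv (Real.sqrt (x * y))) = Real.sqrt (x * y) := hgi2 _ hxy
    have hsq : 0 < Real.sqrt (u * v) := Real.sqrt_pos.mpr (mul_pos hu hv)
    rw [← hsm.le_iff_le (Set.mem_Ioi.mpr hsq) (Set.mem_Ioi.mpr hw), hgw, ← hgu, ← hgv]
    exact (hcore u v hu hv).mpr (hf u v hu hv)
  · intro hgc x y hx hy
    have hX : 0 < g x := hgpos x hx
    have hY : 0 < g y := hgpos y hy
    have h := hgc (g x) (g y) hX hY
    rw [hgi1 x hx, hgi1 y hy] at h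
    have hXY : 0 < Real.sqrt (g x * g y) := Real.sqrt_pos.mpr (mul_pos hX hY)
    have hw := hgi0 _ hXY
    have hgw : g (ginv (Real.sqrt (g x * g y))) = Real.sqrt (g x * g y) := hgi2 _ hXY
    have hsq : 0 < Real.sqrt (x * y) := Real.sqrt_pos.mpr (mul_pos hx hy)
    have h2 : g (Real.sqrt (x * y)) ≤ Real.sqrt (g x * g y) := by
      rw [← hgw]
      exact (hsm.le_iff_le (Set.mem_Ioi.mpr hsq) (Set.mem_Ioi.mpr hw)).mpr h
    exact (hcore x y hx hy).mp h2
end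

section
/- Let n ≥ 1, let 0 = a₁ < a₂ < ⋯ < a_n, let γ₁ ≥ 1, γ_i > 0 for all i, and β > 0, and define u : (0,∞) → (0,∞) by u(t) = β·∏_{i=1}^n (t + a_i)^{γ_i}, assuming u(1) = 1. Let f : (0,∞) → (0,∞) be continuous, monotone increasing, geometrically convex and satisfy f(1) = 1. Then the function t ↦ u(t)·f(t) is a strictly increasing continuous bijection of (0,∞) onto (0,∞) and its inverse function is geometrically concave. -/
open scoped BigOperators

/-- For `u(t) = β·∏ (t + aᵢ)^{γᵢ}` with `0 = a₀ < a₁ < ⋯ < aₙ`, `γ₀ ≥ 1`, `γᵢ > 0`,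
`β > 0`, `u(1) = 1`, and `f` a positive continuous monotone increasing geometrically
convex function with `f(1) = 1`, the function `t ↦ u(t)·f(t)` is a strictly increasing
continuous bijection of `(0,∞)` onto itself whose inverse is geometrically concave. -/
theorem inverse_of_polyProd_mul_geomConvex (n : ℕ) (a γ : Fin (n + 1) → ℝ) (β : ℝ)
    (ha0 : a 0 = 0) (hamono : StrictMono a)
    (hγ0 : 1 ≤ γ 0) (hγ : ∀ i, 0 < γ i) (hβ : 0 < β)
    (u : ℝ → ℝ) (hu : ∀ t : ℝ, u t = β * ∏ i, (t + a i) ^ γ i)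
    (hu1 : u 1 = 1)
    (f : ℝ → ℝ)
    (hfpos : ∀ t : ℝ, 0 < t → 0 < f t)
    (hfcont : ContinuousOn f (Set.Ioi (0 : ℝ)))
    (hfmono : MonotoneOn f (Set.Ioi (0 : ℝ)))
    (hf1 : f 1 = 1)
    (hfgcv : ∀ x y : ℝ, 0 < x → 0 < y →
      f (Real.sqrt (x * y)) ≤ Real.sqrt (f x * f y)) :
    StrictMonoOn (fun t : ℝ => u t * f t) (Set.Ioi (0 : ℝ)) ∧
    ContinuousOn (fun t : ℝ => u t * f t) (Set.Ioi (0 : ℝ)) ∧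
    Set.BijOn (fun t : ℝ => u t * f t) (Set.Ioi (0 : ℝ)) (Set.Ioi (0 : ℝ)) ∧
    (∀ vinv : ℝ → ℝ,
      (∀ s : ℝ, 0 < s → 0 < vinv s) →
      (∀ t : ℝ, 0 < t → vinv (u t * f t) = t) →
      (∀ s : ℝ, 0 < s → u (vinv s) * f (vinv s) = s) →
      (∀ x y : ℝ, 0 < x → 0 < y →
        Real.sqrt (vinv x * vinv y) ≤ vinv (Real.sqrt (x * y)))) := by
  have ha : ∀ i, 0 ≤ a i := fun i => by
    have := hamono.monotone (Fin.zero_le i); rwa [ha0] at this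
  -- positivity of u
  have hupos : ∀ t : ℝ, 0 < t → 0 < u t := by
    intro t ht
    rw [hu]
    refine mul_pos hβ (Finset.prod_pos fun i _ => Real.rpow_pos_of_pos ?_ _)
    have := ha i; linarith
  -- strict monotonicity of u
  have humono : StrictMonoOn u (Set.Ioi (0 : ℝ)) := by
    intro s hs t ht hst
    have hs0 : (0:ℝ) < s := hs
    rw [hu, hu]
    refine mul_lt_mul_of_pos_left ?_ hβ
    refine Finset.prod_lt_prod_of_nonempty
      (fun i _ => Real.rpow_pos_of_pos (by have := ha i; linarith) _)
      (fun i _ => Real.rpow_lt_rpow (by have := ha i; linarith)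
        (by linarith) (hγ i)) Finset.univ_nonempty
  -- continuity of u
  have hucont : ContinuousOn u (Set.Ioi (0 : ℝ)) := by
    have h : ContinuousOn (fun t : ℝ => β * ∏ i, (t + a i) ^ γ i) (Set.Ioi 0) := by
      refine continuousOn_const.mul ?_
      refine continuousOn_finset_prod _ fun i _ => ?_
      refine (continuousOn_id.add continuousOn_const).rpow_const fun x hx => Or.inr (hγ i).le
    exact h.congr fun t _ => hu t
  -- splitting off the first factor
  have hsplit : ∀ t : ℝ, u t = β * t ^ γ 0 * ∏ i : Fin n, (t + a i.succ) ^ γ i.succ := by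
    intro t
    rw [hu, Fin.prod_univ_succ, ha0, add_zero, ← mul_assoc]
  have hP1 : β * (∏ i : Fin n, ((1:ℝ) + a i.succ) ^ γ i.succ) = 1 := by
    have h := hsplit 1
    rw [Real.one_rpow, mul_one, hu1] at h
    exact h.symm
  -- u t ≤ t for 0 < t ≤ 1
  have hule : ∀ t : ℝ, 0 < t → t ≤ 1 → u t ≤ t := by
    intro t ht ht1
    rw [hsplit t]
    have h1 : t ^ γ 0 ≤ t := by
      calc t ^ γ 0 ≤ t ^ (1:ℝ) := Real.rpow_le_rpow_of_exponent_ge ht ht1 hγ0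
        _ = t := Real.rpow_one t
    have h2 : (∏ i : Fin n, (t + a i.succ) ^ γ i.succ)
        ≤ ∏ i : Fin n, ((1:ℝ) + a i.succ) ^ γ i.succ :=
      Finset.prod_le_prod
        (fun i _ => Real.rpow_nonneg (by have := ha i.succ; linarith) _)
        (fun i _ => Real.rpow_le_rpow (by have := ha i.succ; linarith)
          (by linarith) (hγ _).le)
    have hPt : (0:ℝ) ≤ ∏ i : Fin n, (t + a i.succ) ^ γ i.succ :=
      Finset.prod_nonneg fun i _ => Real.rpow_nonneg (by have := ha i.succ; linarith) _
    calc β * t ^ γ 0 * (∏ i : Fin n, (t + a i.succ) ^ γ i.succ)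
        ≤ β * t * (∏ i : Fin n, ((1:ℝ) + a i.succ) ^ γ i.succ) :=
          mul_le_mul (mul_le_mul_of_nonneg_left h1 hβ.le) h2 hPt (by positivity)
      _ = t * (β * ∏ i : Fin n, ((1:ℝ) + a i.succ) ^ γ i.succ) := by ring
      _ = t := by rw [hP1, mul_one]
  -- t ≤ u t for t ≥ 1
  have huge : ∀ t : ℝ, 1 ≤ t → t ≤ u t := by
    intro t ht1
    have ht : (0:ℝ) < t := lt_of_lt_of_le one_pos ht1
    rw [hsplit t]
    have h1 : t ≤ t ^ γ 0 := by
      calc t = t ^ (1:ℝ) := (Real.rpow_one t).symm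
        _ ≤ t ^ γ 0 := Real.rpow_le_rpow_of_exponent_le ht1 hγ0
    have h2 : (∏ i : Fin n, ((1:ℝ) + a i.succ) ^ γ i.succ)
        ≤ ∏ i : Fin n, (t + a i.succ) ^ γ i.succ :=
      Finset.prod_le_prod
        (fun i _ => Real.rpow_nonneg (by have := ha i.succ; linarith) _)
        (fun i _ => Real.rpow_le_rpow (by have := ha i.succ; linarith)
          (by linarith) (hγ _).le)
    have hP1nn : (0:ℝ) ≤ ∏ i : Fin n, ((1:ℝ) + a i.succ) ^ γ i.succ :=
      Finset.prod_nonneg fun i _ => Real.rpow_nonneg (by have := ha i.succ; linarith) _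
    calc t = t * (β * ∏ i : Fin n, ((1:ℝ) + a i.succ) ^ γ i.succ) := by rw [hP1, mul_one]
      _ = β * t * (∏ i : Fin n, ((1:ℝ) + a i.succ) ^ γ i.succ) := by ring
      _ ≤ β * t ^ γ 0 * (∏ i : Fin n, (t + a i.succ) ^ γ i.succ) :=
          mul_le_mul (mul_le_mul_of_nonneg_left h1 hβ.le) h2 hP1nn (by positivity)
  -- geometric convexity of u
  have key : ∀ p q : ℝ, 0 < p → 0 < q →
      u (Real.sqrt (p * q)) ≤ Real.sqrt (u p * u q) := by
    intro p q hp hq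
    set s := Real.sqrt (p * q) with hsdef
    have hs : 0 < s := Real.sqrt_pos.mpr (mul_pos hp hq)
    have hs2 : s ^ 2 = p * q := Real.sq_sqrt (mul_pos hp hq).le
    have h2s : 2 * s ≤ p + q := by
      have h := two_mul_le_add_sq (Real.sqrt p) (Real.sqrt q)
      rw [Real.sq_sqrt hp.le, Real.sq_sqrt hq.le] at h
      calc 2 * s = 2 * Real.sqrt p * Real.sqrt q := by
            rw [hsdef, Real.sqrt_mul hp.le, mul_assoc]
        _ ≤ p + q := h
    rw [Real.le_sqrt (hupos s hs).le (mul_pos (hupos p hp) (hupos q hq)).le]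
    rw [hu, hu, hu]
    have hsq : (β * ∏ i, (s + a i) ^ γ i) ^ 2
        = β ^ 2 * ∏ i, ((s + a i) ^ γ i) ^ 2 := by
      rw [mul_pow, ← Finset.prod_pow]
    rw [hsq]
    have hterm : ∀ i : Fin (n + 1),
        ((s + a i) ^ γ i) ^ 2 ≤ (p + a i) ^ γ i * ((q + a i) ^ γ i) := by
      intro i
      have hai := ha i
      have hsa : (0:ℝ) < s + a i := by linarith
      have hpa : (0:ℝ) < p + a i := by linarith
      have hqa : (0:ℝ) < q + a i := by linarith
      have hbase : (s + a i) ^ 2 ≤ (p + a i) * (q + a i) := by nlinarith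
      calc ((s + a i) ^ γ i) ^ 2 = ((s + a i) ^ (2:ℕ)) ^ γ i := by
            rw [← Real.rpow_natCast ((s + a i) ^ γ i) 2, ← Real.rpow_natCast (s + a i) 2,
              ← Real.rpow_mul hsa.le, ← Real.rpow_mul hsa.le, mul_comm]
        _ ≤ ((p + a i) * (q + a i)) ^ γ i := by
            exact Real.rpow_le_rpow (by positivity) (by exact_mod_cast hbase) (hγ i).le
        _ = (p + a i) ^ γ i * (q + a i) ^ γ i :=
            Real.mul_rpow hpa.le hqa.le
    calc β ^ 2 * ∏ i, ((s + a i) ^ γ i) ^ 2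
        ≤ β ^ 2 * ∏ i, ((p + a i) ^ γ i * (q + a i) ^ γ i) := by
          refine mul_le_mul_of_nonneg_left (Finset.prod_le_prod (fun i _ => by positivity)
            (fun i _ => hterm i)) (by positivity)
      _ = (β * ∏ i, (p + a i) ^ γ i) * (β * ∏ i, (q + a i) ^ γ i) := by
          rw [Finset.prod_mul_distrib]; ring
  -- geometric convexity of g = u * f
  have ggcv : ∀ p q : ℝ, 0 < p → 0 < q →
      u (Real.sqrt (p * q)) * f (Real.sqrt (p * q))
        ≤ Real.sqrt ((u p * f p) * (u q * f q)) := by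
    intro p q hp hq
    have hs : 0 < Real.sqrt (p * q) := Real.sqrt_pos.mpr (mul_pos hp hq)
    calc u (Real.sqrt (p * q)) * f (Real.sqrt (p * q))
        ≤ Real.sqrt (u p * u q) * Real.sqrt (f p * f q) :=
          mul_le_mul (key p q hp hq) (hfgcv p q hp hq) (hfpos _ hs).le (Real.sqrt_nonneg _)
      _ = Real.sqrt ((u p * u q) * (f p * f q)) :=
          (Real.sqrt_mul (mul_pos (hupos p hp) (hupos q hq)).le _).symm
      _ = Real.sqrt ((u p * f p) * (u q * f q)) := by ring_nf
  -- strict monotonicity of g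
  have hgmono : StrictMonoOn (fun t : ℝ => u t * f t) (Set.Ioi (0 : ℝ)) := by
    intro s hs t ht hst
    have hs0 : (0:ℝ) < s := hs
    have ht0 : (0:ℝ) < t := ht
    calc u s * f s ≤ u s * f t :=
          mul_le_mul_of_nonneg_left (hfmono hs ht hst.le) (hupos s hs0).le
      _ < u t * f t := mul_lt_mul_of_pos_right (humono hs ht hst) (hfpos t ht0)
  -- continuity of g
  have hgcont : ContinuousOn (fun t : ℝ => u t * f t) (Set.Ioi (0 : ℝ)) :=
    hucont.mul hfcont
  -- surjectivity of g onto (0,∞)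
  have hsurj : Set.SurjOn (fun t : ℝ => u t * f t) (Set.Ioi (0 : ℝ)) (Set.Ioi (0 : ℝ)) := by
    intro s hs
    have hs0 : (0:ℝ) < s := hs
    set lo := min s 1 with hlodef
    set hi := max s 1 with hhidef
    have hlo : 0 < lo := lt_min hs0 one_pos
    have hhi1 : (1:ℝ) ≤ hi := le_max_right _ _
    have hhi : (0:ℝ) < hi := lt_of_lt_of_le one_pos hhi1
    have hlohi : lo ≤ hi := (min_le_left _ _).trans (le_max_left _ _)
    have hIcc : Set.Icc lo hi ⊆ Set.Ioi (0:ℝ) := fun x hx => lt_of_lt_of_le hlo hx.1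
    have hglo : u lo * f lo ≤ s := by
      have h1 : u lo ≤ lo := hule lo hlo (min_le_right _ _)
      have h2 : f lo ≤ 1 := by
        have h := hfmono (Set.mem_Ioi.mpr hlo) (Set.mem_Ioi.mpr one_pos) (min_le_right s 1)
        rwa [hf1] at h
      have h3 : 0 < f lo := hfpos lo hlo
      have h4 : 0 < u lo := hupos lo hlo
      have h5 : lo ≤ s := min_le_left _ _
      nlinarith
    have hghi : s ≤ u hi * f hi := by
      have h1 : hi ≤ u hi := huge hi hhi1
      have h2 : 1 ≤ f hi := by
        have h := hfmono (Set.mem_Ioi.mpr one_pos) (Set.mem_Ioi.mpr hhi) hhi1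
        rwa [hf1] at h
      have h5 : s ≤ hi := le_max_left _ _
      nlinarith
    obtain ⟨t, htmem, hts⟩ :=
      intermediate_value_Icc hlohi (hgcont.mono hIcc) ⟨hglo, hghi⟩
    exact ⟨t, hIcc htmem, hts⟩
  refine ⟨hgmono, hgcont,
    ⟨fun t ht => Set.mem_Ioi.mpr (mul_pos (hupos t ht) (hfpos t ht)), hgmono.injOn, hsurj⟩, ?_⟩
  -- geometric concavity of the inverse
  intro vinv hvpos hvleft hvright x y hx hy
  have hp : 0 < vinv x := hvpos x hx
  have hq : 0 < vinv y := hvpos y hy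
  have hxy : 0 < Real.sqrt (x * y) := Real.sqrt_pos.mpr (mul_pos hx hy)
  have hv : 0 < vinv (Real.sqrt (x * y)) := hvpos _ hxy
  have hpq : 0 < Real.sqrt (vinv x * vinv y) := Real.sqrt_pos.mpr (mul_pos hp hq)
  have h1 : u (Real.sqrt (vinv x * vinv y)) * f (Real.sqrt (vinv x * vinv y))
      ≤ Real.sqrt (x * y) := by
    have h := ggcv (vinv x) (vinv y) hp hq
    rwa [hvright x hx, hvright y hy] at h
  have h2 : u (vinv (Real.sqrt (x * y))) * f (vinv (Real.sqrt (x * y)))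
      = Real.sqrt (x * y) := hvright _ hxy
  exact (hgmono.le_iff_le (Set.mem_Ioi.mpr hpq) (Set.mem_Ioi.mpr hv)).mp
    (h1.trans_eq h2.symm)
end

section
/- For α ∈ (0,1), the function s ↦ (α − 1 + √((1−α)² + 4sα))/(2α) from (0,∞) to (0,∞) is geometrically concave; it is the inverse function of t ↦ t·(1 − α + α·t). -/
private lemma qigc_finv (α : ℝ) (h0 : 0 < α) (h1 : α < 1) :
    ∀ t : ℝ, 0 < t →
      (α - 1 + Real.sqrt ((1 - α) ^ 2 + 4 * (t * (1 - α + α * t)) * α)) / (2 * α) = t := by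
  intro t ht
  have key : (1 - α) ^ 2 + 4 * (t * (1 - α + α * t)) * α = (1 - α + 2 * α * t) ^ 2 := by ring
  rw [key, Real.sqrt_sq (by nlinarith)]
  field_simp
  ring

private lemma qigc_pos (α : ℝ) (h0 : 0 < α) (_h1 : α < 1) :
    ∀ s : ℝ, 0 < s → 0 < (α - 1 + Real.sqrt ((1 - α) ^ 2 + 4 * s * α)) / (2 * α) := by
  intro s hs
  have h : (1 - α) < Real.sqrt ((1 - α) ^ 2 + 4 * s * α) := by
    have := Real.sqrt_lt_sqrt (by positivity) (show (1 - α) ^ 2 < (1 - α) ^ 2 + 4 * s * α by nlinarith)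
    rwa [Real.sqrt_sq (by linarith)] at this
  have hnum : 0 < α - 1 + Real.sqrt ((1 - α) ^ 2 + 4 * s * α) := by linarith
  positivity

private lemma qigc_ginv (α : ℝ) (h0 : 0 < α) (h1 : α < 1) :
    ∀ s : ℝ, 0 < s →
      ((α - 1 + Real.sqrt ((1 - α) ^ 2 + 4 * s * α)) / (2 * α)) *
          (1 - α + α * ((α - 1 + Real.sqrt ((1 - α) ^ 2 + 4 * s * α)) / (2 * α))) = s := by
  intro s hs
  set r := Real.sqrt ((1 - α) ^ 2 + 4 * s * α) with hr
  have hr2 : r ^ 2 = (1 - α) ^ 2 + 4 * s * α := Real.sq_sqrt (by positivity)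
  field_simp
  nlinarith [hr2]

/-- For `α ∈ (0,1)`, the function `s ↦ (α - 1 + √((1-α)² + 4sα))/(2α)` is geometrically
concave on `(0,∞)`; it is the inverse of `t ↦ t(1 - α + αt)`. -/
theorem quadratic_inverse_geomConcave (α : ℝ) (hα : α ∈ Set.Ioo (0 : ℝ) 1) :
    (∀ x y : ℝ, 0 < x → 0 < y →
      Real.sqrt
          (((α - 1 + Real.sqrt ((1 - α) ^ 2 + 4 * x * α)) / (2 * α)) *
            ((α - 1 + Real.sqrt ((1 - α) ^ 2 + 4 * y * α)) / (2 * α))) ≤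
        (α - 1 + Real.sqrt ((1 - α) ^ 2 + 4 * Real.sqrt (x * y) * α)) / (2 * α)) ∧
    (∀ t : ℝ, 0 < t →
      (α - 1 + Real.sqrt ((1 - α) ^ 2 + 4 * (t * (1 - α + α * t)) * α)) / (2 * α) = t) ∧
    (∀ s : ℝ, 0 < s →
      ((α - 1 + Real.sqrt ((1 - α) ^ 2 + 4 * s * α)) / (2 * α)) *
          (1 - α + α * ((α - 1 + Real.sqrt ((1 - α) ^ 2 + 4 * s * α)) / (2 * α))) = s) := by
  obtain ⟨h0, h1⟩ := hα
  refine ⟨?_, qigc_finv α h0 h1, qigc_ginv α h0 h1⟩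
  intro x y hx hy
  -- abbreviate f s
  set a := (α - 1 + Real.sqrt ((1 - α) ^ 2 + 4 * x * α)) / (2 * α) with ha'
  set b := (α - 1 + Real.sqrt ((1 - α) ^ 2 + 4 * y * α)) / (2 * α) with hb'
  have ha : 0 < a := qigc_pos α h0 h1 x hx
  have hb : 0 < b := qigc_pos α h0 h1 y hy
  have hxa : x = a * (1 - α + α * a) := (qigc_ginv α h0 h1 x hx).symm
  have hyb : y = b * (1 - α + α * b) := (qigc_ginv α h0 h1 y hy).symm
  have hab : 0 < Real.sqrt (a * b) := Real.sqrt_pos.2 (by positivity)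
  -- geometric convexity of g : g(√(ab)) ≤ √(xy)
  have hg : Real.sqrt (a * b) * (1 - α + α * Real.sqrt (a * b)) ≤ Real.sqrt (x * y) := by
    have hsq : Real.sqrt (a * b) ^ 2 = a * b := Real.sq_sqrt (by positivity)
    have hamgm : 2 * Real.sqrt (a * b) ≤ a + b := by
      nlinarith [sq_nonneg (Real.sqrt a - Real.sqrt b), Real.sq_sqrt ha.le,
        Real.sq_sqrt hb.le, Real.sqrt_mul_self ha.le,
        Real.sqrt_mul ha.le b]
    have h2 : (Real.sqrt (a * b) * (1 - α + α * Real.sqrt (a * b))) ^ 2 ≤ x * y := by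
      rw [hxa, hyb]
      set w := Real.sqrt (a * b) with hw
      have key : 0 ≤ (a * b) * (α * (1 - α)) * (a + b - 2 * w) :=
        mul_nonneg (mul_pos (mul_pos ha hb) (mul_pos h0 (by linarith))).le (by linarith)
      have expand : (w * (1 - α + α * w)) ^ 2 =
          a * b * (1 - α) ^ 2 + 2 * (1 - α) * α * (a * b) * w + α ^ 2 * (a * b) ^ 2 := by
        linear_combination ((1 - α) ^ 2 + 2 * (1 - α) * α * w + α ^ 2 * (w ^ 2 + a * b)) * hsq
      nlinarith [key, expand]
    have h3 : 0 ≤ Real.sqrt (a * b) * (1 - α + α * Real.sqrt (a * b)) := by nlinarith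
    calc Real.sqrt (a * b) * (1 - α + α * Real.sqrt (a * b))
        = Real.sqrt ((Real.sqrt (a * b) * (1 - α + α * Real.sqrt (a * b))) ^ 2) :=
          (Real.sqrt_sq h3).symm
      _ ≤ Real.sqrt (x * y) := Real.sqrt_le_sqrt h2
  -- monotonicity of f applied to hg, plus f(g(√ab)) = √(ab)
  have hmono : (α - 1 + Real.sqrt ((1 - α) ^ 2 +
        4 * (Real.sqrt (a * b) * (1 - α + α * Real.sqrt (a * b))) * α)) / (2 * α) ≤
      (α - 1 + Real.sqrt ((1 - α) ^ 2 + 4 * Real.sqrt (x * y) * α)) / (2 * α) := by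
    gcongr
  have hfg := qigc_finv α h0 h1 (Real.sqrt (a * b)) hab
  rw [hfg] at hmono
  calc Real.sqrt (a * b) = Real.sqrt (a * b) := rfl
    _ ≤ _ := hmono
end

section
/- Let h : ℝ → ℝ be measurable with 0 ≤ h(λ) ≤ 1 for all λ ≤ 0, and define F : ℝ → ℝ by F(x) = ∫_{−∞}^{0} ( 1/(λ − e^x) − 1/(λ − 1) ) h(λ) dλ, the integral being with respect to Lebesgue measure on (−∞,0]. Then F is convex on ℝ if and only if ∫_{−∞}^{0} ( (λ + t)/(λ − t)³ ) h(λ) dλ ≥ 0 for all t > 0. -/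
open MeasureTheory Set Real

private lemma aux_integrable_pow (c : ℝ) (hc : 0 < c) (n : ℕ) (hn : 2 ≤ n) :
    IntegrableOn (fun l : ℝ => ((c - l) ^ n)⁻¹) (Iic (0:ℝ)) := by
  have hcast : -(n:ℝ) < -1 := by
    have : (2:ℝ) ≤ (n:ℝ) := by exact_mod_cast hn
    linarith
  have h1 : IntegrableOn (fun x : ℝ => x ^ (-(n:ℝ))) (Ioi c) :=
    integrableOn_Ioi_rpow_of_lt hcast hc
  have h2 : IntegrableOn (fun x : ℝ => (x ^ n)⁻¹) (Ioi c) := by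
    refine h1.congr_fun (fun x hx => ?_) measurableSet_Ioi
    beta_reduce
    rw [rpow_neg (hc.trans hx).le, rpow_natCast]
  have h3 : IntegrableOn (fun x : ℝ => (x ^ n)⁻¹) (Ici c) := by
    rwa [integrableOn_Ici_iff_integrableOn_Ioi]
  have mp : MeasurePreserving (fun x : ℝ => c - x) volume volume :=
    Measure.measurePreserving_sub_left volume c
  have me : MeasurableEmbedding (fun x : ℝ => c - x) :=
    (MeasurableEquiv.subLeft c).measurableEmbedding
  have h4 := (mp.integrableOn_comp_preimage me
    (f := fun x : ℝ => (x ^ n)⁻¹) (s := Ici c)).2 h3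
  have hset : (fun x : ℝ => c - x) ⁻¹' (Ici c) = Iic 0 := by
    ext x; simp
  rw [hset] at h4
  exact h4

private lemma monotone_hasDerivAt_nonneg {g : ℝ → ℝ} (hg : Monotone g) {d x : ℝ}
    (hd : HasDerivAt g d x) : 0 ≤ d := by
  have ht := hasDerivAt_iff_tendsto_slope.1 hd
  refine ge_of_tendsto ht ?_
  filter_upwards [self_mem_nhdsWithin] with y hy
  rcases lt_or_gt_of_ne (hy : y ≠ x) with hlt | hgt
  · rw [slope_def_field]
    exact div_nonneg_of_nonpos (by simpa using hg hlt.le) (by linarith)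
  · rw [slope_def_field]
    exact div_nonneg (by simpa using hg hgt.le) (by linarith)

private lemma hasDerivAt_F (h : ℝ → ℝ) (hmeas : Measurable h)
    (hbd : ∀ l : ℝ, l ≤ 0 → 0 ≤ h l ∧ h l ≤ 1) (x : ℝ) :
    HasDerivAt (fun x : ℝ => ∫ l in Iic (0:ℝ), (1 / (l - exp x) - 1 / (l - 1)) * h l)
      (∫ l in Iic (0:ℝ), (exp x / (l - exp x) ^ 2) * h l) x := by
  set a := exp (x - 1) with ha_def
  set b := exp (x + 1) with hb_def
  have ha : 0 < a := exp_pos _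
  have hb : 0 < b := exp_pos _
  have key : ∀ y ∈ Metric.ball x 1, a ≤ exp y ∧ exp y ≤ b := by
    intro y hy
    rw [Metric.mem_ball, Real.dist_eq, abs_lt] at hy
    exact ⟨exp_le_exp.2 (by linarith), exp_le_exp.2 (by linarith)⟩
  have hmeas' : ∀ t : ℝ, 0 < t → AEStronglyMeasurable
      (fun l : ℝ => (1 / (l - t) - 1 / (l - 1)) * h l) (volume.restrict (Iic 0)) := by
    intro t _
    exact (((measurable_const.div (measurable_id.sub_const t)).sub
      (measurable_const.div (measurable_id.sub_const 1))).mul hmeas).aestronglyMeasurable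
  have hne : ∀ (l t : ℝ), l ≤ 0 → 0 < t → l - t ≠ 0 := by
    intro l t hl ht; intro hcon; nlinarith [hcon]
  -- integrability at x
  have hF_int : Integrable (fun l : ℝ => (1 / (l - exp x) - 1 / (l - 1)) * h l)
      (volume.restrict (Iic 0)) := by
    set t := exp x with ht_def
    have ht : 0 < t := exp_pos _
    set c := min t 1 with hc_def
    have hc : 0 < c := lt_min ht one_pos
    refine Integrable.mono' (((aux_integrable_pow c hc 2 le_rfl).const_mul |t - 1|))
      (hmeas' t ht) ?_
    rw [ae_restrict_iff' measurableSet_Iic]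
    refine Filter.Eventually.of_forall (fun l hl => ?_)
    have hlt : l - t ≠ 0 := hne l t hl ht
    have hl1 : l - 1 ≠ 0 := hne l 1 hl one_pos
    have heq : 1 / (l - t) - 1 / (l - 1) = (t - 1) / ((l - t) * (l - 1)) := by
      field_simp
      ring
    rw [heq, norm_mul, norm_div]
    have hh := hbd l hl
    have h1 : ‖h l‖ ≤ 1 := by rw [Real.norm_eq_abs, abs_le]; constructor <;> linarith [hh.1, hh.2]
    have hcl : 0 < c - l := by simp only [mem_Iic] at hl; linarith
    have h2 : (c - l) ^ 2 ≤ ‖(l - t) * (l - 1)‖ := by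
      rw [norm_mul, Real.norm_eq_abs, Real.norm_eq_abs]
      have e1 : |l - t| = t - l := by rw [abs_sub_comm, abs_of_pos (by simp only [mem_Iic] at hl; linarith)]
      have e2 : |l - 1| = 1 - l := by rw [abs_sub_comm, abs_of_pos (by simp only [mem_Iic] at hl; linarith)]
      rw [e1, e2, sq]
      have := min_le_left t 1
      have := min_le_right t 1
      nlinarith
    have hA : ‖(t - 1 : ℝ)‖ / ‖(l - t) * (l - 1)‖ ≤ |t - 1| * ((c - l) ^ 2)⁻¹ := by
      rw [← Real.norm_eq_abs, ← div_eq_mul_inv]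
      exact div_le_div_of_nonneg_left (norm_nonneg _) (by positivity) h2
    refine le_trans (mul_le_mul hA h1 (norm_nonneg _) (by positivity)) (by simp)
  have main := (hasDerivAt_integral_of_dominated_loc_of_deriv_le
      (F := fun (y : ℝ) (l : ℝ) => (1 / (l - exp y) - 1 / (l - 1)) * h l)
      (F' := fun (y : ℝ) (l : ℝ) => (exp y / (l - exp y) ^ 2) * h l)
      (bound := fun l : ℝ => b * ((a - l) ^ 2)⁻¹)
      (μ := volume.restrict (Iic 0)) (Metric.ball_mem_nhds x one_pos)
      (Filter.Eventually.of_forall (fun y => hmeas' (exp y) (exp_pos y)))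
      hF_int
      ((((measurable_const.div ((measurable_id.sub_const (exp x)).pow_const 2))).mul
        hmeas).aestronglyMeasurable)
      ?_ ?_ ?_).2
  · exact main
  · -- bound
    rw [ae_restrict_iff' measurableSet_Iic]
    refine Filter.Eventually.of_forall (fun l hl => ?_)
    intro y hy
    simp only [mem_Iic] at hl
    obtain ⟨hay, hyb⟩ := key y hy
    have hh := hbd l hl
    have hal : 0 < a - l := by linarith
    have h2 : (a - l) ^ 2 ≤ (l - exp y) ^ 2 := by nlinarith
    rw [norm_mul, Real.norm_eq_abs, Real.norm_eq_abs]
    have h1 : |h l| ≤ 1 := by rw [abs_le]; constructor <;> linarith [hh.1, hh.2]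
    have hA : |exp y / (l - exp y) ^ 2| ≤ b * ((a - l) ^ 2)⁻¹ := by
      rw [abs_div, abs_of_pos (exp_pos y), abs_of_nonneg (sq_nonneg _),
        ← div_eq_mul_inv]
      exact div_le_div₀ (by positivity) hyb (by positivity) h2
    refine le_trans (mul_le_mul hA h1 (abs_nonneg _) (by positivity)) (by simp)
  · -- bound integrable
    exact (aux_integrable_pow a ha 2 le_rfl).const_mul b
  · -- differentiability
    rw [ae_restrict_iff' measurableSet_Iic]
    refine Filter.Eventually.of_forall (fun l hl => ?_)
    intro y _
    simp only [mem_Iic] at hl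
    have hney : l - exp y ≠ 0 := hne l (exp y) hl (exp_pos y)
    have d1 : HasDerivAt (fun y : ℝ => l - exp y) (-exp y) y :=
      (Real.hasDerivAt_exp y).const_sub l
    have d2 : HasDerivAt (fun y : ℝ => (l - exp y)⁻¹) (-(-exp y) / (l - exp y) ^ 2) y :=
      d1.inv hney
    have d3 := (d2.sub_const ((l - 1)⁻¹)).mul_const (h l)
    have : (fun y : ℝ => ((l - exp y)⁻¹ - (l - 1)⁻¹) * h l)
        = fun y : ℝ => (1 / (l - exp y) - 1 / (l - 1)) * h l := by
      funext y; rw [one_div, one_div]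
    rw [this] at d3
    convert d3 using 1
    rfl
    rw [neg_neg]

private lemma hasDerivAt_G (h : ℝ → ℝ) (hmeas : Measurable h)
    (hbd : ∀ l : ℝ, l ≤ 0 → 0 ≤ h l ∧ h l ≤ 1) (x : ℝ) :
    HasDerivAt (fun x : ℝ => ∫ l in Iic (0:ℝ), (exp x / (l - exp x) ^ 2) * h l)
      (∫ l in Iic (0:ℝ), exp x * (((l + exp x) / (l - exp x) ^ 3) * h l)) x := by
  set a := exp (x - 1) with ha_def
  set b := exp (x + 1) with hb_def
  have ha : 0 < a := exp_pos _
  have hb : 0 < b := exp_pos _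
  have key : ∀ y ∈ Metric.ball x 1, a ≤ exp y ∧ exp y ≤ b := by
    intro y hy
    rw [Metric.mem_ball, Real.dist_eq, abs_lt] at hy
    exact ⟨exp_le_exp.2 (by linarith), exp_le_exp.2 (by linarith)⟩
  have hne : ∀ (l t : ℝ), l ≤ 0 → 0 < t → l - t ≠ 0 := by
    intro l t hl ht hcon; nlinarith [hcon]
  have hmeas' : ∀ t : ℝ, AEStronglyMeasurable
      (fun l : ℝ => (t / (l - t) ^ 2) * h l) (volume.restrict (Iic 0)) :=
    fun t => ((measurable_const.div ((measurable_id.sub_const t).pow_const 2)).mul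
      hmeas).aestronglyMeasurable
  -- Integrability of F x
  have hF_int : Integrable (fun l : ℝ => (exp x / (l - exp x) ^ 2) * h l)
      (volume.restrict (Iic 0)) := by
    set t := exp x with ht_def
    have ht : 0 < t := exp_pos _
    refine Integrable.mono' ((aux_integrable_pow t ht 2 le_rfl).const_mul t)
      (hmeas' t) ?_
    rw [ae_restrict_iff' measurableSet_Iic]
    refine Filter.Eventually.of_forall (fun l hl => ?_)
    simp only [mem_Iic] at hl
    have hh := hbd l hl
    have h1 : |h l| ≤ 1 := by rw [abs_le]; constructor <;> linarith [hh.1, hh.2]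
    have h2 : (t - l) ^ 2 ≤ (l - t) ^ 2 := by nlinarith
    rw [norm_mul, Real.norm_eq_abs, Real.norm_eq_abs]
    have hA : |t / (l - t) ^ 2| ≤ t * ((t - l) ^ 2)⁻¹ := by
      rw [abs_div, abs_of_pos ht, abs_of_nonneg (sq_nonneg _), ← div_eq_mul_inv]
      exact div_le_div₀ ht.le le_rfl (pow_pos (by linarith) 2) h2
    refine le_trans (mul_le_mul hA h1 (abs_nonneg _) (by positivity)) (by simp)
  have main := (hasDerivAt_integral_of_dominated_loc_of_deriv_le
      (F := fun (y : ℝ) (l : ℝ) => (exp y / (l - exp y) ^ 2) * h l)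
      (F' := fun (y : ℝ) (l : ℝ) => exp y * (((l + exp y) / (l - exp y) ^ 3) * h l))
      (bound := fun l : ℝ => b * ((a - l) ^ 2)⁻¹ + b * b * ((a - l) ^ 3)⁻¹)
      (μ := volume.restrict (Iic 0)) (Metric.ball_mem_nhds x one_pos)
      (Filter.Eventually.of_forall (fun y => hmeas' (exp y)))
      hF_int
      ((measurable_const.mul (((((measurable_id.add_const (exp x)).div
        ((measurable_id.sub_const (exp x)).pow_const 3))).mul
        hmeas))).aestronglyMeasurable)
      ?_ ?_ ?_).2
  · exact main
  · -- bound
    rw [ae_restrict_iff' measurableSet_Iic]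
    refine Filter.Eventually.of_forall (fun l hl => ?_)
    intro y hy
    simp only [mem_Iic] at hl
    obtain ⟨hay, hyb⟩ := key y hy
    have hh := hbd l hl
    have hal : 0 < a - l := by linarith
    have h1 : |h l| ≤ 1 := by rw [abs_le]; constructor <;> linarith [hh.1, hh.2]
    have h3 : (a - l) ^ 3 ≤ |(l - exp y) ^ 3| := by
      rw [abs_pow, abs_sub_comm, abs_of_pos (by linarith : 0 < exp y - l)]
      have : a - l ≤ exp y - l := by linarith
      exact pow_le_pow_left₀ hal.le this 3
    have hA : |(l + exp y) / (l - exp y) ^ 3| ≤ ((a - l) + b) / (a - l) ^ 3 := by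
      rw [abs_div]
      refine div_le_div₀ (by positivity) ?_ (by positivity) h3
      calc |l + exp y| ≤ |l| + |exp y| := abs_add_le _ _
        _ ≤ (a - l) + b := by
            rw [abs_of_nonpos hl, abs_of_pos (exp_pos y)]
            have : -l ≤ a - l := by linarith
            linarith
    rw [norm_mul, norm_mul, Real.norm_eq_abs, Real.norm_eq_abs, Real.norm_eq_abs,
      abs_of_pos (exp_pos y)]
    have hstep : |(l + exp y) / (l - exp y) ^ 3| * |h l| ≤ (a - l + b) / (a - l) ^ 3 := by
      refine le_trans (mul_le_mul hA h1 (abs_nonneg _) (by positivity)) (by simp)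
    have hstep2 : exp y * (|(l + exp y) / (l - exp y) ^ 3| * |h l|)
        ≤ b * ((a - l + b) / (a - l) ^ 3) :=
      mul_le_mul hyb hstep (by positivity) hb.le
    have heq : b * ((a - l + b) / (a - l) ^ 3)
        = b * ((a - l) ^ 2)⁻¹ + b * b * ((a - l) ^ 3)⁻¹ := by
      field_simp
    rw [heq] at hstep2
    exact hstep2
  · exact ((aux_integrable_pow a ha 2 le_rfl).const_mul b).add
      ((aux_integrable_pow a ha 3 (by norm_num)).const_mul (b * b))
  · -- differentiability
    rw [ae_restrict_iff' measurableSet_Iic]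
    refine Filter.Eventually.of_forall (fun l hl => ?_)
    intro y _
    simp only [mem_Iic] at hl
    have hney : l - exp y ≠ 0 := hne l (exp y) hl (exp_pos y)
    have d1 : HasDerivAt (fun y : ℝ => l - exp y) (-exp y) y :=
      (Real.hasDerivAt_exp y).const_sub l
    have d2 := d1.pow 2
    have d3 := ((Real.hasDerivAt_exp y).div d2 (pow_ne_zero 2 hney)).mul_const (h l)
    convert d3 using 1
    have : (2:ℝ) * (l - exp y) ^ (2-1) * (-exp y) = 2 * (l - exp y) * (-exp y) := by norm_num
    rfl
    rfl
    simp only [Pi.pow_apply]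
    field_simp
    ring

/-- Characterization of convexity of `F(x) = ∫_{-∞}^0 (1/(λ-eˣ) - 1/(λ-1)) h(λ) dλ`
(equivalently, geometric convexity of the represented operator mean) via the sign of
`∫_{-∞}^0 (λ+t)/(λ-t)³ h(λ) dλ`. -/
theorem convex_iff_integral_nonneg (h : ℝ → ℝ) (hmeas : Measurable h)
    (hbd : ∀ l : ℝ, l ≤ 0 → 0 ≤ h l ∧ h l ≤ 1)
    (F : ℝ → ℝ)
    (hF : ∀ x : ℝ,
      F x = ∫ l in Set.Iic (0 : ℝ), (1 / (l - Real.exp x) - 1 / (l - 1)) * h l) :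
    ConvexOn ℝ Set.univ F ↔
    (∀ t : ℝ, 0 < t →
      0 ≤ ∫ l in Set.Iic (0 : ℝ), ((l + t) / (l - t) ^ 3) * h l) := by
  have hFeq : F = fun x : ℝ =>
      ∫ l in Set.Iic (0:ℝ), (1 / (l - Real.exp x) - 1 / (l - 1)) * h l := funext hF
  subst hFeq
  set G : ℝ → ℝ := fun x => ∫ l in Set.Iic (0:ℝ), (Real.exp x / (l - Real.exp x) ^ 2) * h l
    with hGdef
  have hFG : ∀ x : ℝ, HasDerivAt
      (fun x : ℝ => ∫ l in Set.Iic (0:ℝ), (1 / (l - Real.exp x) - 1 / (l - 1)) * h l)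
      (G x) x := fun x => hasDerivAt_F h hmeas hbd x
  have hGH : ∀ x : ℝ, HasDerivAt G
      (Real.exp x * ∫ l in Set.Iic (0:ℝ), ((l + Real.exp x) / (l - Real.exp x) ^ 3) * h l) x := by
    intro x
    have := hasDerivAt_G h hmeas hbd x
    rwa [MeasureTheory.integral_const_mul] at this
  have hderivF : deriv
      (fun x : ℝ => ∫ l in Set.Iic (0:ℝ), (1 / (l - Real.exp x) - 1 / (l - 1)) * h l) = G :=
    funext fun x => (hFG x).deriv
  constructor
  · intro hcvx t ht
    have hmono := hcvx.monotoneOn_deriv (fun x _ => (hFG x).differentiableAt)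
    rw [hderivF] at hmono
    have hmonoG : Monotone G := monotoneOn_univ.1 hmono
    have hnn := monotone_hasDerivAt_nonneg hmonoG (hGH (Real.log t))
    rw [Real.exp_log ht] at hnn
    by_contra hneg
    push_neg at hneg
    nlinarith
  · intro hint
    refine convexOn_of_deriv2_nonneg convex_univ ?_ ?_ ?_ ?_
    · exact (Differentiable.continuous (fun x => (hFG x).differentiableAt)).continuousOn
    · exact fun x _ => ((hFG x).differentiableAt).differentiableWithinAt
    · intro x _
      rw [hderivF]
      exact ((hGH x).differentiableAt).differentiableWithinAt
    · intro x _
      have h2 : deriv^[2]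
          (fun x : ℝ => ∫ l in Set.Iic (0:ℝ), (1 / (l - Real.exp x) - 1 / (l - 1)) * h l) x
          = deriv G x := by
        simp only [Function.iterate_succ, Function.iterate_zero, Function.comp_apply, id_eq,
          Function.id_def]
        rw [hderivF]
      rw [h2, (hGH x).deriv]
      exact mul_nonneg (Real.exp_pos x).le (hint (Real.exp x) (Real.exp_pos x))
end

section
/- Define f : (0,∞) → (0,∞) by f(t) = ((t + 2)/3)^{9/14} · (2t/(t + 1))^{5/14}. Then (i) f(t)^r ≤ f(t^r) for all t > 0 and all r ≥ 1, but (ii) f is not geometrically convex: there exist x, y > 0 with f(√(x·y)) > √(f(x)·f(y)). Hence the class of geometrically convex normalized functions is a proper subset of the class of power monotone increasing normalized functions. -/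
open Real Set


noncomputable def Fn (v : ℝ) : ℝ :=
  9/14 * Real.log ((Real.exp v + 2)/3) + 5/14 * Real.log (2 * Real.exp v / (Real.exp v + 1))

noncomputable def Gn (v : ℝ) : ℝ :=
  9/14 * (Real.exp v / (Real.exp v + 2)) + 5/14 * (1/(Real.exp v + 1))

noncomputable def Hn (v : ℝ) : ℝ :=
  Real.exp v * (9/7 / (Real.exp v + 2)^2 - 5/14 / (Real.exp v + 1)^2)

noncomputable def Dn (v : ℝ) : ℝ := v * Gn v - Fn v

lemma hF (v : ℝ) : HasDerivAt Fn (Gn v) v := by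
  have hx : (0:ℝ) < Real.exp v := Real.exp_pos v
  have h1 : HasDerivAt (fun v => (Real.exp v + 2)/3) (Real.exp v / 3) v :=
    ((Real.hasDerivAt_exp v).add_const 2).div_const 3
  have h2 : HasDerivAt (fun v => Real.log ((Real.exp v + 2)/3))
      ((Real.exp v / 3) / ((Real.exp v + 2)/3)) v := h1.log (by positivity)
  have h3 : HasDerivAt (fun v => 2 * Real.exp v / (Real.exp v + 1))
      ((2 * Real.exp v * (Real.exp v + 1) - 2 * Real.exp v * Real.exp v) /
        (Real.exp v + 1)^2) v := by
    exact ((Real.hasDerivAt_exp v).const_mul 2).div ((Real.hasDerivAt_exp v).add_const 1)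
      (by positivity)
  have h4 : HasDerivAt (fun v => Real.log (2 * Real.exp v / (Real.exp v + 1)))
      (((2 * Real.exp v * (Real.exp v + 1) - 2 * Real.exp v * Real.exp v) /
        (Real.exp v + 1)^2) / (2 * Real.exp v / (Real.exp v + 1))) v :=
    h3.log (by positivity)
  have := (h2.const_mul (9/14 : ℝ)).add (h4.const_mul (5/14 : ℝ))
  refine this.congr_deriv ?_
  unfold Gn
  field_simp
  ring

lemma hG (v : ℝ) : HasDerivAt Gn (Hn v) v := by
  have hx : (0:ℝ) < Real.exp v := Real.exp_pos v
  have h1 : HasDerivAt (fun v => Real.exp v / (Real.exp v + 2))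
      ((Real.exp v * (Real.exp v + 2) - Real.exp v * Real.exp v) / (Real.exp v + 2)^2) v :=
    (Real.hasDerivAt_exp v).div ((Real.hasDerivAt_exp v).add_const 2) (by positivity)
  have h2 : HasDerivAt (fun v => 1 / (Real.exp v + 1))
      ((0 * (Real.exp v + 1) - 1 * Real.exp v) / (Real.exp v + 1)^2) v :=
    (hasDerivAt_const v 1).div ((Real.hasDerivAt_exp v).add_const 1) (by positivity)
  have := (h1.const_mul (9/14 : ℝ)).add (h2.const_mul (5/14 : ℝ))
  refine this.congr_deriv ?_
  unfold Hn
  field_simp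
  ring

lemma hD (v : ℝ) : HasDerivAt Dn (v * Hn v) v := by
  have := ((hasDerivAt_id v).mul (hG v)).sub (hF v)
  refine this.congr_deriv ?_
  simp

lemma Hnonneg (v : ℝ) (h : 1/5 ≤ Real.exp v) : 0 ≤ Hn v := by
  have hx : (0:ℝ) < Real.exp v := Real.exp_pos v
  unfold Hn
  apply mul_nonneg hx.le
  rw [sub_nonneg, div_le_div_iff₀ (by positivity) (by positivity)]
  nlinarith [sq_nonneg (Real.exp v - 1/5)]

lemma D0 : Dn 0 = 0 := by
  unfold Dn Fn Gn
  norm_num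

lemma Did (v : ℝ) : 14 * Dn v =
    v * Real.exp v * (4 * Real.exp v - 1) / ((Real.exp v + 2) * (Real.exp v + 1))
    + 9 * Real.log 3 - 9 * Real.log (Real.exp v + 2) - 5 * Real.log 2
    + 5 * Real.log (Real.exp v + 1) := by
  have hx : (0:ℝ) < Real.exp v := Real.exp_pos v
  unfold Dn Fn Gn
  rw [Real.log_div (by positivity) (by norm_num), Real.log_div (by positivity) (by positivity),
    Real.log_mul (by norm_num) (by positivity), Real.log_exp]
  field_simp
  ring

lemma logconst : (1:ℝ)/15 ≤ 9 * Real.log 3 - 14 * Real.log 2 := by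
  have e1 : Real.exp (1/15 : ℝ) ≤ 15/14 := by
    have h := Real.add_one_le_exp (-(1/15) : ℝ)
    rw [Real.exp_neg] at h
    have h2 : (14:ℝ)/15 ≤ (Real.exp (1/15))⁻¹ := by linarith
    calc Real.exp (1/15 : ℝ) = ((Real.exp (1/15 : ℝ))⁻¹)⁻¹ := by rw [inv_inv]
      _ ≤ ((14:ℝ)/15)⁻¹ := by
          exact inv_anti₀ (by norm_num) h2
      _ = 15/14 := by norm_num
  have e2 : (1:ℝ)/15 ≤ Real.log (19683/16384) := by
    rw [Real.le_log_iff_exp_le (by norm_num)]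
    calc Real.exp (1/15 : ℝ) ≤ 15/14 := e1
      _ ≤ 19683/16384 := by norm_num
  have e3 : Real.log ((19683:ℝ)/16384) = 9 * Real.log 3 - 14 * Real.log 2 := by
    rw [show ((19683:ℝ)/16384) = 3^(9:ℕ)/2^(14:ℕ) by norm_num,
      Real.log_div (by norm_num) (by norm_num), Real.log_pow, Real.log_pow]
    push_cast; ring
  linarith [e2, e3.symm ▸ e2]

lemma Dsmall (v : ℝ) (h : Real.exp v ≤ 1/5) : 0 ≤ Dn v := by
  set x := Real.exp v with hxdef
  have hx : (0:ℝ) < x := Real.exp_pos v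
  have hv : v ≤ 0 := by
    have h2 : Real.exp v ≤ Real.exp 0 := by rw [Real.exp_zero]; linarith
    exact Real.exp_le_exp.mp h2
  have t1 : 0 ≤ v * x * (4 * x - 1) / ((x + 2) * (x + 1)) := by
    apply div_nonneg _ (by positivity)
    nlinarith [mul_nonneg (mul_nonneg (neg_nonneg.mpr hv) hx.le)
      (show (0:ℝ) ≤ 1 - 4*x by linarith)]
  have l1 : Real.log (x + 2) ≤ Real.log 2 + x/2 := by
    have h2 := Real.log_le_sub_one_of_pos (show (0:ℝ) < (x+2)/2 by positivity)
    rw [Real.log_div (by positivity) (by norm_num)] at h2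
    linarith
  have l2 : x/(x+1) ≤ Real.log (x + 1) := by
    have h2 := Real.log_le_sub_one_of_pos (show (0:ℝ) < (x+1)⁻¹ by positivity)
    rw [Real.log_inv] at h2
    have h3 : (x+1)⁻¹ - 1 = -(x/(x+1)) := by field_simp; ring
    rw [h3] at h2
    linarith
  have l3 : 25*x/6 ≤ 5*x/(x+1) := by
    rw [div_le_div_iff₀ (by norm_num) (by positivity)]
    nlinarith
  have key := Did v
  rw [← hxdef] at key
  have hc := logconst
  have l2' : 5*x/(x+1) ≤ 5 * Real.log (x+1) := by
    have : 5*x/(x+1) = 5*(x/(x+1)) := by ring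
    rw [this]; linarith
  linarith [t1, l1, l2', l3, key, hc]

lemma DiffD : Differentiable ℝ Dn := fun v => (hD v).differentiableAt

lemma Dmid (v : ℝ) (h1 : Real.log (1/5) ≤ v) (h2 : v ≤ 0) : 0 ≤ Dn v := by
  have anti : AntitoneOn Dn (Icc (Real.log (1/5)) 0) := by
    apply antitoneOn_of_deriv_nonpos (convex_Icc _ _) DiffD.continuous.continuousOn
      (DiffD.differentiableOn)
    intro w hw
    rw [interior_Icc] at hw
    rw [(hD w).deriv]
    apply mul_nonpos_of_nonpos_of_nonneg hw.2.le
    apply Hnonneg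
    calc (1:ℝ)/5 = Real.exp (Real.log (1/5)) := (Real.exp_log (by norm_num)).symm
      _ ≤ Real.exp w := Real.exp_le_exp.mpr hw.1.le
  have := anti ⟨h1, h2⟩ ⟨by linarith [Real.log_nonpos (by norm_num : (0:ℝ) ≤ 1/5) (by norm_num : (1:ℝ)/5 ≤ 1)], le_refl 0⟩ h2
  rw [D0] at this
  exact this

lemma Dbig (v : ℝ) (h : 0 ≤ v) : 0 ≤ Dn v := by
  have mono : MonotoneOn Dn (Ici 0) := by
    apply monotoneOn_of_deriv_nonneg (convex_Ici _) DiffD.continuous.continuousOn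
      DiffD.differentiableOn
    intro w hw
    rw [interior_Ici] at hw
    rw [(hD w).deriv]
    apply mul_nonneg hw.le
    apply Hnonneg
    have : (1:ℝ) ≤ Real.exp w := Real.one_le_exp hw.le
    linarith
  have := mono (self_mem_Ici) h h
  rw [D0] at this
  exact this

lemma Dnonneg (v : ℝ) : 0 ≤ Dn v := by
  rcases le_or_gt v 0 with hv | hv
  · rcases le_or_gt (Real.exp v) (1/5) with h | h
    · exact Dsmall v h
    · apply Dmid v _ hv
      calc Real.log (1/5) ≤ Real.log (Real.exp v) :=
        Real.log_le_log (by norm_num) h.le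
        _ = v := Real.log_exp v
  · exact Dbig v hv.le

lemma pmi_F (u : ℝ) (r : ℝ) (hr : 1 ≤ r) : r * Fn u ≤ Fn (r * u) := by
  have hr0 : (0:ℝ) < r := by linarith
  have hψ : ∀ s : ℝ, s ≠ 0 → HasDerivAt (fun s => Fn (s * u) / s)
      ((Gn (s*u) * u * s - Fn (s*u) * 1) / s^2) s := by
    intro s hs
    exact ((hF (s*u)).comp s (hasDerivAt_mul_const u)).div (hasDerivAt_id s) hs
  have mono : MonotoneOn (fun s => Fn (s * u) / s) (Ici 1) := by
    apply monotoneOn_of_deriv_nonneg (convex_Ici _)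
    · intro s hs
      have : s ≠ 0 := by simp at hs; intro h; rw [h] at hs; linarith
      exact ((hψ s this).differentiableAt.continuousAt).continuousWithinAt
    · intro s hs
      rw [interior_Ici] at hs
      have : s ≠ 0 := by intro h; rw [h] at hs; simp at hs; linarith
      exact ((hψ s this).differentiableAt).differentiableWithinAt
    · intro s hs
      rw [interior_Ici] at hs
      have hs0 : s ≠ 0 := by intro h; rw [h] at hs; simp at hs; linarith
      rw [(hψ s hs0).deriv]
      apply div_nonneg _ (sq_nonneg s)
      have := Dnonneg (s * u)
      unfold Dn at this
      nlinarith [this]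
  have := mono (self_mem_Ici) (mem_Ici.mpr hr) hr
  simp only [one_mul, div_one] at this
  rw [le_div_iff₀ hr0] at this
  rw [mul_comm]
  exact this


lemma rp9 (a : ℝ) (ha : 0 ≤ a) : (a ^ ((9:ℝ)/14)) ^ (14 : ℕ) = a ^ (9 : ℕ) := by
  rw [← Real.rpow_natCast (a ^ ((9:ℝ)/14)) 14, ← Real.rpow_mul ha,
    show (9:ℝ)/14 * (14:ℕ) = ((9:ℕ):ℝ) by norm_num, Real.rpow_natCast]

lemma rp5 (a : ℝ) (ha : 0 ≤ a) : (a ^ ((5:ℝ)/14)) ^ (14 : ℕ) = a ^ (5 : ℕ) := by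
  rw [← Real.rpow_natCast (a ^ ((5:ℝ)/14)) 14, ← Real.rpow_mul ha,
    show (5:ℝ)/14 * (14:ℕ) = ((5:ℕ):ℝ) by norm_num, Real.rpow_natCast]


lemma f_eq_exp (t : ℝ) (ht : 0 < t) :
    ((t + 2) / 3) ^ ((9 : ℝ) / 14) * (2 * t / (t + 1)) ^ ((5 : ℝ) / 14)
      = Real.exp (Fn (Real.log t)) := by
  unfold Fn
  rw [Real.exp_log ht, Real.rpow_def_of_pos (by positivity), Real.rpow_def_of_pos (by positivity),
    ← Real.exp_add]
  exact congrArg Real.exp (by ring)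

/-- The function `f(t) = ((t+2)/3)^{9/14} · (2t/(t+1))^{5/14}` is power monotone
increasing but not geometrically convex; hence `GCV ⊊ PMI`. -/
theorem pmi_not_geomConvex :
    (∀ t : ℝ, 0 < t → ∀ r : ℝ, 1 ≤ r →
      (((t + 2) / 3) ^ ((9 : ℝ) / 14) * (2 * t / (t + 1)) ^ ((5 : ℝ) / 14)) ^ r ≤
        ((t ^ r + 2) / 3) ^ ((9 : ℝ) / 14) *
          (2 * t ^ r / (t ^ r + 1)) ^ ((5 : ℝ) / 14)) ∧
    (∃ x y : ℝ, 0 < x ∧ 0 < y ∧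
      Real.sqrt
          ((((x + 2) / 3) ^ ((9 : ℝ) / 14) * (2 * x / (x + 1)) ^ ((5 : ℝ) / 14)) *
            (((y + 2) / 3) ^ ((9 : ℝ) / 14) * (2 * y / (y + 1)) ^ ((5 : ℝ) / 14))) <
        ((Real.sqrt (x * y) + 2) / 3) ^ ((9 : ℝ) / 14) *
          (2 * Real.sqrt (x * y) / (Real.sqrt (x * y) + 1)) ^ ((5 : ℝ) / 14)) := by
  constructor
  · intro t ht r hr
    have htr : 0 < t ^ r := Real.rpow_pos_of_pos ht r
    rw [f_eq_exp t ht, f_eq_exp (t ^ r) htr, Real.log_rpow ht]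
    rw [← Real.exp_mul]
    apply Real.exp_le_exp.mpr
    have := pmi_F (Real.log t) r hr
    linarith
  · refine ⟨1/100, 1/10000, by norm_num, by norm_num, ?_⟩
    have hs : Real.sqrt ((1/100 : ℝ) * (1/10000)) = 1/1000 := by
      rw [show ((1/100 : ℝ) * (1/10000)) = (1/1000)^2 by norm_num, Real.sqrt_sq (by norm_num)]
    rw [hs]
    set R : ℝ := ((1/1000 + 2) / 3) ^ ((9 : ℝ) / 14) * (2 * (1/1000) / (1/1000 + 1)) ^ ((5 : ℝ) / 14) with hR
    have hRpos : 0 < R := by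
      apply mul_pos <;> apply Real.rpow_pos_of_pos <;> norm_num
    rw [Real.sqrt_lt' hRpos]
    apply lt_of_pow_lt_pow_left₀ 14 (by positivity)
    rw [mul_pow, mul_pow, mul_pow, ← pow_mul]
    rw [rp9 _ (by norm_num), rp5 _ (by norm_num), rp9 _ (by norm_num), rp5 _ (by norm_num)]
    rw [hR, mul_pow, show (2*14:ℕ) = 14*2 by norm_num, pow_mul, pow_mul,
      rp9 _ (by norm_num), rp5 _ (by norm_num)]
    norm_num
end

section
/- Let f : (0,∞) → (0,∞) satisfy f(1) = 1 and be differentiable at 1 with derivative f'(1) = α, and let r > 1. If f(t)^r ≤ f(t^r) for all t > 0, then f(t) ≥ t^α for all t > 0. -/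
/-- `PMI_r ⊆ PMI_∞`: if `f(1) = 1`, `f` is differentiable at `1` with derivative `α`,
and `f(t)^r ≤ f(t^r)` for all `t > 0` for some fixed `r > 1`, then `f(t) ≥ t^α` for
all `t > 0`. -/
theorem pmi_r_subset_pmi_infty (f : ℝ → ℝ) (α r : ℝ)
    (hpos : ∀ t : ℝ, 0 < t → 0 < f t)
    (hone : f 1 = 1)
    (hderiv : HasDerivAt f α 1)
    (hr : 1 < r)
    (hpmi : ∀ t : ℝ, 0 < t → f t ^ r ≤ f (t ^ r)) :
    ∀ t : ℝ, 0 < t → t ^ α ≤ f t := by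
  have hr0 : (0:ℝ) < r := lt_trans one_pos hr
  -- iterated PMI
  have iter : ∀ n : ℕ, ∀ s : ℝ, 0 < s → f s ^ (r ^ n) ≤ f (s ^ (r ^ n)) := by
    intro n
    induction n with
    | zero => intro s hs; simp
    | succ n ih =>
      intro s hs
      have h1 : f s ^ (r ^ (n+1)) = (f s ^ (r ^ n)) ^ r := by
        rw [pow_succ, Real.rpow_mul (le_of_lt (hpos s hs))]
      have hsrn : (0:ℝ) < s ^ (r ^ n) := Real.rpow_pos_of_pos hs _
      have h2 : (f s ^ (r ^ n)) ^ r ≤ (f (s ^ (r ^ n))) ^ r := by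
        apply Real.rpow_le_rpow (Real.rpow_nonneg (le_of_lt (hpos s hs)) _) (ih s hs)
          (le_of_lt hr0)
      have h3 : (f (s ^ (r ^ n))) ^ r ≤ f ((s ^ (r ^ n)) ^ r) := hpmi _ hsrn
      have h4 : (s ^ (r ^ n)) ^ r = s ^ (r ^ (n+1)) := by
        rw [← Real.rpow_mul (le_of_lt hs), ← pow_succ]
      rw [h1]
      calc (f s ^ (r ^ n)) ^ r ≤ (f (s ^ (r ^ n))) ^ r := h2
        _ ≤ f ((s ^ (r ^ n)) ^ r) := h3
        _ = f (s ^ (r ^ (n+1))) := by rw [h4]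
  intro t ht
  set u := Real.log t with hu
  -- the auxiliary function g = log ∘ f ∘ exp
  set g : ℝ → ℝ := fun x => Real.log (f (Real.exp x)) with hg
  have hg0 : g 0 = 0 := by simp [hg, hone]
  have hgd : HasDerivAt g α 0 := by
    have h1 : HasDerivAt Real.exp 1 0 := by simpa using Real.hasDerivAt_exp 0
    have h2 : HasDerivAt f α (Real.exp 0) := by simpa using hderiv
    have h3 : HasDerivAt Real.log 1 (f (Real.exp 0)) := by
      have := Real.hasDerivAt_log (x := f 1) (by rw [hone]; norm_num)
      simpa [hone] using this
    have := (h3.comp 0 (h2.comp 0 h1))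
    simp at this; exact this
  by_cases hu0 : u = 0
  · have ht1 : t = 1 := by
      have := Real.exp_log ht
      rw [← hu, hu0] at this
      simpa using this.symm
    rw [ht1, Real.one_rpow, hone]
  · -- sequence hₙ = u / rⁿ
    have hrn_pos : ∀ n : ℕ, (0:ℝ) < r ^ n := fun n => pow_pos hr0 n
    have hbound : ∀ n : ℕ, r ^ n * g (u / r ^ n) ≤ Real.log (f t) := by
      intro n
      have hs : (0:ℝ) < Real.exp (u / r ^ n) := Real.exp_pos _
      have key := iter n (Real.exp (u / r ^ n)) hs
      have hst : (Real.exp (u / r ^ n)) ^ (r ^ n) = t := by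
        rw [Real.rpow_def_of_pos hs, Real.log_exp, div_mul_cancel₀ _ (ne_of_gt (hrn_pos n)),
          hu, Real.exp_log ht]
      rw [hst] at key
      have hlog : Real.log ((f (Real.exp (u / r ^ n))) ^ (r ^ n))
          = r ^ n * g (u / r ^ n) := by
        rw [Real.log_rpow (hpos _ hs)]
      rw [← hlog]
      exact Real.log_le_log (Real.rpow_pos_of_pos (hpos _ hs) _) key
    -- limit of the left side is α * u
    have hseq : Filter.Tendsto (fun n : ℕ => u / r ^ n) Filter.atTop (nhds 0) := by
      simpa using Filter.Tendsto.const_div_atTop (tendsto_pow_atTop_atTop_of_one_lt hr) u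
    have hseq' : Filter.Tendsto (fun n : ℕ => u / r ^ n) Filter.atTop (nhdsWithin 0 {0}ᶜ) := by
      apply tendsto_nhdsWithin_of_tendsto_nhds_of_eventually_within _ hseq
      filter_upwards with n
      exact div_ne_zero hu0 (ne_of_gt (hrn_pos n))
    have hslope : Filter.Tendsto (slope g 0) (nhdsWithin 0 {0}ᶜ) (nhds α) :=
      hasDerivAt_iff_tendsto_slope.mp hgd
    have hlim0 : Filter.Tendsto (fun n : ℕ => slope g 0 (u / r ^ n)) Filter.atTop (nhds α) :=
      hslope.comp hseq'
    have hlim : Filter.Tendsto (fun n : ℕ => r ^ n * g (u / r ^ n)) Filter.atTop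
        (nhds (u * α)) := by
      have heq : ∀ n : ℕ, u * slope g 0 (u / r ^ n) = r ^ n * g (u / r ^ n) := by
        intro n
        rw [slope_def_field, hg0]
        field_simp
        rw [sub_zero, mul_zero, sub_zero, mul_div_cancel_left₀ _ hu0]
      have := hlim0.const_mul u
      simpa [heq] using this
    have hfin : u * α ≤ Real.log (f t) := le_of_tendsto hlim (Filter.Eventually.of_forall hbound)
    calc t ^ α = Real.exp (u * α) := by rw [Real.rpow_def_of_pos ht, hu]
      _ ≤ Real.exp (Real.log (f t)) := Real.exp_le_exp.mpr hfin
      _ = f t := Real.exp_log (hpos t ht)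
end

section
/- Define f : (0,∞) → (0,∞) by f(t) = ((1/3)·t + (2/3)·t^{1/3})/((1/3) + (2/3)·t^{1/3}). Then (i) f(t) ≥ t^{1/3} for all t > 0, and (ii) for every r > 1 the ratio f(t^r)/f(t)^r tends to 2^{1−r} < 1 as t → 0⁺; in particular, for every r > 1 there exists t > 0 with f(t^r) < f(t)^r. -/
open Filter Real Topology Set


private noncomputable def gfun (t : ℝ) : ℝ :=
  (t ^ ((2:ℝ)/3) + 2) / (1 + 2 * t ^ ((1:ℝ)/3))

private lemma gfun_pos {t : ℝ} (ht : 0 < t) : 0 < gfun t := by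
  have h1 : (0:ℝ) < t ^ ((2:ℝ)/3) + 2 := by positivity
  have h2 : (0:ℝ) < 1 + 2 * t ^ ((1:ℝ)/3) := by positivity
  exact div_pos h1 h2

private lemma gfun_tendsto : Tendsto gfun (𝓝 0) (𝓝 2) := by
  have h13 : ContinuousAt (fun t : ℝ => t ^ ((1:ℝ)/3)) 0 :=
    Real.continuousAt_rpow_const 0 _ (Or.inr (by norm_num))
  have h23 : ContinuousAt (fun t : ℝ => t ^ ((2:ℝ)/3)) 0 :=
    Real.continuousAt_rpow_const 0 _ (Or.inr (by norm_num))
  have hc : ContinuousAt gfun 0 := by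
    apply ContinuousAt.div (h23.add continuousAt_const)
      (continuousAt_const.add (continuousAt_const.mul h13))
    simp [Real.zero_rpow (by norm_num : ((1:ℝ)/3) ≠ 0)]
  have hg0 : gfun 0 = 2 := by
    simp [gfun, Real.zero_rpow (by norm_num : ((1:ℝ)/3) ≠ 0),
      Real.zero_rpow (by norm_num : ((2:ℝ)/3) ≠ 0)]
  simpa [hg0] using hc.tendsto




/-- The function `f(t) = ((1/3)t + (2/3)t^{1/3})/((1/3) + (2/3)t^{1/3})` satisfies
`f(t) ≥ t^{1/3}` for all `t > 0` (so `f ∈ PMI_∞`), while for every `r > 1` the ratio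
`f(t^r)/f(t)^r` tends to `2^{1-r} < 1` as `t → 0⁺`; in particular `f ∉ PMI_r` for
every `r > 1`. -/
theorem pmi_infty_not_pmi_r (f : ℝ → ℝ)
    (hf : ∀ t : ℝ, 0 < t →
      f t = ((1 / 3) * t + (2 / 3) * t ^ ((1 : ℝ) / 3)) /
        ((1 / 3) + (2 / 3) * t ^ ((1 : ℝ) / 3))) :
    (∀ t : ℝ, 0 < t → t ^ ((1 : ℝ) / 3) ≤ f t) ∧
    (∀ r : ℝ, 1 < r →
      Filter.Tendsto (fun t : ℝ => f (t ^ r) / f t ^ r)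
        (nhdsWithin 0 (Set.Ioi (0 : ℝ))) (nhds ((2 : ℝ) ^ (1 - r))) ∧
      (2 : ℝ) ^ (1 - r) < 1 ∧
      ∃ t : ℝ, 0 < t ∧ f (t ^ r) < f t ^ r) := by
  -- basic facts about s = t^{1/3}
  have key : ∀ t : ℝ, 0 < t → f t = t ^ ((1:ℝ)/3) * gfun t := by
    intro t ht
    have hs : (0:ℝ) < t ^ ((1:ℝ)/3) := Real.rpow_pos_of_pos ht _
    have hs3 : (t ^ ((1:ℝ)/3)) ^ (3:ℕ) = t := by
      rw [← Real.rpow_natCast (t ^ ((1:ℝ)/3)) 3, ← Real.rpow_mul ht.le]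
      norm_num
    have hs2 : (t ^ ((1:ℝ)/3)) ^ (2:ℕ) = t ^ ((2:ℝ)/3) := by
      rw [← Real.rpow_natCast (t ^ ((1:ℝ)/3)) 2, ← Real.rpow_mul ht.le]
      norm_num
    rw [hf t ht, gfun, ← hs2]
    set s := t ^ ((1:ℝ)/3) with hsdef
    have hd1 : ((1:ℝ)/3 + 2/3 * s) ≠ 0 := by positivity
    have hd2 : (1 + 2 * s) ≠ 0 := by positivity
    rw [← hs3]
    field_simp
  have part1 : ∀ t : ℝ, 0 < t → t ^ ((1:ℝ)/3) ≤ f t := by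
    intro t ht
    rw [key t ht]
    have hs : (0:ℝ) < t ^ ((1:ℝ)/3) := Real.rpow_pos_of_pos ht _
    have hs2 : (t ^ ((1:ℝ)/3)) ^ (2:ℕ) = t ^ ((2:ℝ)/3) := by
      rw [← Real.rpow_natCast (t ^ ((1:ℝ)/3)) 2, ← Real.rpow_mul ht.le]
      norm_num
    rw [gfun, ← hs2]
    set s := t ^ ((1:ℝ)/3) with hsdef
    rw [mul_div_assoc', le_div_iff₀ (by positivity)]
    nlinarith [mul_nonneg hs.le (sq_nonneg (s - 1)), sq_nonneg (s-1)]
  refine ⟨part1, fun r hr => ?_⟩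
  have hr0 : (0:ℝ) < r := lt_trans one_pos hr
  -- the ratio equals gfun (t^r) / gfun t ^ r for t > 0
  have ratio_eq : ∀ t : ℝ, 0 < t →
      f (t ^ r) / f t ^ r = gfun (t ^ r) / gfun t ^ r := by
    intro t ht
    have htr : 0 < t ^ r := Real.rpow_pos_of_pos ht r
    rw [key t ht, key _ htr]
    have hs : (0:ℝ) ≤ t ^ ((1:ℝ)/3) := (Real.rpow_pos_of_pos ht _).le
    rw [Real.mul_rpow hs (gfun_pos ht).le]
    have h1 : (t ^ r) ^ ((1:ℝ)/3) = (t ^ ((1:ℝ)/3)) ^ r := by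
      rw [← Real.rpow_mul ht.le, ← Real.rpow_mul ht.le, mul_comm]
    rw [h1]
    exact mul_div_mul_left _ _ (ne_of_gt (Real.rpow_pos_of_pos (Real.rpow_pos_of_pos ht _) r))
  -- limits
  have htr0 : Tendsto (fun t : ℝ => t ^ r) (𝓝[>] 0) (𝓝 0) := by
    have := (Real.continuousAt_rpow_const 0 r (Or.inr hr0.le)).tendsto
    rw [Real.zero_rpow hr0.ne'] at this
    exact this.mono_left nhdsWithin_le_nhds
  have h1 : Tendsto (fun t : ℝ => gfun (t ^ r)) (𝓝[>] 0) (𝓝 2) :=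
    gfun_tendsto.comp htr0
  have h2 : Tendsto (fun t : ℝ => gfun t ^ r) (𝓝[>] 0) (𝓝 ((2:ℝ) ^ r)) :=
    ((Real.continuousAt_rpow_const 2 r (Or.inl two_ne_zero)).tendsto).comp
      (gfun_tendsto.mono_left nhdsWithin_le_nhds)
  have h2r : (0:ℝ) < (2:ℝ) ^ r := Real.rpow_pos_of_pos two_pos r
  have hT : Tendsto (fun t : ℝ => f (t ^ r) / f t ^ r) (𝓝[>] 0)
      (𝓝 ((2:ℝ) ^ (1 - r))) := by
    have hlim : Tendsto (fun t : ℝ => gfun (t ^ r) / gfun t ^ r) (𝓝[>] 0)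
        (𝓝 (2 / (2:ℝ) ^ r)) := h1.div h2 h2r.ne'
    have : (2:ℝ) ^ (1 - r) = 2 / (2:ℝ) ^ r := by
      rw [Real.rpow_sub two_pos, Real.rpow_one]
    rw [this]
    refine hlim.congr' ?_
    filter_upwards [self_mem_nhdsWithin] with t ht
    exact (ratio_eq t ht).symm
  have hlt : (2:ℝ) ^ (1 - r) < 1 :=
    Real.rpow_lt_one_of_one_lt_of_neg one_lt_two (by linarith)
  refine ⟨hT, hlt, ?_⟩
  have hev : ∀ᶠ t in 𝓝[>] (0:ℝ), f (t ^ r) / f t ^ r < 1 :=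
    hT.eventually (Iio_mem_nhds hlt)
  obtain ⟨t, hlt1, ht⟩ := (hev.and self_mem_nhdsWithin).exists
  refine ⟨t, ht, ?_⟩
  have hft : 0 < f t := lt_of_lt_of_le (Real.rpow_pos_of_pos ht _) (part1 t ht)
  have : 0 < f t ^ r := Real.rpow_pos_of_pos hft r
  exact (div_lt_one this).mp hlt1
end
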